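/- arXiv:1312.0531 — 12 statements merged into one kernel-verified Lean document; each statement's English description precedes it below -/
import Mathlib

section
/- Let n ≥ 2 be even and let σ* be the uniform probability distribution on U. Then for every Ŷ ∈ ℝⁿ, Σ_{u ∈ U} σ*(u) · ((2/n) Σ_{i=1}^n u_i Ŷ_i)² = (4/(n(n−1))) Σ_{i=1}^n (Ŷ_i − μ)², where μ = (1/n) Σ_{i=1}^n Ŷ_i. (This is the conditional variance of the mean-difference estimator under complete randomization.) -/
open scoped Classical BigOperators

/-- The ±1 sign associated to a boolean assignment: `true ↦ 1`, `false ↦ -1`. -/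
noncomputable def sgn {n : ℕ} (u : Fin n → Bool) (i : Fin n) : ℝ :=
  if u i then 1 else -1

/-- The set `U` of balanced ±1 assignment vectors: `u ∈ {−1,1}ⁿ` with `∑ i, u i = 0`. -/
noncomputable def balancedAssignments (n : ℕ) : Finset (Fin n → Bool) :=
  Finset.univ.filter (fun u => ∑ i, sgn u i = 0)

lemma mem_balanced {n : ℕ} {u : Fin n → Bool} :
    u ∈ balancedAssignments n ↔ ∑ i, sgn u i = 0 := by
  simp [balancedAssignments]

lemma sgn_mul_self {n : ℕ} (u : Fin n → Bool) (i : Fin n) : sgn u i * sgn u i = 1 := by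
  unfold sgn; rcases h : u i <;> simp

lemma sgn_comp {n : ℕ} (u : Fin n → Bool) (π : Equiv.Perm (Fin n)) (i : Fin n) :
    sgn (u ∘ π) i = sgn u (π i) := rfl

lemma comp_mem {n : ℕ} {u : Fin n → Bool} (hu : u ∈ balancedAssignments n)
    (π : Equiv.Perm (Fin n)) : (u ∘ π) ∈ balancedAssignments n := by
  rw [mem_balanced] at hu ⊢
  rw [show (∑ i, sgn (u ∘ π) i) = ∑ i, sgn u (π i) from rfl]
  rw [Equiv.sum_comp π (sgn u)]
  exact hu

lemma perm_sum (n : ℕ) (π : Equiv.Perm (Fin n)) (i j : Fin n) :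
    ∑ u ∈ balancedAssignments n, sgn u (π i) * sgn u (π j)
      = ∑ u ∈ balancedAssignments n, sgn u i * sgn u j := by
  refine Finset.sum_nbij' (fun u => u ∘ π) (fun v => v ∘ π.symm)
    (fun u hu => comp_mem hu π) (fun v hv => comp_mem hv π.symm) ?_ ?_ ?_
  · intro u hu; funext x; simp
  · intro v hv; funext x; simp
  · intro u hu; rw [sgn_comp, sgn_comp]

lemma offdiag_const (n : ℕ) (hn : 2 ≤ n) (i j : Fin n) (hij : i ≠ j) :
    ∑ u ∈ balancedAssignments n, sgn u i * sgn u j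
      = ∑ u ∈ balancedAssignments n,
          sgn u ⟨0, by omega⟩ * sgn u ⟨1, by omega⟩ := by
  set a : Fin n := ⟨0, by omega⟩
  set b : Fin n := ⟨1, by omega⟩
  have hab : a ≠ b := by simp [a, b, Fin.ext_iff]
  set π₁ : Equiv.Perm (Fin n) := Equiv.swap a i
  set π₂ : Equiv.Perm (Fin n) := Equiv.swap b (π₁.symm j)
  set π : Equiv.Perm (Fin n) := π₁ * π₂
  have hja : π₁.symm j ≠ a := by
    intro h
    have : j = π₁ a := by rw [← h]; simp
    rw [Equiv.swap_apply_left] at this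
    exact hij this.symm
  have hπa : π a = i := by
    show π₁ (π₂ a) = i
    have : π₂ a = a := Equiv.swap_apply_of_ne_of_ne hab (Ne.symm hja)
    rw [this]; exact Equiv.swap_apply_left a i
  have hπb : π b = j := by
    show π₁ (π₂ b) = j
    rw [show π₂ b = π₁.symm j from Equiv.swap_apply_left _ _]
    simp
  calc ∑ u ∈ balancedAssignments n, sgn u i * sgn u j
      = ∑ u ∈ balancedAssignments n, sgn u (π a) * sgn u (π b) := by rw [hπa, hπb]
    _ = ∑ u ∈ balancedAssignments n, sgn u a * sgn u b := perm_sum n π a b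

lemma diag_sum (n : ℕ) (i : Fin n) :
    ∑ u ∈ balancedAssignments n, sgn u i * sgn u i
      = ((balancedAssignments n).card : ℝ) := by
  rw [Finset.sum_congr rfl (fun u _ => sgn_mul_self u i)]
  simp

lemma card_filter_lt (n : ℕ) (b : Fin n) :
    (Finset.univ.filter (fun i : Fin n => i < b)).card = (b : ℕ) := by
  have : Finset.univ.filter (fun i : Fin n => i < b) = Finset.Iio b := by
    ext x; simp
  rw [this, Fin.card_Iio]

lemma balanced_nonempty (n : ℕ) (hn : 2 ≤ n) (hne : Even n) :
    (balancedAssignments n).Nonempty := by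
  have hb : n / 2 < n := by omega
  set b : Fin n := ⟨n / 2, hb⟩
  refine ⟨fun i => decide (i < b), ?_⟩
  rw [mem_balanced]
  have h1 : ∀ i : Fin n, sgn (fun i => decide (i < b)) i
      = 2 * (if i < b then (1:ℝ) else 0) - 1 := by
    intro i; unfold sgn; by_cases h : i < b <;> simp [h] <;> norm_num
  rw [Finset.sum_congr rfl (fun i _ => h1 i)]
  rw [Finset.sum_sub_distrib, ← Finset.mul_sum, Finset.sum_boole]
  simp only [Finset.sum_const, smul_eq_mul, mul_one, Finset.sum_const, card_filter_lt]
  have h2 : ((b : ℕ) : ℝ) = (n : ℝ) / 2 := by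
    have : (n / 2) * 2 = n := Nat.div_mul_cancel hne.two_dvd
    have : ((n / 2 : ℕ) : ℝ) * 2 = (n : ℝ) := by exact_mod_cast congrArg Nat.cast this
    simp only [b]
    linarith
  simp only [Finset.card_univ, Fintype.card_fin, h2]
  ring

/-- Under complete randomization (the uniform distribution on `U`), the conditional
variance of the mean-difference estimator equals `4/(n(n−1)) ∑ (Ŷᵢ − μ)²`. -/
theorem stmt0 (n : ℕ) (hn : 2 ≤ n) (hne : Even n) (Y : Fin n → ℝ) :
    ∑ u ∈ balancedAssignments n,
        ((balancedAssignments n).card : ℝ)⁻¹ *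
          ((2 / (n : ℝ)) * ∑ i, sgn u i * Y i) ^ 2
      = (4 / ((n : ℝ) * ((n : ℝ) - 1))) *
          ∑ i, (Y i - (1 / (n : ℝ)) * ∑ j, Y j) ^ 2 := by
  classical
  set U := balancedAssignments n with hU
  set a : ℝ := ((U.card : ℕ) : ℝ) with ha
  have hne0 : U.Nonempty := balanced_nonempty n hn hne
  have ha0 : a ≠ 0 := by
    simp only [ha]
    exact_mod_cast Finset.card_ne_zero_of_mem hne0.choose_spec
  have hn0 : (n : ℝ) ≠ 0 := by positivity
  have hn1 : (n : ℝ) - 1 ≠ 0 := by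
    have : (2 : ℝ) ≤ n := by exact_mod_cast hn
    linarith
  -- the off-diagonal constant
  set c : ℝ := ∑ u ∈ U, sgn u ⟨0, by omega⟩ * sgn u ⟨1, by omega⟩ with hc
  have hoff : ∀ i j : Fin n, i ≠ j → ∑ u ∈ U, sgn u i * sgn u j = c :=
    fun i j hij => offdiag_const n hn i j hij
  -- row sum is zero
  have hrow : ∀ i : Fin n, ∑ j, ∑ u ∈ U, sgn u i * sgn u j = 0 := by
    intro i
    rw [Finset.sum_comm]
    refine Finset.sum_eq_zero fun u hu => ?_
    rw [← Finset.mul_sum, mem_balanced.mp hu, mul_zero]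
  -- determine c : a + (n-1) * c = 0
  have hkey : a + ((n : ℝ) - 1) * c = 0 := by
    set i0 : Fin n := ⟨0, by omega⟩
    have := hrow i0
    rw [← Finset.add_sum_erase _ _ (Finset.mem_univ i0)] at this
    rw [diag_sum n i0] at this
    have herase : ∑ j ∈ Finset.univ.erase i0, ∑ u ∈ U, sgn u i0 * sgn u j
        = ((n : ℝ) - 1) * c := by
      rw [Finset.sum_congr rfl (fun j hj => hoff i0 j (Ne.symm (Finset.mem_erase.mp hj).1))]
      rw [Finset.sum_const, Finset.card_erase_of_mem (Finset.mem_univ i0)]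
      simp only [Finset.card_univ, Fintype.card_fin, nsmul_eq_mul]
      have : ((n - 1 : ℕ) : ℝ) = (n : ℝ) - 1 := by
        have : 1 ≤ n := by omega
        push_cast [this]; ring
      rw [this]
    rw [herase] at this
    exact this
  set P : ℝ := ∑ i, Y i with hP
  set Q : ℝ := ∑ i, Y i * Y i with hQ
  -- the main sum S
  have hS : ∑ u ∈ U, (∑ i, sgn u i * Y i) ^ 2 = a * Q + c * (P * P - Q) := by
    have expand : ∀ u : Fin n → Bool,
        (∑ i, sgn u i * Y i) ^ 2 = ∑ i, ∑ j, Y i * Y j * (sgn u i * sgn u j) := by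
      intro u
      rw [sq, Finset.sum_mul_sum]
      exact Finset.sum_congr rfl fun i _ => Finset.sum_congr rfl fun j _ => by ring
    rw [Finset.sum_congr rfl fun u _ => expand u]
    rw [Finset.sum_comm]
    have swap2 : ∀ i : Fin n, ∑ u ∈ U, ∑ j, Y i * Y j * (sgn u i * sgn u j)
        = ∑ j, Y i * Y j * ∑ u ∈ U, sgn u i * sgn u j := by
      intro i
      rw [Finset.sum_comm]
      exact Finset.sum_congr rfl fun j _ => by rw [Finset.mul_sum]
    rw [Finset.sum_congr rfl fun i _ => swap2 i]
    have inner : ∀ i : Fin n, ∑ j, Y i * Y j * ∑ u ∈ U, sgn u i * sgn u j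
        = Y i * Y i * a + c * (Y i * (P - Y i)) := by
      intro i
      rw [← Finset.add_sum_erase _ _ (Finset.mem_univ i), diag_sum n i]
      congr 1
      rw [Finset.sum_congr rfl
        (fun j hj => by rw [hoff i j (Ne.symm (Finset.mem_erase.mp hj).1)])]
      rw [show ∑ j ∈ Finset.univ.erase i, Y i * Y j * c
          = c * (Y i * ∑ j ∈ Finset.univ.erase i, Y j) by
        rw [Finset.mul_sum, Finset.mul_sum]; exact Finset.sum_congr rfl fun j _ => by ring]
      rw [Finset.sum_erase_eq_sub (Finset.mem_univ i)]
    rw [Finset.sum_congr rfl fun i _ => inner i]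
    rw [Finset.sum_add_distrib, ← Finset.sum_mul, ← Finset.mul_sum]
    have hfin : ∑ i, Y i * (P - Y i) = P * P - Q := by
      rw [Finset.sum_congr rfl (fun i _ => show Y i * (P - Y i) = Y i * P - Y i * Y i by ring)]
      rw [Finset.sum_sub_distrib, ← Finset.sum_mul]
    rw [hfin]; ring
  -- RHS sum
  have hR : ∑ i, (Y i - (1 / (n : ℝ)) * P) ^ 2 = Q - P * P / n := by
    have expand : ∀ i : Fin n, (Y i - (1 / (n : ℝ)) * P) ^ 2
        = Y i * Y i - (2 / n) * P * Y i + P * P / (n^2) := by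
      intro i; field_simp; ring
    rw [Finset.sum_congr rfl fun i _ => expand i]
    rw [Finset.sum_add_distrib, Finset.sum_sub_distrib, ← Finset.mul_sum]
    simp only [Finset.sum_const, Finset.card_univ, Fintype.card_fin, nsmul_eq_mul, ← hP, ← hQ]
    field_simp
    ring
  -- put it together
  rw [← Finset.mul_sum,
    show (∑ u ∈ U, ((2 / (n : ℝ)) * ∑ i, sgn u i * Y i) ^ 2)
      = (2 / (n:ℝ))^2 * ∑ u ∈ U, (∑ i, sgn u i * Y i) ^ 2 by
        rw [Finset.mul_sum]; exact Finset.sum_congr rfl fun u _ => by ring,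
    hS, hR]
  have hcval : c = -a / ((n : ℝ) - 1) := by
    field_simp
    linarith [hkey]
  rw [hcval]
  field_simp
  ring
end

section
/- Let n ≥ 2 be even and let N be a seminorm on ℝⁿ that is invariant under permutations of coordinates, i.e. N(y ∘ π) = N(y) for every permutation π of {1,…,n}. For a probability distribution σ on U define V(σ) = ⨆_{y ∈ ℝⁿ, N(y) ≤ 1} Σ_{u ∈ U} σ(u) (Σ_{i=1}^n u_i y_i)², a value in [0,∞]. Then the uniform distribution σ* on U satisfies V(σ*) ≤ V(σ) for every probability distribution σ on U. (No free lunch: complete randomization minimizes the worst-case variance over outcome vectors of bounded permutation-invariant seminorm.) -/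
open scoped Classical BigOperators
open Finset

lemma sum_sgn_eq {n : ℕ} (u : Fin n → Bool) :
    ∑ i, sgn u i = 2 * ((univ.filter (fun i => u i = true)).card : ℝ) - n := by
  classical
  rw [← Finset.sum_filter_add_sum_filter_not univ (fun i => u i = true) (sgn u)]
  have h1 : ∑ i ∈ univ.filter (fun i => u i = true), sgn u i
      = ((univ.filter (fun i => u i = true)).card : ℝ) := by
    rw [Finset.sum_congr rfl (fun i hi => show sgn u i = 1 by
      simp [sgn, (Finset.mem_filter.mp hi).2])]
    simp
  have h2 : ∑ i ∈ univ.filter (fun i => ¬ u i = true), sgn u i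
      = -(((univ.filter (fun i => ¬ u i = true)).card : ℝ)) := by
    rw [Finset.sum_congr rfl (fun i hi => show sgn u i = -1 by
      simp [sgn, (Finset.mem_filter.mp hi).2])]
    simp
  have hcard : (univ.filter (fun i => u i = true)).card
      + (univ.filter (fun i => ¬ u i = true)).card = n := by
    rw [Finset.card_filter_add_card_filter_not]; simp
  rw [h1, h2]
  have := congrArg (Nat.cast : ℕ → ℝ) hcard
  push_cast at this ⊢
  linarith

lemma mem_balanced_iff {n : ℕ} (u : Fin n → Bool) :
    u ∈ balancedAssignments n ↔ 2 * (univ.filter (fun i => u i = true)).card = n := by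
  simp only [balancedAssignments, mem_filter, mem_univ, true_and, sum_sgn_eq, sub_eq_zero]
  constructor
  · intro h; exact_mod_cast h
  · intro h; exact_mod_cast congrArg (Nat.cast : ℕ → ℝ) h

lemma exists_perm_comp {n : ℕ} {u u' : Fin n → Bool}
    (hu : u ∈ balancedAssignments n) (hu' : u' ∈ balancedAssignments n) :
    ∃ τ : Equiv.Perm (Fin n), ∀ i, u' (τ i) = u i := by
  classical
  have h1 := (mem_balanced_iff u).mp hu
  have h2 := (mem_balanced_iff u').mp hu'
  have hc : Fintype.card {i // u i = true} = Fintype.card {i // u' i = true} := by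
    rw [Fintype.card_subtype, Fintype.card_subtype]; omega
  have hc' : Fintype.card {i // ¬ u i = true} = Fintype.card {i // ¬ u' i = true} := by
    rw [Fintype.card_subtype_compl, Fintype.card_subtype_compl, hc]
  refine ⟨Equiv.subtypeCongr (Fintype.equivOfCardEq hc) (Fintype.equivOfCardEq hc'), fun i => ?_⟩
  by_cases h : u i = true
  · have : (Equiv.subtypeCongr (Fintype.equivOfCardEq hc) (Fintype.equivOfCardEq hc')) i
        = ((Fintype.equivOfCardEq hc) ⟨i, h⟩ : Fin n) := by
      simp [Equiv.subtypeCongr, h]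
    rw [this, ((Fintype.equivOfCardEq hc) ⟨i, h⟩).2, h]
  · have : (Equiv.subtypeCongr (Fintype.equivOfCardEq hc) (Fintype.equivOfCardEq hc')) i
        = ((Fintype.equivOfCardEq hc') ⟨i, h⟩ : Fin n) := by
      simp [Equiv.subtypeCongr, h]
    rw [this]
    have h3 := ((Fintype.equivOfCardEq hc') ⟨i, h⟩).2
    simp only [Bool.not_eq_true] at h3 ⊢
    rw [h3]
    simpa using h

lemma comp_mem_balanced {n : ℕ} (u : Fin n → Bool) (π : Equiv.Perm (Fin n))
    (hu : u ∈ balancedAssignments n) : u ∘ π ∈ balancedAssignments n := by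
  simp only [balancedAssignments, mem_filter, mem_univ, true_and] at hu ⊢
  rw [show ∑ i, sgn (u ∘ π) i = ∑ i, sgn u (π i) from rfl, Equiv.sum_comp π (sgn u)]
  exact hu

lemma balanced_nonempty_s1 {n : ℕ} (hne : Even n) : ∃ u, u ∈ balancedAssignments n := by
  classical
  obtain ⟨m, hm⟩ := hne
  refine ⟨fun i => decide (i.1 < m), (mem_balanced_iff _).mpr ?_⟩
  have hmn : m ≤ n := by omega
  have : (univ.filter (fun i : Fin n => (decide (i.1 < m) : Bool) = true)).card = m := by
    rw [show (univ.filter (fun i : Fin n => (decide (i.1 < m) : Bool) = true)).card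
        = Fintype.card (Fin m) from ?_]
    · exact Fintype.card_fin m
    rw [← Finset.card_univ]
    refine Finset.card_bij' (fun a ha => ⟨a.1, by
      have := (Finset.mem_filter.mp ha).2; simpa using this⟩)
      (fun b _ => ⟨b.1, by omega⟩) ?_ ?_ ?_ ?_
    · intro a ha; exact Finset.mem_univ _
    · intro b hb
      simp only [Finset.mem_filter, Finset.mem_univ, true_and, decide_eq_true_eq]
      exact b.2
    · intro a ha; rfl
    · intro b hb; rfl
  omega


/-- The worst-case variance `V(σ) = ⨆_{N(y) ≤ 1} ∑_{u ∈ U} σ(u) (∑ uᵢ yᵢ)²` of a design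
`σ` on `U`, over outcome vectors of permutation-invariant seminorm at most one, as a
value in `[0, ∞]`. -/
noncomputable def worstCaseVar (n : ℕ) (N : Seminorm ℝ (Fin n → ℝ))
    (σ : (Fin n → Bool) → ℝ) : ENNReal :=
  ⨆ (y : Fin n → ℝ) (_ : N y ≤ 1),
    ENNReal.ofReal (∑ u ∈ balancedAssignments n, σ u * (∑ i, sgn u i * y i) ^ 2)

/-- No free lunch: complete randomization (the uniform distribution on `U`) minimizes
the worst-case variance over outcome vectors of bounded permutation-invariant
seminorm, among all probability distributions on `U`. -/
theorem stmt1 (n : ℕ) (hn : 2 ≤ n) (hne : Even n)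
    (N : Seminorm ℝ (Fin n → ℝ))
    (hNperm : ∀ (π : Equiv.Perm (Fin n)) (y : Fin n → ℝ), N (fun i => y (π i)) = N y)
    (σ : (Fin n → Bool) → ℝ)
    (hσ0 : ∀ u ∈ balancedAssignments n, 0 ≤ σ u)
    (hσ1 : ∑ u ∈ balancedAssignments n, σ u = 1) :
    worstCaseVar n N (fun _ => ((balancedAssignments n).card : ℝ)⁻¹)
      ≤ worstCaseVar n N σ := by
  classical
  obtain ⟨u₀, hu₀⟩ := balanced_nonempty_s1 hne
  set U := balancedAssignments n with hUdef
  have hUcard : (0 : ℝ) < (U.card : ℝ) := by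
    exact_mod_cast Finset.card_pos.mpr ⟨u₀, hu₀⟩
  refine iSup₂_le fun y hy => ?_
  set g : (Fin n → Bool) → ℝ := fun v => (∑ i, sgn v i * y i) ^ 2 with hgdef
  set S : ℝ := ∑ v ∈ U, g v with hSdef
  set T : ℝ := ∑ π : Equiv.Perm (Fin n), g (u₀ ∘ π) with hTdef
  -- T is the same with any u ∈ U in place of u₀
  have hT : ∀ u ∈ U, ∑ π : Equiv.Perm (Fin n), g (u ∘ π) = T := by
    intro u hu
    obtain ⟨τ, hτ⟩ := exists_perm_comp hu hu₀
    rw [hTdef]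
    refine Fintype.sum_equiv (Equiv.mulLeft τ) _ _ fun π => ?_
    congr 1
    funext j
    simp only [Function.comp_apply, Equiv.coe_mulLeft, Equiv.Perm.mul_apply]
    rw [hτ (π j)]
  -- sum over u in U of T equals card(Perm) * S
  have hPS : (U.card : ℝ) * T = (Fintype.card (Equiv.Perm (Fin n)) : ℝ) * S := by
    have h1 : ∑ u ∈ U, ∑ π : Equiv.Perm (Fin n), g (u ∘ π) = (U.card : ℝ) * T := by
      rw [Finset.sum_congr rfl hT, Finset.sum_const, nsmul_eq_mul]
    have h2 : ∑ u ∈ U, ∑ π : Equiv.Perm (Fin n), g (u ∘ π)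
        = (Fintype.card (Equiv.Perm (Fin n)) : ℝ) * S := by
      rw [Finset.sum_comm]
      have hinner : ∀ π : Equiv.Perm (Fin n), ∑ u ∈ U, g (u ∘ π) = S := by
        intro π
        refine Finset.sum_bij' (fun u _ => u ∘ π) (fun v _ => v ∘ ⇑π⁻¹) ?_ ?_ ?_ ?_ ?_
        · intro u hu; exact comp_mem_balanced u π hu
        · intro v hv; exact comp_mem_balanced v π⁻¹ hv
        · intro u hu; funext j; simp
        · intro v hv; funext j; simp
        · intro u hu; rfl
      rw [Finset.sum_congr rfl (fun π _ => hinner π), Finset.sum_const, nsmul_eq_mul,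
        Finset.card_univ]
    rw [← h1, h2]
  -- averaging identity
  have havg : ∑ π : Equiv.Perm (Fin n),
      (∑ u ∈ U, σ u * (∑ i, sgn u i * y (π i)) ^ 2) = T := by
    have hrw : ∀ (π : Equiv.Perm (Fin n)) (u : Fin n → Bool),
        (∑ i, sgn u i * y (π i)) ^ 2 = g (u ∘ ⇑π⁻¹) := by
      intro π u
      rw [hgdef]
      congr 1
      refine Fintype.sum_equiv π _ _ fun j => ?_
      simp [sgn]
    calc ∑ π : Equiv.Perm (Fin n), (∑ u ∈ U, σ u * (∑ i, sgn u i * y (π i)) ^ 2)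
        = ∑ u ∈ U, σ u * ∑ π : Equiv.Perm (Fin n), g (u ∘ ⇑π⁻¹) := by
          rw [Finset.sum_comm]
          refine Finset.sum_congr rfl fun u _ => ?_
          rw [Finset.mul_sum]
          exact Finset.sum_congr rfl fun π _ => by rw [hrw]
      _ = ∑ u ∈ U, σ u * ∑ π : Equiv.Perm (Fin n), g (u ∘ ⇑π) := by
          refine Finset.sum_congr rfl fun u _ => ?_
          congr 1
          exact Fintype.sum_equiv (Equiv.inv (Equiv.Perm (Fin n))) _ _ fun π => rfl
      _ = ∑ u ∈ U, σ u * T := Finset.sum_congr rfl fun u hu => by rw [hT u hu]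
      _ = T := by rw [← Finset.sum_mul, hσ1, one_mul]
  -- existence of a good permutation
  obtain ⟨π, -, hπ⟩ : ∃ π ∈ (Finset.univ : Finset (Equiv.Perm (Fin n))),
      (U.card : ℝ)⁻¹ * S ≤ ∑ u ∈ U, σ u * (∑ i, sgn u i * y (π i)) ^ 2 := by
    refine Finset.exists_le_of_sum_le Finset.univ_nonempty ?_
    rw [havg, Finset.sum_const, nsmul_eq_mul, Finset.card_univ]
    have : (Fintype.card (Equiv.Perm (Fin n)) : ℝ) * ((U.card : ℝ)⁻¹ * S)
        = (U.card : ℝ)⁻¹ * ((Fintype.card (Equiv.Perm (Fin n)) : ℝ) * S) := by ring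
    rw [this, ← hPS, ← mul_assoc, inv_mul_cancel₀ hUcard.ne', one_mul]
  -- conclude
  have hval : (∑ u ∈ U, ((U.card : ℝ))⁻¹ * (∑ i, sgn u i * y i) ^ 2)
      = (U.card : ℝ)⁻¹ * S := by
    rw [hSdef, Finset.mul_sum]
  calc ENNReal.ofReal (∑ u ∈ U, ((U.card : ℝ))⁻¹ * (∑ i, sgn u i * y i) ^ 2)
      ≤ ENNReal.ofReal (∑ u ∈ U, σ u * (∑ i, sgn u i * y (π i)) ^ 2) := by
        refine ENNReal.ofReal_le_ofReal ?_
        rw [hval]; exact hπ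
    _ ≤ worstCaseVar n N σ := by
        refine le_iSup₂_of_le (fun i => y (π i)) ?_ le_rfl
        rw [hNperm π y]; exact hy
end

section
/- Let m ≥ 2, p ≥ 1, n = mp, and let σ be a treatment-symmetric design on even assignments. Define P ∈ ℝ^{n×n} by P_{ij} = σ({W : W_i = W_j}) − σ({W : W_i ≠ W_j})/(m−1). Then for every v ∈ ℝⁿ and every pair of treatments k ≠ k', Σ_W σ(W) · B_{kk'}(W, v)² = (2/(pn)) Σ_{i,j=1}^n P_{ij} v_i v_j; in particular the left-hand side does not depend on the choice of the pair k ≠ k'. -/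
open scoped BigOperators

/-- The sufficient statistics of a treatment-symmetric design: for every `v ∈ ℝⁿ` and every
pair of distinct treatments `k ≠ k'`, the mixed imbalance `∑_W σ(W) B_{kk'}(W,v)²` equals
`(2/(pn)) ∑_{i,j} P_{ij} vᵢ vⱼ` with `P_{ij} = σ(Wᵢ = Wⱼ) − σ(Wᵢ ≠ Wⱼ)/(m−1)`;
in particular it does not depend on the pair `k ≠ k'`. -/
theorem stmt3 (m p n : ℕ) (hm : 2 ≤ m) (hp : 1 ≤ p) (hn : n = m * p)
    (σ : (Fin n → Fin m) → ℝ)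
    (hσ0 : ∀ W, 0 ≤ σ W)
    (hσ1 : ∑ W : Fin n → Fin m, σ W = 1)
    (hsupp : ∀ W : Fin n → Fin m, σ W ≠ 0 →
        ∀ k, (Finset.univ.filter fun i => W i = k).card = p)
    (hsym : ∀ (π : Equiv.Perm (Fin m)) (W : Fin n → Fin m), σ (fun i => π (W i)) = σ W)
    (P : Fin n → Fin n → ℝ)
    (hPdef : ∀ i j, P i j =
        (∑ W ∈ Finset.univ.filter (fun W : Fin n → Fin m => W i = W j), σ W)
        - (∑ W ∈ Finset.univ.filter (fun W : Fin n → Fin m => W i ≠ W j), σ W)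
            / ((m : ℝ) - 1))
    (v : Fin n → ℝ) (k k' : Fin m) (hkk' : k ≠ k') :
    ∑ W : Fin n → Fin m, σ W *
        ((1 / (p : ℝ)) * ∑ i, (((if W i = k then (1 : ℝ) else 0)
            - (if W i = k' then 1 else 0)) * v i)) ^ 2
      = (2 / ((p : ℝ) * (n : ℝ))) * ∑ i, ∑ j, P i j * v i * v j := by
  have hm2 : (2:ℝ) ≤ (m:ℝ) := by exact_mod_cast hm
  have hm0 : (m:ℝ) ≠ 0 := by linarith
  have hmm1 : (m:ℝ) - 1 ≠ 0 := by linarith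
  have hp1 : (1:ℝ) ≤ (p:ℝ) := by exact_mod_cast hp
  have hp0 : (p:ℝ) ≠ 0 := by linarith
  -- the key per-pair computation
  have key : ∀ i j : Fin n,
      (∑ W : Fin n → Fin m, σ W *
        (((if W i = k then (1:ℝ) else 0) - (if W i = k' then 1 else 0)) *
         ((if W j = k then (1:ℝ) else 0) - (if W j = k' then 1 else 0))))
      = (2 / (m:ℝ)) * P i j := by
    intro i j
    set Q : Fin m → Fin m → ℝ := fun a b =>
      ∑ W : Fin n → Fin m, σ W *
        ((if W i = a then (1:ℝ) else 0) * (if W j = b then 1 else 0)) with hQ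
    have hQperm : ∀ (π : Equiv.Perm (Fin m)) (a b : Fin m), Q (π a) (π b) = Q a b := by
      intro π a b
      have h := Equiv.sum_comp (Equiv.piCongrRight fun _ : Fin n => π)
        (fun W : Fin n → Fin m => σ W *
          ((if W i = π a then (1:ℝ) else 0) * (if W j = π b then 1 else 0)))
      show (∑ W : Fin n → Fin m, σ W *
          ((if W i = π a then (1:ℝ) else 0) * (if W j = π b then 1 else 0)))
        = ∑ W : Fin n → Fin m, σ W *
          ((if W i = a then (1:ℝ) else 0) * (if W j = b then 1 else 0))
      rw [← h]
      refine Finset.sum_congr rfl fun W _ => ?_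
      have hσW : σ ((Equiv.piCongrRight fun _ : Fin n => π) W) = σ W := by
        have h2 : ((Equiv.piCongrRight fun _ : Fin n => π) W) = fun t => π (W t) := by
          funext t; simp
        rw [h2, hsym]
      have hiW : ((Equiv.piCongrRight fun _ : Fin n => π) W) i = π (W i) := by simp
      have hjW : ((Equiv.piCongrRight fun _ : Fin n => π) W) j = π (W j) := by simp
      rw [hσW, hiW, hjW]
      simp [π.injective.eq_iff]
    have hQdiag : ∀ a : Fin m, Q a a = Q k k := by
      intro a
      have h := hQperm (Equiv.swap a k) k k
      rw [Equiv.swap_apply_right] at h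
      exact h
    have hQoff : ∀ a b : Fin m, a ≠ b → Q a b = Q k k' := by
      intro a b hab
      set π₁ := Equiv.swap a k with hπ₁
      have hb : π₁ b ≠ k := by
        intro h
        have h2 : π₁ b = π₁ a := by rw [h, hπ₁, Equiv.swap_apply_left]
        exact hab (π₁.injective h2).symm
      set π := π₁.trans (Equiv.swap (π₁ b) k') with hπ
      have hpa : π a = k := by
        rw [hπ]
        simp only [Equiv.trans_apply, hπ₁, Equiv.swap_apply_left]
        rw [← hπ₁, Equiv.swap_apply_of_ne_of_ne (Ne.symm hb) hkk']
      have hpb : π b = k' := by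
        rw [hπ]
        simp only [Equiv.trans_apply]
        rw [Equiv.swap_apply_left]
      have h := hQperm π a b
      rw [hpa, hpb] at h
      exact h.symm
    -- row sums
    have hrow : ∀ a : Fin m, (∑ b : Fin m, Q a b) = Q k k + ((m:ℝ) - 1) * Q k k' := by
      intro a
      rw [← Finset.sum_erase_add _ _ (Finset.mem_univ a)]
      have h1 : ∑ b ∈ Finset.univ.erase a, Q a b = ((m:ℝ) - 1) * Q k k' := by
        rw [Finset.sum_congr rfl fun b hb => hQoff a b (Ne.symm (Finset.ne_of_mem_erase hb))]
        rw [Finset.sum_const, nsmul_eq_mul]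
        congr 1
        rw [Finset.card_erase_of_mem (Finset.mem_univ a)]
        simp only [Finset.card_univ, Fintype.card_fin]
        have h1m : 1 ≤ m := by omega
        push_cast [Nat.cast_sub h1m]
        ring
      rw [h1, hQdiag a]
      ring
    -- total mass
    have htot : (m:ℝ) * (Q k k + ((m:ℝ) - 1) * Q k k') = 1 := by
      have hb2 : ∀ a : Fin m, ∑ b : Fin m, Q a b
          = ∑ W : Fin n → Fin m, σ W * (if W i = a then (1:ℝ) else 0) := by
        intro a
        show (∑ b : Fin m, ∑ W : Fin n → Fin m, σ W *
              ((if W i = a then (1:ℝ) else 0) * (if W j = b then 1 else 0))) = _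
        rw [Finset.sum_comm]
        refine Finset.sum_congr rfl fun W _ => ?_
        rw [← Finset.mul_sum, ← Finset.mul_sum]
        simp [Finset.sum_ite_eq]
      have h1 : ∑ a : Fin m, ∑ b : Fin m, Q a b
          = (m:ℝ) * (Q k k + ((m:ℝ) - 1) * Q k k') := by
        rw [Finset.sum_congr rfl fun a _ => hrow a, Finset.sum_const, nsmul_eq_mul]
        simp
      have h2 : ∑ a : Fin m, ∑ b : Fin m, Q a b = 1 := by
        rw [Finset.sum_congr rfl fun a _ => hb2 a, Finset.sum_comm]
        have hW1 : ∀ W : Fin n → Fin m,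
            ∑ a : Fin m, σ W * (if W i = a then (1:ℝ) else 0) = σ W := by
          intro W
          rw [← Finset.mul_sum]
          simp [Finset.sum_ite_eq]
        rw [Finset.sum_congr rfl fun W _ => hW1 W, hσ1]
      rw [← h1, h2]
    -- the filtered sums in terms of Q
    have hSeq : (∑ W ∈ Finset.univ.filter (fun W : Fin n → Fin m => W i = W j), σ W)
        = (m:ℝ) * Q k k := by
      rw [Finset.sum_filter]
      have hterm : ∀ W : Fin n → Fin m, (if W i = W j then σ W else 0)
          = ∑ a : Fin m, σ W *
              ((if W i = a then (1:ℝ) else 0) * (if W j = a then 1 else 0)) := by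
        intro W
        rw [← Finset.mul_sum]
        by_cases h : W i = W j
        · rw [if_pos h, h]
          have hsq : ∀ a : Fin m, (if W j = a then (1:ℝ) else 0) * (if W j = a then 1 else 0)
              = if W j = a then 1 else 0 := fun a => by by_cases h2 : W j = a <;> simp [h2]
          rw [Finset.sum_congr rfl fun a _ => hsq a]
          simp [Finset.sum_ite_eq]
        · rw [if_neg h]
          have hz : ∀ a : Fin m, (if W i = a then (1:ℝ) else 0) * (if W j = a then 1 else 0)
              = 0 := by
            intro a
            by_cases h1 : W i = a
            · have h2 : ¬ (W j = a) := fun h2 => h (h1.trans h2.symm)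
              simp [h1, h2]
            · simp [h1]
          simp [hz]
      rw [Finset.sum_congr rfl fun W _ => hterm W, Finset.sum_comm]
      rw [Finset.sum_congr rfl fun a _ => hQdiag a, Finset.sum_const, nsmul_eq_mul]
      simp
    have hSne : (∑ W ∈ Finset.univ.filter (fun W : Fin n → Fin m => W i ≠ W j), σ W)
        = 1 - (m:ℝ) * Q k k := by
      have hpart := Finset.sum_filter_add_sum_filter_not Finset.univ
        (fun W : Fin n → Fin m => W i = W j) σ
      rw [hσ1, hSeq] at hpart
      have heq : (Finset.univ.filter (fun W : Fin n → Fin m => W i ≠ W j))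
          = (Finset.univ.filter (fun W : Fin n → Fin m => ¬ W i = W j)) := rfl
      rw [heq]
      linarith
    -- expand the quadratic form into Q's
    have hexp : (∑ W : Fin n → Fin m, σ W *
        (((if W i = k then (1:ℝ) else 0) - (if W i = k' then 1 else 0)) *
         ((if W j = k then (1:ℝ) else 0) - (if W j = k' then 1 else 0))))
        = Q k k + Q k' k' - Q k k' - Q k' k := by
      show _ = (∑ W : Fin n → Fin m, σ W *
            ((if W i = k then (1:ℝ) else 0) * (if W j = k then 1 else 0)))
        + (∑ W : Fin n → Fin m, σ W *
            ((if W i = k' then (1:ℝ) else 0) * (if W j = k' then 1 else 0)))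
        - (∑ W : Fin n → Fin m, σ W *
            ((if W i = k then (1:ℝ) else 0) * (if W j = k' then 1 else 0)))
        - (∑ W : Fin n → Fin m, σ W *
            ((if W i = k' then (1:ℝ) else 0) * (if W j = k then 1 else 0)))
      rw [← Finset.sum_add_distrib, ← Finset.sum_sub_distrib, ← Finset.sum_sub_distrib]
      exact Finset.sum_congr rfl fun W _ => by ring
    rw [hexp, hQdiag k', hQoff k' k (Ne.symm hkk'), hPdef i j, hSeq, hSne]
    have h1mk : 1 - (m:ℝ) * Q k k = (m:ℝ) * ((m:ℝ) - 1) * Q k k' := by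
      linear_combination -htot
    rw [h1mk]
    field_simp
    ring
  -- now the main computation
  have hWexp : ∀ W : Fin n → Fin m,
      σ W * ((1 / (p : ℝ)) * ∑ i, (((if W i = k then (1 : ℝ) else 0)
          - (if W i = k' then 1 else 0)) * v i)) ^ 2
      = ∑ i, ∑ j, (1/(p:ℝ))^2 *
          (σ W * (((if W i = k then (1:ℝ) else 0) - (if W i = k' then 1 else 0)) *
            ((if W j = k then (1:ℝ) else 0) - (if W j = k' then 1 else 0)))) *
          (v i * v j) := by
    intro W
    have halg : ∀ (c s : ℝ), σ W * (c * s)^2 = c^2 * σ W * (s * s) := by intros; ring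
    rw [halg]
    rw [Finset.sum_mul_sum]
    rw [Finset.mul_sum]
    refine Finset.sum_congr rfl fun i' _ => ?_
    rw [Finset.mul_sum]
    refine Finset.sum_congr rfl fun j' _ => ?_
    ring
  calc ∑ W : Fin n → Fin m, σ W *
        ((1 / (p : ℝ)) * ∑ i, (((if W i = k then (1 : ℝ) else 0)
            - (if W i = k' then 1 else 0)) * v i)) ^ 2
      = ∑ W : Fin n → Fin m, ∑ i, ∑ j, (1/(p:ℝ))^2 *
          (σ W * (((if W i = k then (1:ℝ) else 0) - (if W i = k' then 1 else 0)) *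
            ((if W j = k then (1:ℝ) else 0) - (if W j = k' then 1 else 0)))) *
          (v i * v j) := Finset.sum_congr rfl fun W _ => hWexp W
    _ = ∑ i, ∑ W : Fin n → Fin m, ∑ j, (1/(p:ℝ))^2 *
          (σ W * (((if W i = k then (1:ℝ) else 0) - (if W i = k' then 1 else 0)) *
            ((if W j = k then (1:ℝ) else 0) - (if W j = k' then 1 else 0)))) *
          (v i * v j) := Finset.sum_comm
    _ = ∑ i, ∑ j, ∑ W : Fin n → Fin m, (1/(p:ℝ))^2 *
          (σ W * (((if W i = k then (1:ℝ) else 0) - (if W i = k' then 1 else 0)) *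
            ((if W j = k then (1:ℝ) else 0) - (if W j = k' then 1 else 0)))) *
          (v i * v j) := Finset.sum_congr rfl fun i _ => Finset.sum_comm
    _ = ∑ i, ∑ j, (1/(p:ℝ))^2 * (2/(m:ℝ)) * (P i j * v i * v j) := by
        refine Finset.sum_congr rfl fun i _ => Finset.sum_congr rfl fun j _ => ?_
        have hpull : ∑ W : Fin n → Fin m, (1/(p:ℝ))^2 *
            (σ W * (((if W i = k then (1:ℝ) else 0) - (if W i = k' then 1 else 0)) *
              ((if W j = k then (1:ℝ) else 0) - (if W j = k' then 1 else 0)))) *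
            (v i * v j)
          = (1/(p:ℝ))^2 * (v i * v j) *
            ∑ W : Fin n → Fin m, σ W *
              (((if W i = k then (1:ℝ) else 0) - (if W i = k' then 1 else 0)) *
               ((if W j = k then (1:ℝ) else 0) - (if W j = k' then 1 else 0))) := by
          rw [Finset.mul_sum]
          exact Finset.sum_congr rfl fun W _ => by ring
        rw [hpull, key i j]
        ring
    _ = (2 / ((p : ℝ) * (n : ℝ))) * ∑ i, ∑ j, P i j * v i * v j := by
        rw [Finset.mul_sum]
        refine Finset.sum_congr rfl fun i _ => ?_
        rw [Finset.mul_sum]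
        refine Finset.sum_congr rfl fun j _ => ?_
        have hnr : (n:ℝ) = (m:ℝ) * (p:ℝ) := by rw [hn]; push_cast; ring
        have hc : (1/(p:ℝ))^2 * (2/(m:ℝ)) = 2 / ((p:ℝ) * ((m:ℝ) * (p:ℝ))) := by
          field_simp
        rw [hnr, ← hc]
end

section
/- Let m ≥ 2, p ≥ 1, n = mp, and let σ be a treatment-symmetric design on even assignments. Then the matrix P ∈ ℝ^{n×n} defined by P_{ij} = σ({W : W_i = W_j}) − σ({W : W_i ≠ W_j})/(m−1) is positive semidefinite. -/
open scoped BigOperators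

lemma quadW {m n : ℕ} (hm : 2 ≤ m) (W : Fin n → Fin m) (x : Fin n → ℝ) :
    0 ≤ ∑ i, ∑ j, x i * ((if W i = W j then (1:ℝ) else -(1/((m:ℝ)-1))) * x j) := by
  have hm1 : (0:ℝ) < (m:ℝ) - 1 := by
    have : (2:ℝ) ≤ (m:ℝ) := by exact_mod_cast hm
    linarith
  have hm1' : ((m:ℝ) - 1) ≠ 0 := ne_of_gt hm1
  set s : Fin m → ℝ := fun k => ∑ i, if W i = k then x i else 0 with hs
  have step : ∀ i j, x i * ((if W i = W j then (1:ℝ) else -(1/((m:ℝ)-1))) * x j)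
      = ((m:ℝ)/((m:ℝ)-1)) * (if W i = W j then x i * x j else 0)
        - (1/((m:ℝ)-1)) * (x i * x j) := by
    intro i j
    split_ifs with h
    · field_simp
    · field_simp
      ring
  have hA : ∑ i, ∑ j, (if W i = W j then x i * x j else 0) = ∑ k, (s k)^2 := by
    have inner : ∀ i j : Fin n,
        (∑ k, (if W i = k then x i else 0) * (if W j = k then x j else 0))
          = if W i = W j then x i * x j else 0 := by
      intro i j
      rw [Finset.sum_eq_single (W i)]
      · by_cases h : W i = W j <;> simp [h, eq_comm]
      · intro k _ hk
        simp [Ne.symm hk]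
      · simp
    calc ∑ i, ∑ j, (if W i = W j then x i * x j else 0)
        = ∑ i, ∑ j, ∑ k, (if W i = k then x i else 0) * (if W j = k then x j else 0) := by
          simp_rw [inner]
      _ = ∑ i, ∑ k, ∑ j, (if W i = k then x i else 0) * (if W j = k then x j else 0) :=
          Finset.sum_congr rfl fun i _ => Finset.sum_comm
      _ = ∑ k, ∑ i, ∑ j, (if W i = k then x i else 0) * (if W j = k then x j else 0) :=
          Finset.sum_comm
      _ = ∑ k, (s k)^2 := by
          refine Finset.sum_congr rfl fun k _ => ?_
          rw [hs, sq, Finset.sum_mul_sum]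
  have hB : ∑ i, x i = ∑ k, s k := by
    rw [hs, Finset.sum_comm]
    refine Finset.sum_congr rfl fun i _ => ?_
    simp
  have expand : ∑ i, ∑ j, x i * ((if W i = W j then (1:ℝ) else -(1/((m:ℝ)-1))) * x j)
      = ((m:ℝ)/((m:ℝ)-1)) * (∑ k, (s k)^2) - (1/((m:ℝ)-1)) * (∑ k, s k)^2 := by
    simp_rw [step, Finset.sum_sub_distrib, ← Finset.mul_sum]
    rw [hA, ← hB, ← Finset.sum_mul]
    ring
  have hcs : (∑ k, s k)^2 ≤ (m:ℝ) * ∑ k, (s k)^2 := by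
    have := sq_sum_le_card_mul_sum_sq (s := (Finset.univ : Finset (Fin m))) (f := s)
    simpa using this
  have h2 : ((m:ℝ)/((m:ℝ)-1)) * (∑ k, (s k)^2) - (1/((m:ℝ)-1)) * (∑ k, s k)^2
      = ((m:ℝ) * (∑ k, (s k)^2) - (∑ k, s k)^2) / ((m:ℝ)-1) := by
    field_simp
  rw [expand, h2]
  exact div_nonneg (by linarith) (le_of_lt hm1)

/-- For any treatment-symmetric design `σ` on even assignments, the matrix
`P_{ij} = σ(Wᵢ = Wⱼ) − σ(Wᵢ ≠ Wⱼ)/(m−1)` is positive semidefinite. -/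
theorem stmt4 (m p n : ℕ) (hm : 2 ≤ m) (hp : 1 ≤ p) (hn : n = m * p)
    (σ : (Fin n → Fin m) → ℝ)
    (hσ0 : ∀ W, 0 ≤ σ W)
    (hσ1 : ∑ W : Fin n → Fin m, σ W = 1)
    (hsupp : ∀ W : Fin n → Fin m, σ W ≠ 0 →
        ∀ k, (Finset.univ.filter fun i => W i = k).card = p)
    (hsym : ∀ (π : Equiv.Perm (Fin m)) (W : Fin n → Fin m), σ (fun i => π (W i)) = σ W)
    (P : Matrix (Fin n) (Fin n) ℝ)
    (hPdef : ∀ i j, P i j =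
        (∑ W ∈ Finset.univ.filter (fun W : Fin n → Fin m => W i = W j), σ W)
        - (∑ W ∈ Finset.univ.filter (fun W : Fin n → Fin m => W i ≠ W j), σ W)
            / ((m : ℝ) - 1)) :
    P.PosSemidef := by
  have hP' : ∀ i j, P i j = ∑ W : Fin n → Fin m,
      σ W * (if W i = W j then (1:ℝ) else -(1/((m:ℝ)-1))) := by
    intro i j
    rw [hPdef,
      ← Finset.sum_filter_add_sum_filter_not Finset.univ (fun W : Fin n → Fin m => W i = W j)
        (fun W => σ W * (if W i = W j then (1:ℝ) else -(1/((m:ℝ)-1))))]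
    have h1 : ∑ W ∈ Finset.univ.filter (fun W : Fin n → Fin m => W i = W j),
        σ W * (if W i = W j then (1:ℝ) else -(1/((m:ℝ)-1)))
        = ∑ W ∈ Finset.univ.filter (fun W : Fin n → Fin m => W i = W j), σ W := by
      refine Finset.sum_congr rfl fun W hW => ?_
      rw [Finset.mem_filter] at hW
      simp [hW.2]
    have h2 : ∑ W ∈ Finset.univ.filter (fun W : Fin n → Fin m => ¬ W i = W j),
        σ W * (if W i = W j then (1:ℝ) else -(1/((m:ℝ)-1)))
        = -((∑ W ∈ Finset.univ.filter (fun W : Fin n → Fin m => W i ≠ W j), σ W)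
            / ((m:ℝ)-1)) := by
      calc ∑ W ∈ Finset.univ.filter (fun W : Fin n → Fin m => ¬ W i = W j),
              σ W * (if W i = W j then (1:ℝ) else -(1/((m:ℝ)-1)))
          = ∑ W ∈ Finset.univ.filter (fun W : Fin n → Fin m => ¬ W i = W j),
              σ W * (-(1/((m:ℝ)-1))) := by
            refine Finset.sum_congr rfl fun W hW => ?_
            rw [Finset.mem_filter] at hW
            simp [hW.2]
        _ = (∑ W ∈ Finset.univ.filter (fun W : Fin n → Fin m => ¬ W i = W j), σ W)
              * (-(1/((m:ℝ)-1))) := by rw [Finset.sum_mul]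
        _ = -((∑ W ∈ Finset.univ.filter (fun W : Fin n → Fin m => W i ≠ W j), σ W)
              / ((m:ℝ)-1)) := by ring
    rw [h1, h2]
    ring
  have hsymm : ∀ i j, P i j = P j i := by
    intro i j
    rw [hP', hP']
    refine Finset.sum_congr rfl fun W _ => ?_
    simp [eq_comm]
  refine Matrix.PosSemidef.of_dotProduct_mulVec_nonneg ?_ ?_
  · ext i j
    simp [Matrix.conjTranspose_apply, hsymm j i]
  · intro x
    have e1 : dotProduct (star x) (P.mulVec x) = ∑ i, ∑ j, x i * (P i j * x j) := by
      simp [dotProduct, Matrix.mulVec, Finset.mul_sum]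
    have key : dotProduct (star x) (P.mulVec x) = ∑ W : Fin n → Fin m,
        σ W * (∑ i, ∑ j, x i * ((if W i = W j then (1:ℝ) else -(1/((m:ℝ)-1))) * x j)) := by
      rw [e1]
      calc ∑ i, ∑ j, x i * (P i j * x j)
          = ∑ i, ∑ j, ∑ W : Fin n → Fin m,
              σ W * (x i * ((if W i = W j then (1:ℝ) else -(1/((m:ℝ)-1))) * x j)) := by
            refine Finset.sum_congr rfl fun i _ => Finset.sum_congr rfl fun j _ => ?_
            rw [hP', Finset.sum_mul, Finset.mul_sum]
            exact Finset.sum_congr rfl fun V _ => by ring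
        _ = ∑ i, ∑ W : Fin n → Fin m, ∑ j,
              σ W * (x i * ((if W i = W j then (1:ℝ) else -(1/((m:ℝ)-1))) * x j)) :=
            Finset.sum_congr rfl fun i _ => Finset.sum_comm
        _ = ∑ W : Fin n → Fin m, ∑ i, ∑ j,
              σ W * (x i * ((if W i = W j then (1:ℝ) else -(1/((m:ℝ)-1))) * x j)) :=
            Finset.sum_comm
        _ = ∑ W : Fin n → Fin m,
              σ W * (∑ i, ∑ j, x i * ((if W i = W j then (1:ℝ) else -(1/((m:ℝ)-1))) * x j)) := by
            refine Finset.sum_congr rfl fun V _ => ?_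
            rw [Finset.mul_sum]
            exact Finset.sum_congr rfl fun i _ => by rw [Finset.mul_sum]
    rw [key]
    exact Finset.sum_nonneg fun V _ => mul_nonneg (hσ0 V)
      (quadW (by omega : 2 ≤ m) V x)
end

section
/- Let 𝒳 be a set, n even, X_1,…,X_n ∈ 𝒳, and u ∈ U. Let q be the maximum cardinality of a collection of pairwise disjoint pairs {i, j} ⊆ {1,…,n} such that u_i = 1, u_j = −1 and X_i = X_j (a maximal perfect exact match across the two groups). Then the supremum over all functions f : 𝒳 → ℝ satisfying |f(x)| ≤ 1 for all x ∈ 𝒳 of (2/n) Σ_{i=1}^n u_i f(X_i) equals 2 − 4q/n. (Hence minimizing the worst-case imbalance over the sup-norm unit ball is equivalent to maximizing the number of exact matches, i.e., incomplete blocking.) -/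
open scoped Classical BigOperators

/-- If `q` is the maximum cardinality of a collection of pairwise disjoint pairs matching
a `+1`-subject to a `−1`-subject with identical covariates (a maximal perfect exact match
across the two groups), then the worst-case imbalance over the sup-norm unit ball equals
`2 − 4q/n`. Hence the sup-norm optimal design is incomplete blocking. -/
theorem stmt5 {𝒳 : Type*} (n : ℕ) (hn : 0 < n) (hne : Even n) (X : Fin n → 𝒳)
    (u : Fin n → Bool) (hu : ∑ i, sgn u i = 0) (q : ℕ)
    (hq : IsGreatest {q' : ℕ | ∃ (A : Finset (Fin n)) (g : Fin n → Fin n),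
        Set.InjOn g ↑A ∧
        (∀ i ∈ A, sgn u i = 1 ∧ sgn u (g i) = -1 ∧ X i = X (g i)) ∧
        q' = A.card} q) :
    sSup {r : ℝ | ∃ f : 𝒳 → ℝ, (∀ x, |f x| ≤ 1) ∧
        r = (2 / (n : ℝ)) * ∑ i, sgn u i * f (X i)}
      = 2 - 4 * (q : ℝ) / (n : ℝ) := by
  obtain ⟨⟨A, g, hginj, hA, hcard⟩, hub⟩ := hq
  subst hcard
  have hn0 : (n : ℝ) ≠ 0 := Nat.cast_ne_zero.mpr hn.ne'
  have hsgnT : ∀ i, u i = true → sgn u i = 1 := fun i h => by simp [sgn, h]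
  have hsgnF : ∀ i, u i = false → sgn u i = -1 := fun i h => by simp [sgn, h]
  have huA : ∀ i ∈ A, u i = true := by
    intro i hi
    by_contra hc
    rw [Bool.not_eq_true] at hc
    have h1 := (hA i hi).1
    rw [hsgnF i hc] at h1
    norm_num at h1
  have hugA : ∀ i ∈ A, u (g i) = false := by
    intro i hi
    by_contra hc
    rw [Bool.not_eq_false] at hc
    have h1 := (hA i hi).2.1
    rw [hsgnT _ hc] at h1
    norm_num at h1
  have hX : ∀ i ∈ A, X i = X (g i) := fun i hi => (hA i hi).2.2
  set B : Finset (Fin n) := A.image g with hBdef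
  have hBmem : ∀ j ∈ B, u j = false := by
    intro j hj
    obtain ⟨i, hi, rfl⟩ := Finset.mem_image.mp hj
    exact hugA i hi
  have hdisj : Disjoint A B := by
    rw [Finset.disjoint_left]
    intro i hiA hiB
    have h1 := huA i hiA
    have h2 := hBmem i hiB
    rw [h1] at h2
    exact Bool.noConfusion h2
  have hBcard : B.card = A.card := Finset.card_image_of_injOn hginj
  -- sum over matched pairs is zero
  have hAB0 : ∀ f : 𝒳 → ℝ, ∑ i ∈ A ∪ B, sgn u i * f (X i) = 0 := by
    intro f
    rw [Finset.sum_union hdisj, hBdef,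
      Finset.sum_image (fun x hx y hy h => hginj (Finset.mem_coe.mpr hx) (Finset.mem_coe.mpr hy) h),
      ← Finset.sum_add_distrib]
    apply Finset.sum_eq_zero
    intro i hi
    rw [hsgnT i (huA i hi), hsgnF (g i) (hugA i hi), ← hX i hi]
    ring
  set R : Finset (Fin n) := Finset.univ \ (A ∪ B) with hRdef
  have hsplit : ∀ f : 𝒳 → ℝ, ∑ i, sgn u i * f (X i)
      = ∑ i ∈ A ∪ B, sgn u i * f (X i) + ∑ i ∈ R, sgn u i * f (X i) := by
    intro f
    rw [← Finset.sum_union Finset.disjoint_sdiff,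
      Finset.union_sdiff_of_subset (Finset.subset_univ _)]
  have hcard2 : (A ∪ B).card = 2 * A.card := by
    rw [Finset.card_union_of_disjoint hdisj, hBcard]; ring
  have hle : 2 * A.card ≤ n := by
    rw [← hcard2]
    simpa using Finset.card_le_card (Finset.subset_univ (A ∪ B))
  have hRcard : (R.card : ℝ) = (n : ℝ) - 2 * A.card := by
    rw [hRdef, Finset.card_sdiff_of_subset (Finset.subset_univ _), hcard2, Finset.card_univ,
      Fintype.card_fin, Nat.cast_sub hle]
    push_cast
    ring
  -- upper bound
  have hupper : ∀ f : 𝒳 → ℝ, (∀ x, |f x| ≤ 1) →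
      ∑ i, sgn u i * f (X i) ≤ (n : ℝ) - 2 * A.card := by
    intro f hf
    rw [hsplit f, hAB0 f, zero_add, ← hRcard]
    have habs : ∀ i, |sgn u i| = 1 := by
      intro i
      by_cases h : u i <;> simp [sgn, h]
    calc ∑ i ∈ R, sgn u i * f (X i) ≤ ∑ i ∈ R, 1 := by
          apply Finset.sum_le_sum
          intro i _
          calc sgn u i * f (X i) ≤ |sgn u i * f (X i)| := le_abs_self _
            _ = |f (X i)| := by rw [abs_mul, habs, one_mul]
            _ ≤ 1 := hf _
      _ = (R.card : ℝ) := by simp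
  -- maximality: no unmatched cross pair with equal covariates
  have hmax : ∀ i j, u i = true → i ∉ A → u j = false → j ∉ B → X i ≠ X j := by
    intro i j hi hiA hj hjB heq
    have hnew : A.card + 1 ∈ {q' : ℕ | ∃ (A' : Finset (Fin n)) (g' : Fin n → Fin n),
        Set.InjOn g' ↑A' ∧
        (∀ k ∈ A', sgn u k = 1 ∧ sgn u (g' k) = -1 ∧ X k = X (g' k)) ∧
        q' = A'.card} := by
      refine ⟨insert i A, Function.update g i j, ?_, ?_, ?_⟩
      · intro x hx y hy hxy
        simp only [Finset.coe_insert, Set.mem_insert_iff, Finset.mem_coe] at hx hy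
        by_cases hxi : x = i <;> by_cases hyi : y = i
        · rw [hxi, hyi]
        · exfalso
          have hyA : y ∈ A := hy.resolve_left hyi
          rw [hxi, Function.update_self, Function.update_of_ne hyi] at hxy
          exact hjB (by rw [hxy]; exact Finset.mem_image_of_mem g hyA)
        · exfalso
          have hxA : x ∈ A := hx.resolve_left hxi
          rw [hyi, Function.update_self, Function.update_of_ne hxi] at hxy
          exact hjB (by rw [← hxy]; exact Finset.mem_image_of_mem g hxA)
        · have hxA : x ∈ A := hx.resolve_left hxi
          have hyA : y ∈ A := hy.resolve_left hyi
          rw [Function.update_of_ne hxi, Function.update_of_ne hyi] at hxy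
          exact hginj (Finset.mem_coe.mpr hxA) (Finset.mem_coe.mpr hyA) hxy
      · intro k hk
        by_cases hki : k = i
        · rw [hki, Function.update_self]
          exact ⟨hsgnT _ hi, hsgnF _ hj, heq⟩
        · have hkA : k ∈ A := (Finset.mem_insert.mp hk).resolve_left hki
          rw [Function.update_of_ne hki]
          exact hA k hkA
      · rw [Finset.card_insert_of_notMem hiA]
    have := hub hnew
    omega
  -- the optimal function
  set f : 𝒳 → ℝ := fun x =>
    if ∃ i, u i = true ∧ i ∉ A ∧ X i = x then 1
    else if ∃ j, u j = false ∧ j ∉ B ∧ X j = x then -1 else 0 with hfdef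
  have hfb : ∀ x, |f x| ≤ 1 := by
    intro x
    rw [hfdef]
    dsimp only
    split_ifs <;> norm_num
  have hfP : ∀ i, u i = true → i ∉ A → f (X i) = 1 := by
    intro i hi hiA
    rw [hfdef]
    exact if_pos ⟨i, hi, hiA, rfl⟩
  have hfN : ∀ j, u j = false → j ∉ B → f (X j) = -1 := by
    intro j hj hjB
    rw [hfdef]
    dsimp only
    rw [if_neg, if_pos ⟨j, hj, hjB, rfl⟩]
    rintro ⟨i, hi, hiA, heq⟩
    exact hmax i j hi hiA hj hjB heq
  have hsum : ∑ i, sgn u i * f (X i) = (n : ℝ) - 2 * A.card := by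
    rw [hsplit f, hAB0 f, zero_add, ← hRcard]
    have : ∀ i ∈ R, sgn u i * f (X i) = 1 := by
      intro i hi
      rw [hRdef, Finset.mem_sdiff, Finset.mem_union] at hi
      push_neg at hi
      obtain ⟨-, hiA, hiB⟩ := hi
      by_cases h : u i = true
      · rw [hsgnT i h, hfP i h hiA]; ring
      · rw [Bool.not_eq_true] at h
        rw [hsgnF i h, hfN i h hiB]; ring
    rw [Finset.sum_congr rfl this]
    simp
  -- conclude
  apply IsGreatest.csSup_eq
  constructor
  · refine ⟨f, hfb, ?_⟩
    rw [hsum]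
    field_simp
    ring
  · rintro r ⟨f', hf', rfl⟩
    have h1 := hupper f' hf'
    have h2 : (0:ℝ) ≤ 2 / n := by positivity
    calc (2 / (n:ℝ)) * ∑ i, sgn u i * f' (X i)
        ≤ (2 / (n:ℝ)) * ((n : ℝ) - 2 * A.card) := mul_le_mul_of_nonneg_left h1 h2
      _ = 2 - 4 * (A.card : ℝ) / n := by field_simp; ring
end

section
/- Let (𝒳, δ) be a metric space, n even, and X_1,…,X_n ∈ 𝒳. Then min over u ∈ U of [ sup over all 1-Lipschitz functions f : 𝒳 → ℝ of Σ_{i=1}^n u_i f(X_i) ] equals the minimum over all perfect matchings μ of {1,…,n} (partitions of {1,…,n} into n/2 unordered pairs) of Σ_{{i,j} ∈ μ} δ(X_i, X_j). (The pure-strategy optimal design for the Lipschitz norm is optimal pairwise matching.) -/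
open scoped Classical BigOperators

namespace Stmt6Aux

variable {𝒳 : Type*} [MetricSpace 𝒳]

/-- Weight of a "walk" starting at `v` through matched pairs indexed by `L`. -/
noncomputable def gw {k : ℕ} (x y : Fin k → 𝒳) : 𝒳 → List (Fin k) → ℝ
  | _, [] => 0
  | v, i :: L => dist (x i) (y i) - dist v (x i) + gw x y (y i) L

/-- Endpoint of the walk. -/
noncomputable def ep {k : ℕ} (y : Fin k → 𝒳) : 𝒳 → List (Fin k) → 𝒳
  | v, [] => v
  | _, i :: L => ep y (y i) L

variable {k : ℕ} (x y : Fin k → 𝒳)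

lemma gw_append : ∀ (A : List (Fin k)) (v : 𝒳) (M : List (Fin k)),
    gw x y v (A ++ M) = gw x y v A + gw x y (ep y v A) M
  | [], v, M => by simp [gw, ep]
  | i :: A, v, M => by
      show dist (x i) (y i) - dist v (x i) + gw x y (y i) (A ++ M) = _
      rw [gw_append A]
      show _ = dist (x i) (y i) - dist v (x i) + gw x y (y i) A + gw x y (ep y (y i) A) M
      ring

lemma ep_cons : ∀ (A : List (Fin k)) (a : Fin k) (v : 𝒳),
    ep y v (a :: A) = y ((a :: A).getLast (List.cons_ne_nil a A))
  | [], a, v => by simp [ep]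
  | b :: A, a, v => by
      rw [List.getLast_cons (List.cons_ne_nil b A)]
      show ep y (y a) (b :: A) = _
      exact ep_cons A b (y a)

lemma gw_lip : ∀ (L : List (Fin k)) (v w : 𝒳), gw x y v L - gw x y w L ≤ dist v w
  | [], v, w => by simp [gw, dist_nonneg]
  | i :: L, v, w => by
      simp only [gw]
      have h : dist w (x i) - dist v (x i) ≤ dist w v := by
        have := abs_dist_sub_le w v (x i)
        have h2 := abs_le.1 this
        linarith [h2.1, h2.2]
      rw [dist_comm v w]
      ring_nf
      linarith [abs_le.1 (abs_dist_sub_le w v (x i))]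

/-- The finite set of all duplicate-free lists over `Fin k`. -/
noncomputable def Sfin (k : ℕ) : Finset (List (Fin k)) :=
  Finset.univ.powerset.biUnion fun s => ((s.sort (· ≤ ·)).permutations).toFinset

lemma mem_Sfin_iff {L : List (Fin k)} : L ∈ Sfin k ↔ L.Nodup := by
  constructor
  · intro h
    rcases Finset.mem_biUnion.1 h with ⟨s, _, hs⟩
    exact ((List.perm_of_mem_permutations (List.mem_toFinset.1 hs)).symm).nodup
      (Finset.sort_nodup s (· ≤ ·))
  · intro h
    refine Finset.mem_biUnion.2 ⟨L.toFinset, Finset.mem_powerset.2 (Finset.subset_univ _), ?_⟩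
    refine List.mem_toFinset.2 (List.mem_permutations.2 ?_)
    refine List.perm_of_nodup_nodup_toFinset_eq h (Finset.sort_nodup _ _) ?_
    rw [Finset.sort_toFinset]

lemma Sfin_nonempty : (Sfin k).Nonempty := ⟨[], mem_Sfin_iff.2 List.nodup_nil⟩

/-- Key identity: the weight of a cycle as a list-sum over the cycle permutation. -/
lemma cycle_identity : ∀ (A : List (Fin k)) (j : Fin k), (j :: A).Nodup →
    ((j :: A).map (fun i =>
        dist (x i) (y i) - dist (x ((j :: A).formPerm i)) (y i))).sum
      = gw x y (y j) A + dist (x j) (y j) - dist (ep y (y j) A) (x j)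
  | [], j, _ => by
      simp [List.formPerm_singleton, gw, ep, dist_comm]
  | a :: A', j, hnd => by
      have hnd' : (a :: A').Nodup := hnd.of_cons
      have hjA : j ∉ a :: A' := (List.nodup_cons.1 hnd).1
      set π' := (a :: A').formPerm with hπ'
      set m := (a :: A').getLast (List.cons_ne_nil a A') with hm
      have hmem : m ∈ a :: A' := List.getLast_mem _
      have hπ'm : π' m = a := List.formPerm_apply_getLast a A'
      have hπ'j : π' j = j := List.formPerm_apply_of_notMem hjA
      set π := (j :: a :: A').formPerm with hπdef
      have hπeq : π = Equiv.swap j a * π' := List.formPerm_cons_cons j a A'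
      have hπj : π j = a := by
        rw [hπeq]
        simp [hπ'j, Equiv.swap_apply_left]
      have hπval : ∀ i ∈ a :: A', π i = if i = m then j else π' i := by
        intro i hi
        have hmemπ : π' i ∈ a :: A' := List.formPerm_apply_mem_of_mem hi
        have hne_j : π' i ≠ j := fun h => hjA (h ▸ hmemπ)
        by_cases him : i = m
        · subst him
          rw [hπeq]
          simp [hπ'm, Equiv.swap_apply_right, if_pos rfl]
        · have hne_a : π' i ≠ a := by
            intro h
            exact him (π'.injective (h.trans hπ'm.symm))
          rw [hπeq, if_neg him]
          simp [Equiv.swap_apply_of_ne_of_ne hne_j hne_a]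
      -- abbreviations
      set d : Fin k → ℝ := fun i => dist (x i) (y i) with hd
      set F : Fin k → ℝ := fun i => d i - dist (x (π i)) (y i) with hF
      set F' : Fin k → ℝ := fun i => d i - dist (x (π' i)) (y i) with hF'
      have hsum_split :
          ((j :: a :: A').map F).sum = F j + ((a :: A').map F).sum := by
        simp
      -- compare list sums of F and F' over (a :: A')
      have hFset : ((a :: A').map F).sum = ((a :: A').toFinset).sum F :=
        (List.sum_toFinset F hnd').symm
      have hF'set : ((a :: A').map F').sum = ((a :: A').toFinset).sum F' :=
        (List.sum_toFinset F' hnd').symm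
      have hmfin : m ∈ (a :: A').toFinset := List.mem_toFinset.2 hmem
      have hagree : ∀ i ∈ ((a :: A').toFinset).erase m, F i = F' i := by
        intro i hi
        have him := Finset.ne_of_mem_erase hi
        have hi' : i ∈ a :: A' := List.mem_toFinset.1 (Finset.mem_of_mem_erase hi)
        simp only [hF, hF']
        rw [hπval i hi', if_neg him]
      have hdiff : ((a :: A').toFinset).sum F
          = ((a :: A').toFinset).sum F' - F' m + F m := by
        rw [← Finset.add_sum_erase _ F hmfin, ← Finset.add_sum_erase _ F' hmfin,
          Finset.sum_congr rfl hagree]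
        ring
      have hFm : F m = d m - dist (x j) (y m) := by
        simp only [hF]
        rw [hπval m hmem, if_pos rfl]
      have hF'm : F' m = d m - dist (x a) (y m) := by simp [hF', hπ'm]
      -- induction hypothesis
      have hIH := cycle_identity A' a hnd'
      have hIH' : ((a :: A').map F').sum
          = gw x y (y a) A' + d a - dist (ep y (y a) A') (x a) := hIH
      -- endpoint facts
      have hep1 : ep y (y a) A' = ep y (y j) (a :: A') := rfl
      have hep2 : ep y (y j) (a :: A') = y m := by
        rw [ep_cons y (A') a (y j), ← hm]
      have hepm : ep y (y a) A' = y m := by rw [hep1, hep2]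
      -- F j
      have hFj : F j = d j - dist (x a) (y j) := by simp [hF, hπj]
      -- assemble
      rw [hsum_split, hFset, hdiff, ← hF'set, hIH', hFj, hFm, hF'm, hepm]
      show _ = gw x y (y j) (a :: A') + d j - dist (ep y (y j) (a :: A')) (x j)
      rw [hep2]
      show _ = dist (x a) (y a) - dist (y j) (x a) + gw x y (y a) A' + d j - dist (y m) (x j)
      have e1 : dist (x a) (y j) = dist (y j) (x a) := dist_comm _ _
      have e2 : dist (x a) (y m) = dist (y m) (x a) := dist_comm _ _
      have e3 : dist (x j) (y m) = dist (y m) (x j) := dist_comm _ _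
      have e4 : d a = dist (x a) (y a) := rfl
      linarith [e1, e2, e3]

/-- Under optimality of the matching, every cycle has nonpositive weight. -/
lemma cycle_le
    (H : ∀ π : Equiv.Perm (Fin k), ∑ i, dist (x i) (y i) ≤ ∑ i, dist (x (π i)) (y i))
    (A : List (Fin k)) (j : Fin k) (hnd : (j :: A).Nodup) :
    gw x y (y j) A + dist (x j) (y j) - dist (ep y (y j) A) (x j) ≤ 0 := by
  set π := (j :: A).formPerm with hπ
  set F : Fin k → ℝ := fun i => dist (x i) (y i) - dist (x (π i)) (y i) with hF
  have hid := cycle_identity x y A j hnd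
  have hlist : ((j :: A).map F).sum = ((j :: A).toFinset).sum F :=
    (List.sum_toFinset F hnd).symm
  have hext : ((j :: A).toFinset).sum F = ∑ i, F i := by
    refine Finset.sum_subset (Finset.subset_univ _) ?_
    intro i _ hi
    have : π i = i := List.formPerm_apply_of_notMem (fun h => hi (List.mem_toFinset.2 h))
    simp [hF, this]
  have hsum : ∑ i, F i = ∑ i, dist (x i) (y i) - ∑ i, dist (x (π i)) (y i) := by
    simp [hF, Finset.sum_sub_distrib]
  have := H π
  calc gw x y (y j) A + dist (x j) (y j) - dist (ep y (y j) A) (x j)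
      = ((j :: A).map F).sum := hid.symm
    _ = ∑ i, F i := by rw [hlist, hext]
    _ = ∑ i, dist (x i) (y i) - ∑ i, dist (x (π i)) (y i) := hsum
    _ ≤ 0 := by linarith

/-- Existence of an optimal dual potential (Kantorovich duality, hard direction). -/
lemma exists_dual
    (H : ∀ π : Equiv.Perm (Fin k), ∑ i, dist (x i) (y i) ≤ ∑ i, dist (x (π i)) (y i)) :
    ∃ f : 𝒳 → ℝ, LipschitzWith 1 f ∧ ∀ j, dist (x j) (y j) + f (y j) ≤ f (x j) := by
  have hne : ∀ v : 𝒳, ((Sfin k).image (fun L => gw x y v L)).Nonempty :=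
    fun v => Sfin_nonempty.image _
  set f : 𝒳 → ℝ := fun v => ((Sfin k).image (fun L => gw x y v L)).max' (hne v) with hfdef
  have hub : ∀ (v : 𝒳) (L), L ∈ Sfin k → gw x y v L ≤ f v := by
    intro v L hL
    exact Finset.le_max' _ _ (Finset.mem_image_of_mem _ hL)
  have hex : ∀ v : 𝒳, ∃ L ∈ Sfin k, f v = gw x y v L := by
    intro v
    rcases Finset.mem_image.1 (Finset.max'_mem _ (hne v)) with ⟨L, hL, hL2⟩
    exact ⟨L, hL, hL2.symm⟩
  have hfle : ∀ v w : 𝒳, f v - f w ≤ dist v w := by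
    intro v w
    rcases hex v with ⟨L, hL, hLv⟩
    have h1 : gw x y v L - gw x y w L ≤ dist v w := gw_lip x y L v w
    have h2 : gw x y w L ≤ f w := hub w L hL
    linarith [hLv.le, hLv.ge]
  have hlip : LipschitzWith 1 f := by
    apply LipschitzWith.of_dist_le_mul
    intro v w
    rw [Real.dist_eq]
    simp only [NNReal.coe_one, one_mul]
    rw [abs_le]
    constructor
    · have := hfle w v
      rw [dist_comm w v] at this
      linarith
    · linarith [hfle v w]
  refine ⟨f, hlip, fun j => ?_⟩
  -- find a maximizer for f (y j) avoiding j
  have key : ∀ (N : ℕ) (L : List (Fin k)), L.length ≤ N → L ∈ Sfin k →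
      f (y j) = gw x y (y j) L → ∃ L' ∈ Sfin k, j ∉ L' ∧ f (y j) = gw x y (y j) L' := by
    intro N
    induction N with
    | zero =>
        intro L hlen hL hfL
        have : L = [] := List.eq_nil_of_length_eq_zero (Nat.le_zero.1 hlen)
        exact ⟨L, hL, by simp [this], hfL⟩
    | succ N ih =>
        intro L hlen hL hfL
        by_cases hjL : j ∈ L
        · rcases List.append_of_mem hjL with ⟨A, B, rfl⟩
          have hnd : (A ++ j :: B).Nodup := mem_Sfin_iff.1 hL
          have hndjA : (j :: A).Nodup := by
            have h1 : A.Nodup := hnd.of_append_left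
            have h2 : j ∉ A := by
              intro hjA
              have := List.disjoint_of_nodup_append hnd
              exact this hjA (List.mem_cons_self : j ∈ j :: B)
            exact List.nodup_cons.2 ⟨h2, h1⟩
          have hndB : B.Nodup := (hnd.of_append_right).of_cons
          have hBS : B ∈ Sfin k := mem_Sfin_iff.2 hndB
          have hsplit : gw x y (y j) (A ++ j :: B)
              = gw x y (y j) A + (dist (x j) (y j) - dist (ep y (y j) A) (x j))
                + gw x y (y j) B := by
            rw [gw_append]
            show _ = _
            have : gw x y (ep y (y j) A) (j :: B)
                = dist (x j) (y j) - dist (ep y (y j) A) (x j) + gw x y (y j) B := rfl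
            rw [this]; ring
          have hcyc := cycle_le x y H A j hndjA
          have hle : gw x y (y j) (A ++ j :: B) ≤ gw x y (y j) B := by
            rw [hsplit]; linarith
          have hgeB : gw x y (y j) B ≤ f (y j) := hub _ _ hBS
          have hfB' : f (y j) = gw x y (y j) B := by
            have h1 : f (y j) ≤ gw x y (y j) B := by rw [hfL]; exact hle
            exact le_antisymm h1 hgeB
          have hlenB : B.length ≤ N := by
            have := hlen
            simp only [List.length_append, List.length_cons] at this
            omega
          exact ih B hlenB hBS hfB'
        · exact ⟨L, hL, hjL, hfL⟩
  rcases hex (y j) with ⟨L0, hL0, hfL0⟩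
  rcases key L0.length L0 le_rfl hL0 hfL0 with ⟨L, hLS, hjL, hfL⟩
  have hndL : L.Nodup := mem_Sfin_iff.1 hLS
  have hcons : (j :: L) ∈ Sfin k := mem_Sfin_iff.2 (List.nodup_cons.2 ⟨hjL, hndL⟩)
  have := hub (x j) (j :: L) hcons
  have hgwcons : gw x y (x j) (j :: L)
      = dist (x j) (y j) - dist (x j) (x j) + gw x y (y j) L := rfl
  rw [hgwcons, dist_self] at this
  rw [hfL]
  linarith

lemma value_eq {n k : ℕ} (u : Fin n → Bool) (E : Fin k ⊕ Fin k ≃ Fin n)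
    (hE1 : ∀ j, u (E (Sum.inl j)) = true) (hE2 : ∀ j, u (E (Sum.inr j)) = false)
    (g : Fin n → ℝ) :
    ∑ i, sgn u i * g i = ∑ j, g (E (Sum.inl j)) - ∑ j, g (E (Sum.inr j)) := by
  have h := Equiv.sum_comp E (fun i => sgn u i * g i)
  rw [← h, Fintype.sum_sum_type]
  have e1 : ∀ j : Fin k, sgn u (E (Sum.inl j)) = 1 := fun j => by simp [sgn, hE1 j]
  have e2 : ∀ j : Fin k, sgn u (E (Sum.inr j)) = -1 := fun j => by simp [sgn, hE2 j]
  simp_rw [e1, e2, one_mul, neg_one_mul]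
  rw [Finset.sum_neg_distrib]
  ring

lemma pairing {n : ℕ} (u : Fin n → Bool) (hu : ∑ i, sgn u i = 0) :
    ∃ (k : ℕ) (E : Fin k ⊕ Fin k ≃ Fin n),
      (∀ j, u (E (Sum.inl j)) = true) ∧ (∀ j, u (E (Sum.inr j)) = false) := by
  classical
  set s : Finset (Fin n) := Finset.univ.filter (fun i => u i = true) with hs
  set t : Finset (Fin n) := Finset.univ.filter (fun i => ¬ u i = true) with ht
  have hsum : ∑ i, sgn u i = (s.card : ℝ) - t.card := by
    rw [← Finset.sum_filter_add_sum_filter_not Finset.univ (fun i => u i = true) (sgn u)]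
    have h1 : ∑ i ∈ s, sgn u i = (s.card : ℝ) := by
      have hh : ∀ i ∈ s, sgn u i = 1 := by
        intro i hi
        have := (Finset.mem_filter.1 (hs ▸ hi)).2
        simp [sgn, this]
      rw [Finset.sum_congr rfl hh, Finset.sum_const, nsmul_eq_mul, mul_one]
    have h2 : ∑ i ∈ t, sgn u i = -(t.card : ℝ) := by
      have hh : ∀ i ∈ t, sgn u i = -1 := by
        intro i hi
        have := (Finset.mem_filter.1 (ht ▸ hi)).2
        simp [sgn, this]
      rw [Finset.sum_congr rfl hh, Finset.sum_const, nsmul_eq_mul, mul_neg_one]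
    rw [h1, h2]
    ring
  have hcard : t.card = s.card := by
    have h : (s.card : ℝ) = (t.card : ℝ) := by
      rw [hu] at hsum
      linarith
    exact_mod_cast h.symm
  have es : Fin s.card ≃ {i : Fin n // u i = true} :=
    s.equivFin.symm.trans (Equiv.subtypeEquivRight (fun i => by simp [hs]))
  have et : Fin s.card ≃ {i : Fin n // ¬ u i = true} :=
    (finCongr hcard.symm).trans
      (t.equivFin.symm.trans (Equiv.subtypeEquivRight (fun i => by simp [ht])))
  refine ⟨s.card, (Equiv.sumCongr es et).trans (Equiv.sumCompl (fun i => u i = true)),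
    ?_, ?_⟩
  · intro j
    show u ((Equiv.sumCompl fun i => u i = true) (Sum.map es et (Sum.inl j))) = true
    rw [Sum.map_inl, Equiv.sumCompl_apply_inl]
    exact (es j).2
  · intro j
    show u ((Equiv.sumCompl fun i => u i = true) (Sum.map es et (Sum.inr j))) = false
    rw [Sum.map_inr, Equiv.sumCompl_apply_inr]
    exact Bool.eq_false_iff.2 fun h => (et j).2 h

end Stmt6Aux

/-- The pure-strategy optimal design for the Lipschitz norm is optimal pairwise matching:
the minimum over balanced assignments `u ∈ U` of the worst-case imbalance over
1-Lipschitz functions equals the minimum total cost over perfect matchings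
(fixed-point-free involutions, each pair counted once) of the pairwise distances. -/
theorem stmt6 {𝒳 : Type*} [MetricSpace 𝒳] (n : ℕ) (hne : Even n) (X : Fin n → 𝒳) :
    sInf {r : ℝ | ∃ u : Fin n → Bool, (∑ i, sgn u i = 0) ∧
        r = sSup {s : ℝ | ∃ f : 𝒳 → ℝ, LipschitzWith 1 f ∧
              s = ∑ i, sgn u i * f (X i)}}
      = sInf {c : ℝ | ∃ π : Equiv.Perm (Fin n), (∀ i, π i ≠ i) ∧ (∀ i, π (π i) = i) ∧
          c = (1 / 2) * ∑ i, dist (X i) (X (π i))} := by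
  classical
  obtain ⟨m, hm⟩ := hne
  -- nonnegativity / membership facts about the inner sup-sets
  have h0mem : ∀ u : Fin n → Bool,
      (0:ℝ) ∈ {s : ℝ | ∃ f : 𝒳 → ℝ, LipschitzWith 1 f ∧ s = ∑ i, sgn u i * f (X i)} := by
    intro u
    exact ⟨fun _ => 0, (LipschitzWith.const 0).weaken zero_le_one, by simp⟩
  have hbdd : ∀ u : Fin n → Bool, (∑ i, sgn u i = 0) →
      BddAbove {s : ℝ | ∃ f : 𝒳 → ℝ, LipschitzWith 1 f ∧ s = ∑ i, sgn u i * f (X i)} := by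
    intro u hu
    obtain ⟨k, E, hE1, hE2⟩ := Stmt6Aux.pairing u hu
    refine ⟨∑ j, dist (X (E (Sum.inl j))) (X (E (Sum.inr j))), ?_⟩
    rintro s ⟨f, hf, rfl⟩
    have hval : ∑ i, sgn u i * f (X i)
        = ∑ j, f (X (E (Sum.inl j))) - ∑ j, f (X (E (Sum.inr j))) :=
      Stmt6Aux.value_eq u E hE1 hE2 (fun i => f (X i))
    rw [hval, ← Finset.sum_sub_distrib]
    refine Finset.sum_le_sum fun j _ => ?_
    have hd := hf.dist_le_mul (X (E (Sum.inl j))) (X (E (Sum.inr j)))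
    rw [Real.dist_eq, NNReal.coe_one, one_mul] at hd
    have := abs_le.1 hd
    linarith [this.2]
  -- from a fixed-point-free involution, construct a balanced assignment
  have mk_u : ∀ π : Equiv.Perm (Fin n), (∀ i, π i ≠ i) → (∀ i, π (π i) = i) →
      ∃ u : Fin n → Bool, (∑ i, sgn u i = 0) ∧
        (∀ f : 𝒳 → ℝ, LipschitzWith 1 f →
          ∑ i, sgn u i * f (X i) ≤ (1/2) * ∑ i, dist (X i) (X (π i))) := by
    intro π hfpf hinv
    set u : Fin n → Bool := fun i => decide (i < π i) with hu
    have hflip : ∀ i, u (π i) = !u i := by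
      intro i
      have hne := hfpf i
      by_cases h : i < π i
      · have h2 : ¬ (π i < π (π i)) := by rw [hinv i]; exact not_lt.2 h.le
        simp [hu, h, h2]
      · have h' : π i < i := lt_of_le_of_ne (not_lt.1 h) hne
        have h2 : π i < π (π i) := by rw [hinv i]; exact h'
        simp [hu, h, h2]
    have hsgnflip : ∀ i, sgn u (π i) = -sgn u i := by
      intro i
      simp only [sgn, hflip i]
      cases u i <;> simp
    have hbal : ∑ i, sgn u i = 0 := by
      have h1 : ∑ i, sgn u (π i) = ∑ i, sgn u i := Equiv.sum_comp π (sgn u)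
      have h2 : ∑ i, sgn u (π i) = -∑ i, sgn u i := by
        simp_rw [hsgnflip]
        rw [Finset.sum_neg_distrib]
      rw [h2] at h1
      linarith
    refine ⟨u, hbal, ?_⟩
    intro f hf
    have hre : ∑ i, sgn u (π i) * f (X (π i)) = ∑ i, sgn u i * f (X i) :=
      Equiv.sum_comp π (fun i => sgn u i * f (X i))
    have hre2 : ∑ i, sgn u (π i) * f (X (π i)) = -∑ i, sgn u i * f (X (π i)) := by
      simp_rw [hsgnflip, neg_mul]
      rw [Finset.sum_neg_distrib]
    have key : ∀ i, sgn u i * (f (X i) - f (X (π i))) ≤ dist (X i) (X (π i)) := by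
      intro i
      have hd := hf.dist_le_mul (X i) (X (π i))
      rw [Real.dist_eq, NNReal.coe_one, one_mul] at hd
      have habs := abs_le.1 hd
      by_cases h : u i
      · simp only [sgn, if_pos h, one_mul]
        linarith [habs.2]
      · simp only [sgn, if_neg h, neg_one_mul]
        linarith [habs.1]
    have hsumkey : ∑ i, sgn u i * (f (X i) - f (X (π i))) ≤ ∑ i, dist (X i) (X (π i)) :=
      Finset.sum_le_sum fun i _ => key i
    have hexpand : ∑ i, sgn u i * (f (X i) - f (X (π i)))
        = ∑ i, sgn u i * f (X i) - ∑ i, sgn u i * f (X (π i)) := by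
      simp_rw [mul_sub]
      rw [Finset.sum_sub_distrib]
    have hXpi : ∑ i, sgn u i * f (X (π i)) = -∑ i, sgn u i * f (X i) := by
      rw [← hre]
      linarith [hre2, hre]
    rw [hexpand, hXpi] at hsumkey
    linarith
  -- a fixed-point-free involution exists since n is even
  set F0 : Fin m ⊕ Fin m ≃ Fin n := finSumFinEquiv.trans (finCongr hm.symm) with hF0
  set π0 : Equiv.Perm (Fin n) := F0.permCongr (Equiv.sumComm (Fin m) (Fin m)) with hπ0
  have hπ0fpf : ∀ i, π0 i ≠ i := by
    intro i h
    rw [hπ0, Equiv.permCongr_apply] at h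
    have h2 : Equiv.sumComm (Fin m) (Fin m) (F0.symm i) = F0.symm i := by
      apply F0.injective
      rw [h, Equiv.apply_symm_apply]
    cases hz : F0.symm i with
    | inl j => rw [hz] at h2; simp at h2
    | inr j => rw [hz] at h2; simp at h2
  have hπ0inv : ∀ i, π0 (π0 i) = i := by
    intro i
    rw [hπ0]
    simp [Equiv.permCongr_apply]
  -- bounds for csInf
  have hRHSbdd : BddBelow {c : ℝ | ∃ π : Equiv.Perm (Fin n), (∀ i, π i ≠ i) ∧
      (∀ i, π (π i) = i) ∧ c = (1 / 2) * ∑ i, dist (X i) (X (π i))} := by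
    refine ⟨0, ?_⟩
    rintro c ⟨π, _, _, rfl⟩
    positivity
  have hLHSbdd : BddBelow {r : ℝ | ∃ u : Fin n → Bool, (∑ i, sgn u i = 0) ∧
      r = sSup {s : ℝ | ∃ f : 𝒳 → ℝ, LipschitzWith 1 f ∧ s = ∑ i, sgn u i * f (X i)}} := by
    refine ⟨0, ?_⟩
    rintro r ⟨u, hu, rfl⟩
    exact le_csSup (hbdd u hu) (h0mem u)
  have hLHSne : {r : ℝ | ∃ u : Fin n → Bool, (∑ i, sgn u i = 0) ∧
      r = sSup {s : ℝ | ∃ f : 𝒳 → ℝ, LipschitzWith 1 f ∧ s = ∑ i, sgn u i * f (X i)}}.Nonempty := by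
    obtain ⟨u0, hbal0, -⟩ := mk_u π0 hπ0fpf hπ0inv
    exact ⟨_, u0, hbal0, rfl⟩
  have hRHSne : {c : ℝ | ∃ π : Equiv.Perm (Fin n), (∀ i, π i ≠ i) ∧
      (∀ i, π (π i) = i) ∧ c = (1 / 2) * ∑ i, dist (X i) (X (π i))}.Nonempty :=
    ⟨_, π0, hπ0fpf, hπ0inv, rfl⟩
  apply le_antisymm
  · -- min over assignments ≤ min over matchings
    apply le_csInf hRHSne
    rintro c ⟨π, hfpf, hinv, rfl⟩
    obtain ⟨u, hbal, hle⟩ := mk_u π hfpf hinv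
    have hmem : sSup {s : ℝ | ∃ f : 𝒳 → ℝ, LipschitzWith 1 f ∧ s = ∑ i, sgn u i * f (X i)}
        ∈ {r : ℝ | ∃ u : Fin n → Bool, (∑ i, sgn u i = 0) ∧
          r = sSup {s : ℝ | ∃ f : 𝒳 → ℝ, LipschitzWith 1 f ∧ s = ∑ i, sgn u i * f (X i)}} :=
      ⟨u, hbal, rfl⟩
    refine (csInf_le hLHSbdd hmem).trans ?_
    apply csSup_le ⟨0, h0mem u⟩
    rintro s ⟨f, hf, rfl⟩
    exact hle f hf
  · -- min over matchings ≤ min over assignments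
    apply le_csInf hLHSne
    rintro r ⟨u, hbal, rfl⟩
    obtain ⟨k, E, hE1, hE2⟩ := Stmt6Aux.pairing u hbal
    set x : Fin k → 𝒳 := fun j => X (E (Sum.inl j)) with hx
    set y0 : Fin k → 𝒳 := fun j => X (E (Sum.inr j)) with hy0def
    obtain ⟨σ, -, hσ⟩ := Finset.exists_min_image (Finset.univ : Finset (Equiv.Perm (Fin k)))
      (fun σ => ∑ i, dist (x i) (y0 (σ i))) ⟨1, Finset.mem_univ 1⟩
    set y : Fin k → 𝒳 := fun j => y0 (σ j) with hy
    have H : ∀ π : Equiv.Perm (Fin k),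
        ∑ i, dist (x i) (y i) ≤ ∑ i, dist (x (π i)) (y i) := by
      intro π
      have h1 : ∑ i, dist (x (π i)) (y i) = ∑ i, dist (x i) (y0 ((σ * π⁻¹) i)) := by
        rw [← Equiv.sum_comp π (fun i => dist (x i) (y0 ((σ * π⁻¹) i)))]
        apply Finset.sum_congr rfl
        intro i _
        simp [hy, Equiv.Perm.mul_apply]
      rw [h1]
      exact hσ _ (Finset.mem_univ _)
    obtain ⟨f, hf, hfd⟩ := Stmt6Aux.exists_dual x y H
    have hval : ∑ i, sgn u i * f (X i) = ∑ j, f (x j) - ∑ j, f (y0 j) :=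
      Stmt6Aux.value_eq u E hE1 hE2 (fun i => f (X i))
    have hy0sum : ∑ j, f (y j) = ∑ j, f (y0 j) := Equiv.sum_comp σ (fun j => f (y0 j))
    have hs0 : ∑ j, dist (x j) (y j) ≤ ∑ i, sgn u i * f (X i) := by
      rw [hval, ← hy0sum, ← Finset.sum_sub_distrib]
      refine Finset.sum_le_sum fun j _ => ?_
      have := hfd j
      linarith
    have hrge : ∑ j, dist (x j) (y j)
        ≤ sSup {s : ℝ | ∃ f : 𝒳 → ℝ, LipschitzWith 1 f ∧ s = ∑ i, sgn u i * f (X i)} :=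
      hs0.trans (le_csSup (hbdd u hbal) ⟨f, hf, rfl⟩)
    -- build the perfect matching
    set τ : Equiv.Perm (Fin k ⊕ Fin k) :=
      { toFun := Sum.elim (fun j => Sum.inr (σ j)) (fun j' => Sum.inl (σ.symm j')),
        invFun := Sum.elim (fun j => Sum.inr (σ j)) (fun j' => Sum.inl (σ.symm j')),
        left_inv := by rintro (j | j) <;> simp,
        right_inv := by rintro (j | j) <;> simp } with hτ
    have hτinl : ∀ j, τ (Sum.inl j) = Sum.inr (σ j) := fun j => rfl
    have hτinr : ∀ j, τ (Sum.inr j) = Sum.inl (σ.symm j) := fun j => rfl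
    set πM : Equiv.Perm (Fin n) := E.permCongr τ with hπM
    have hfpfM : ∀ i, πM i ≠ i := by
      intro i h
      rw [hπM, Equiv.permCongr_apply] at h
      have h2 : τ (E.symm i) = E.symm i := by
        apply E.injective
        rw [h, Equiv.apply_symm_apply]
      cases hz : E.symm i with
      | inl j => rw [hz, hτinl] at h2; simp at h2
      | inr j => rw [hz, hτinr] at h2; simp at h2
    have hinvM : ∀ i, πM (πM i) = i := by
      intro i
      rw [hπM]
      simp only [Equiv.permCongr_apply, Equiv.symm_apply_apply]
      have hττ : ∀ z, τ (τ z) = z := by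
        rintro (j | j)
        · rw [hτinl, hτinr]; simp
        · rw [hτinr, hτinl]; simp
      rw [hττ, Equiv.apply_symm_apply]
    have hcost : ∑ i, dist (X i) (X (πM i)) = 2 * ∑ j, dist (x j) (y j) := by
      have h1 : ∑ i, dist (X i) (X (πM i)) = ∑ z, dist (X (E z)) (X (E (τ z))) := by
        rw [← Equiv.sum_comp E (fun i => dist (X i) (X (πM i)))]
        apply Finset.sum_congr rfl
        intro z _
        rw [hπM]
        simp only [Equiv.permCongr_apply, Equiv.symm_apply_apply]
      rw [h1, Fintype.sum_sum_type]
      have h2 : ∑ j, dist (X (E (Sum.inl j))) (X (E (τ (Sum.inl j))))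
          = ∑ j, dist (x j) (y j) := by
        apply Finset.sum_congr rfl
        intro j _
        rw [hτinl]
      have h3 : ∑ j, dist (X (E (Sum.inr j))) (X (E (τ (Sum.inr j))))
          = ∑ j, dist (x j) (y j) := by
        have ha : ∀ j, dist (X (E (Sum.inr j))) (X (E (τ (Sum.inr j))))
            = dist (y0 j) (x (σ.symm j)) := by
          intro j
          rw [hτinr]
        rw [Finset.sum_congr rfl (fun j _ => ha j),
          ← Equiv.sum_comp σ (fun j => dist (y0 j) (x (σ.symm j)))]
        apply Finset.sum_congr rfl
        intro j _
        simp only [Equiv.symm_apply_apply]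
        rw [dist_comm]
      rw [h2, h3]
      ring
    have hcmem : (1 / 2 : ℝ) * ∑ i, dist (X i) (X (πM i))
        ∈ {c : ℝ | ∃ π : Equiv.Perm (Fin n), (∀ i, π i ≠ i) ∧
          (∀ i, π (π i) = i) ∧ c = (1 / 2) * ∑ i, dist (X i) (X (π i))} :=
      ⟨πM, hfpfM, hinvM, rfl⟩
    refine (csInf_le hRHSbdd hcmem).trans ?_
    rw [hcost]
    calc (1/2 : ℝ) * (2 * ∑ j, dist (x j) (y j)) = ∑ j, dist (x j) (y j) := by ring
      _ ≤ _ := hrge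
end

section
/- Let (𝒳, δ) be a metric space, n even, X_1,…,X_n ∈ 𝒳, u ∈ U, S = {i : u_i = 1} and S^c = {i : u_i = −1}. Then sup over all 1-Lipschitz functions f : 𝒳 → ℝ of Σ_{i=1}^n u_i f(X_i) equals the minimum over all bijections π : S → S^c of Σ_{i ∈ S} δ(X_i, X_{π(i)}). (Kantorovich-type duality: the worst-case Lipschitz imbalance of a fixed balanced assignment equals the minimum-cost bipartite matching between the two groups.) -/
open scoped Classical BigOperators

private lemma inf'_sub_const {α : Type*} (s : Finset α) (h : s.Nonempty) (f : α → ℝ) (a : ℝ) :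
    s.inf' h (fun i => f i - a) = s.inf' h f - a := by
  apply le_antisymm
  · obtain ⟨j, hj, hj'⟩ := Finset.exists_mem_eq_inf' h f
    calc s.inf' h (fun i => f i - a) ≤ f j - a := Finset.inf'_le _ hj
    _ = _ := by rw [hj']
  · apply Finset.le_inf'
    intro j hj
    have := Finset.inf'_le f hj
    linarith

/-- Kantorovich-type duality: for a fixed balanced assignment `u ∈ U`, the worst-case
Lipschitz imbalance `sup_{f 1-Lipschitz} ∑ uᵢ f(Xᵢ)` equals the minimum-cost bipartite
matching (over bijections `π : S → Sᶜ` of the two groups) of the pairwise distances. -/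
theorem stmt7 {𝒳 : Type*} [MetricSpace 𝒳] (n : ℕ) (hne : Even n) (X : Fin n → 𝒳)
    (u : Fin n → Bool) (hu : ∑ i, sgn u i = 0) :
    sSup {s : ℝ | ∃ f : 𝒳 → ℝ, LipschitzWith 1 f ∧ s = ∑ i, sgn u i * f (X i)}
      = sInf {c : ℝ | ∃ π : Fin n → Fin n,
          Set.InjOn π {i | sgn u i = 1} ∧
          (∀ i, sgn u i = 1 → sgn u (π i) = -1) ∧
          c = ∑ i ∈ Finset.univ.filter (fun i => sgn u i = 1),
                dist (X i) (X (π i))} := by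
  set LHS := {s : ℝ | ∃ f : 𝒳 → ℝ, LipschitzWith 1 f ∧ s = ∑ i, sgn u i * f (X i)} with hLHS
  set RHS := {c : ℝ | ∃ π : Fin n → Fin n,
          Set.InjOn π {i | sgn u i = 1} ∧
          (∀ i, sgn u i = 1 → sgn u (π i) = -1) ∧
          c = ∑ i ∈ Finset.univ.filter (fun i => sgn u i = 1),
                dist (X i) (X (π i))} with hRHS
  set S : Finset (Fin n) := Finset.univ.filter (fun i => sgn u i = 1) with hSdef
  set T : Finset (Fin n) := Finset.univ.filter (fun i => sgn u i = -1) with hTdef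
  have hsgn : ∀ i, sgn u i = 1 ∨ sgn u i = -1 := by
    intro i; unfold sgn; by_cases h : u i <;> simp [h]
  have hmemS : ∀ i, i ∈ S ↔ sgn u i = 1 := by intro i; simp [hSdef]
  have hmemT : ∀ i, i ∈ T ↔ sgn u i = -1 := by intro i; simp [hTdef]
  have hTnotS : ∀ i, sgn u i = -1 ↔ ¬ (sgn u i = 1) := by
    intro i
    constructor
    · intro h h1; rw [h1] at h; norm_num at h
    · intro h; rcases hsgn i with h1 | h1
      · exact absurd h1 h
      · exact h1
  have hTc : T = Finset.univ.filter (fun i => ¬ (sgn u i = 1)) := by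
    rw [hTdef]
    apply Finset.filter_congr
    intro i _
    simpa using hTnotS i
  -- splitting of signed sums
  have hsplit : ∀ g : Fin n → ℝ, ∑ i, sgn u i * g i = ∑ i ∈ S, g i - ∑ j ∈ T, g j := by
    intro g
    rw [← Finset.sum_filter_add_sum_filter_not Finset.univ (fun i => sgn u i = 1)
      (fun i => sgn u i * g i)]
    rw [← hSdef, ← hTc]
    have h1 : ∑ i ∈ S, sgn u i * g i = ∑ i ∈ S, g i := by
      apply Finset.sum_congr rfl
      intro i hi; rw [(hmemS i).mp hi, one_mul]
    have h2 : ∑ i ∈ T, sgn u i * g i = -∑ i ∈ T, g i := by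
      rw [← Finset.sum_neg_distrib]
      apply Finset.sum_congr rfl
      intro i hi; rw [(hmemT i).mp hi]; ring
    rw [h1, h2]; ring
  have hcard : S.card = T.card := by
    have h1 := hsplit (fun _ => 1)
    simp only [mul_one, Finset.sum_const, nsmul_eq_mul] at h1
    rw [hu] at h1
    have : (S.card : ℝ) = T.card := by linarith
    exact_mod_cast this
  -- the "easy" direction: every element of LHS is ≤ every element of RHS
  have heasy : ∀ s ∈ LHS, ∀ c ∈ RHS, s ≤ c := by
    intro s hs c hc
    obtain ⟨f, hf, rfl⟩ := hs
    obtain ⟨π, hπinj, hπmaps, rfl⟩ := hc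
    have hSset : {i | sgn u i = 1} = (↑S : Set (Fin n)) := by
      ext i; simp [hmemS i]
    have hinj : Set.InjOn π ↑S := by rw [← hSset]; exact hπinj
    have himage : S.image π = T := by
      apply Finset.eq_of_subset_of_card_le
      · intro j hj
        obtain ⟨i, hi, rfl⟩ := Finset.mem_image.mp hj
        exact (hmemT _).mpr (hπmaps i ((hmemS i).mp hi))
      · rw [Finset.card_image_of_injOn hinj, hcard]
    have hTsum : ∑ j ∈ T, f (X j) = ∑ i ∈ S, f (X (π i)) := by
      rw [← himage, Finset.sum_image (fun x hx y hy h => hinj hx hy h)]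
    rw [hsplit (fun i => f (X i)), hTsum, ← Finset.sum_sub_distrib, ← hSdef]
    apply Finset.sum_le_sum
    intro i _
    have := hf.dist_le_mul (X i) (X (π i))
    rw [Real.dist_eq, NNReal.coe_one, one_mul] at this
    have := abs_le.mp this
    linarith [this.1, this.2]
  -- degenerate case: S = ∅ forces n = 0
  by_cases hSne : S.Nonempty
  case neg =>
    -- then T is also empty, so `Fin n` is empty and both sets are `{0}`
    have hS : S = ∅ := Finset.not_nonempty_iff_eq_empty.mp hSne
    have hT : T = ∅ := Finset.card_eq_zero.mp (hcard ▸ (by rw [hS, Finset.card_empty]))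
    haveI : IsEmpty (Fin n) := by
      constructor
      intro i
      rcases hsgn i with h | h
      · exact absurd ((hmemS i).mpr h) (by rw [hS]; exact Finset.notMem_empty i)
      · exact absurd ((hmemT i).mpr h) (by rw [hT]; exact Finset.notMem_empty i)
    have hL : LHS = {0} := by
      apply Set.eq_singleton_iff_unique_mem.mpr
      constructor
      · exact ⟨fun _ => 0, by simpa using (LipschitzWith.const (0:ℝ)).weaken (zero_le_one), by simp⟩
      · rintro s ⟨f, hf, rfl⟩; simp
    have hR : RHS = {0} := by
      apply Set.eq_singleton_iff_unique_mem.mpr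
      constructor
      · refine ⟨id, ?_, ?_, ?_⟩
        · intro x hx; exact (IsEmpty.elim ‹_› x)
        · intro i; exact (IsEmpty.elim ‹_› i)
        · simp
      · rintro c ⟨π, h1, h2, rfl⟩; simp
    rw [hL, hR, csSup_singleton, csInf_singleton]
  -- main case
  have hTne : T.Nonempty := by
    rw [← Finset.card_pos, ← hcard, Finset.card_pos]; exact hSne
  -- cost matrix and bounds
  set c : Fin n → Fin n → ℝ := fun i j => dist (X i) (X j) with hcdef
  have hSTne : (S ×ˢ T).Nonempty := hSne.product hTne
  set C : ℝ := (S ×ˢ T).sup' hSTne (fun p => c p.1 p.2) with hCdef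
  have hC : ∀ i ∈ S, ∀ j ∈ T, c i j ≤ C := by
    intro i hi j hj
    exact Finset.le_sup' (fun p : Fin n × Fin n => c p.1 p.2) (Finset.mk_mem_product hi hj)
  have hC0 : 0 ≤ C := by
    obtain ⟨p, hp⟩ := hSTne
    have h1 : (0:ℝ) ≤ c p.1 p.2 := dist_nonneg
    exact h1.trans (Finset.le_sup' (fun p : Fin n × Fin n => c p.1 p.2) hp)
  set B : ℝ := C + 1 with hBdef
  -- the compact box of potentials
  set K : Set (Fin n → ℝ) := Set.univ.pi (fun _ => Set.Icc (0:ℝ) B) with hKdef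
  have hKmem : ∀ β : Fin n → ℝ, β ∈ K ↔ ∀ j, 0 ≤ β j ∧ β j ≤ B := by
    intro β
    simp [hKdef, Set.mem_pi, Set.mem_Icc, Pi.le_def, forall_and]
  have hKcpt : IsCompact K := isCompact_univ_pi (fun _ => isCompact_Icc)
  have hKne' : K.Nonempty := ⟨fun _ => 0, by rw [hKmem]; intro j; constructor <;> [rfl; linarith]⟩
  -- the dual objective
  set A : Fin n → (Fin n → ℝ) → ℝ := fun i β => T.inf' hTne (fun j => c i j + β j) with hAdef
  set G : (Fin n → ℝ) → ℝ := fun β => (∑ i ∈ S, A i β) - ∑ j ∈ T, β j with hGdef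
  have hGcont : Continuous G := by
    apply Continuous.sub
    · apply continuous_finset_sum
      intro i _
      exact Continuous.finset_inf'_apply hTne (fun j _ => continuous_const.add (continuous_apply j))
    · exact continuous_finset_sum _ (fun j _ => continuous_apply j)
  obtain ⟨β₀, hβ₀K, hβ₀max⟩ := hKcpt.exists_isMaxOn hKne' hGcont.continuousOn
  -- normalize so that the minimum over T is 0
  set μ : ℝ := T.inf' hTne β₀ with hμdef
  obtain ⟨j₀, hj₀T, hj₀⟩ := Finset.exists_mem_eq_inf' hTne β₀
  have hμ0 : 0 ≤ μ := by rw [hμdef, hj₀]; exact ((hKmem β₀).mp hβ₀K j₀).1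
  set β : Fin n → ℝ := fun j => if j ∈ T then β₀ j - μ else 0 with hβdef
  have hβT : ∀ j ∈ T, β j = β₀ j - μ := by intro j hj; simp [hβdef, hj]
  have hβK : β ∈ K := by
    rw [hKmem]
    intro j
    by_cases hj : j ∈ T
    · rw [hβT j hj]
      have h1 : μ ≤ β₀ j := Finset.inf'_le _ hj
      have h2 := ((hKmem β₀).mp hβ₀K j).2
      constructor <;> linarith
    · simp only [hβdef, if_neg hj]; constructor <;> [rfl; linarith]
  have hβj₀ : β j₀ = 0 := by rw [hβT j₀ hj₀T, ← hj₀]; ring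
  have hAshift : ∀ i, A i β = A i β₀ - μ := by
    intro i
    have : A i β = T.inf' hTne (fun j => (c i j + β₀ j) - μ) := by
      apply Finset.inf'_congr hTne rfl
      intro j hj
      rw [hβT j hj]; ring
    rw [this, inf'_sub_const]
  have hβmax : ∀ x ∈ K, G x ≤ G β := by
    have hGβ : G β = G β₀ := by
      simp only [hGdef]
      have h1 : ∑ i ∈ S, A i β = (∑ i ∈ S, A i β₀) - S.card * μ := by
        rw [Finset.sum_congr rfl (fun i _ => hAshift i), Finset.sum_sub_distrib]
        simp [mul_comm]
      have h2 : ∑ j ∈ T, β j = (∑ j ∈ T, β₀ j) - T.card * μ := by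
        rw [Finset.sum_congr rfl (fun j hj => hβT j hj), Finset.sum_sub_distrib]
        simp [mul_comm]
      rw [h1, h2, hcard]; ring
    intro x hx
    rw [hGβ]
    exact hβ₀max hx
  -- tight edges
  set Tight : Fin n → Finset (Fin n) := fun i => T.filter (fun j => c i j + β j = A i β)
    with hTightdef
  have hTightT : ∀ i, Tight i ⊆ T := fun i => Finset.filter_subset _ _
  have hAle : ∀ i, ∀ j ∈ T, A i β ≤ c i j + β j := by
    intro i j hj
    exact Finset.inf'_le _ hj
  -- Hall's condition for the tight bipartite graph
  have hHall : ∀ (s : Finset {x // x ∈ S}), s.card ≤ (s.biUnion (fun i => Tight i.1)).card := by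
    intro s
    by_contra hcon
    push_neg at hcon
    set N : Finset (Fin n) := s.biUnion (fun i => Tight i.1) with hNdef
    have hNT : N ⊆ T := by
      intro j hj
      obtain ⟨i, _, hji⟩ := Finset.mem_biUnion.mp hj
      exact hTightT _ hji
    have hsne : s.Nonempty := by
      rw [← Finset.card_pos]
      omega
    -- the minimal slack of non-tight edges
    set slack : {x // x ∈ S} → ℝ := fun i =>
      if h : (T \ Tight i.1).Nonempty then
        (T \ Tight i.1).inf' h (fun j => c i.1 j + β j - A i.1 β) else 1 with hslackdef
    have hslackpos : ∀ i, 0 < slack i := by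
      intro i
      rw [hslackdef]
      dsimp only
      split_ifs with h
      · obtain ⟨j, hj, hjval⟩ := Finset.exists_mem_eq_inf' h
          (fun j => c i.1 j + β j - A i.1 β)
        rw [hjval]
        have hjT : j ∈ T := (Finset.mem_sdiff.mp hj).1
        have hjnt : j ∉ Tight i.1 := (Finset.mem_sdiff.mp hj).2
        have h1 := hAle i.1 j hjT
        have h2 : c i.1 j + β j ≠ A i.1 β := fun hEq =>
          hjnt (Finset.mem_filter.mpr ⟨hjT, hEq⟩)
        rcases lt_or_eq_of_le h1 with h3 | h3
        · linarith
        · exact absurd h3.symm h2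
      · norm_num
    set ε : ℝ := min 1 (s.inf' hsne slack) with hεdef
    have hεpos : 0 < ε := by
      apply lt_min one_pos
      rw [Finset.lt_inf'_iff]
      exact fun i _ => hslackpos i
    have hε1 : ε ≤ 1 := min_le_left _ _
    have hεslack : ∀ i ∈ s, ε ≤ slack i := fun i hi =>
      (min_le_right _ _).trans (Finset.inf'_le _ hi)
    -- the perturbed potential
    set β' : Fin n → ℝ := fun j => if j ∈ N then β j + ε else β j with hβ'def
    have hβ'ge : ∀ j, β j ≤ β' j := by
      intro j
      rw [hβ'def]
      dsimp only
      split_ifs <;> linarith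
    have hβ'K : β' ∈ K := by
      rw [hKmem]
      intro j
      rw [hβ'def]
      dsimp only
      split_ifs with hj
      · obtain ⟨i, his, hji⟩ := Finset.mem_biUnion.mp hj
        have htv : c i.1 j + β j = A i.1 β := (Finset.mem_filter.mp hji).2
        have h1 : A i.1 β ≤ c i.1 j₀ + β j₀ := hAle _ _ hj₀T
        rw [hβj₀, add_zero] at h1
        have h2 : c i.1 j₀ ≤ C := hC _ i.prop _ hj₀T
        have h3 : 0 ≤ c i.1 j := dist_nonneg
        have h4 := ((hKmem β).mp hβK j).1
        rw [hBdef]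
        constructor <;> linarith
      · exact (hKmem β).mp hβK j
    -- the objective strictly increases: contradiction
    have hble : ∀ i ∈ S, A i β ≤ A i β' := by
      intro i _
      apply Finset.le_inf'
      intro j hj
      have := hAle i j hj
      have := hβ'ge j
      linarith
    have hcle : ∀ i ∈ s, A i.1 β + ε ≤ A i.1 β' := by
      intro i hi
      apply Finset.le_inf'
      intro j hj
      by_cases hjt : j ∈ Tight i.1
      · have hjN : j ∈ N := Finset.mem_biUnion.mpr ⟨i, hi, hjt⟩
        have htv : c i.1 j + β j = A i.1 β := (Finset.mem_filter.mp hjt).2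
        have : β' j = β j + ε := by rw [hβ'def]; dsimp only; rw [if_pos hjN]
        linarith
      · have hjs : j ∈ T \ Tight i.1 := Finset.mem_sdiff.mpr ⟨hj, hjt⟩
        have hsl : slack i ≤ c i.1 j + β j - A i.1 β := by
          rw [hslackdef]
          dsimp only
          rw [dif_pos ⟨j, hjs⟩]
          exact Finset.inf'_le _ hjs
        have h1 := hεslack i hi
        have h2 := hβ'ge j
        linarith
    -- sums
    set s' : Finset (Fin n) := s.image Subtype.val with hs'def
    have hs'S : s' ⊆ S := by
      intro i hi
      obtain ⟨x, _, rfl⟩ := Finset.mem_image.mp hi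
      exact x.prop
    have hs'card : s'.card = s.card := Finset.card_image_of_injective _ Subtype.val_injective
    have hsumS : (∑ i ∈ S, A i β) + ε * s.card ≤ ∑ i ∈ S, A i β' := by
      have hpt : ∀ i ∈ S, A i β + (if i ∈ s' then ε else 0) ≤ A i β' := by
        intro i hi
        by_cases h : i ∈ s'
        · rw [if_pos h]
          obtain ⟨x, hx, rfl⟩ := Finset.mem_image.mp h
          exact hcle x hx
        · rw [if_neg h, add_zero]
          exact hble i hi
      have hite : ∑ i ∈ S, (if i ∈ s' then ε else 0) = ε * s.card := by
        rw [Finset.sum_ite_mem, Finset.inter_eq_right.mpr hs'S, Finset.sum_const,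
          nsmul_eq_mul, hs'card, mul_comm]
      have h2 := Finset.sum_le_sum hpt
      rw [Finset.sum_add_distrib, hite] at h2
      linarith [h2]
    have hsumT : ∑ j ∈ T, β' j = (∑ j ∈ T, β j) + ε * N.card := by
      have hpt : ∀ j ∈ T, β' j = β j + (if j ∈ N then ε else 0) := by
        intro j _
        rw [hβ'def]
        dsimp only
        split_ifs <;> simp
      have hite : ∑ j ∈ T, (if j ∈ N then ε else 0) = ε * N.card := by
        rw [Finset.sum_ite_mem, Finset.inter_eq_right.mpr hNT, Finset.sum_const,
          nsmul_eq_mul, mul_comm]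
      rw [Finset.sum_congr rfl hpt, Finset.sum_add_distrib, hite]
    have hGβ'v : G β' = (∑ i ∈ S, A i β') - ∑ j ∈ T, β' j := rfl
    have hGβv : G β = (∑ i ∈ S, A i β) - ∑ j ∈ T, β j := rfl
    have hmax := hβmax β' hβ'K
    have hcard' : (N.card : ℝ) + 1 ≤ s.card := by exact_mod_cast hcon
    nlinarith [hεpos, hsumS, hsumT, hmax, hcard']
  obtain ⟨F, hFinj, hFmem⟩ :=
    (Finset.all_card_le_biUnion_card_iff_exists_injective (fun i : {x // x ∈ S} => Tight i.1)).mp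
      hHall
  -- build the matching π
  set π : Fin n → Fin n := fun i => if h : i ∈ S then F ⟨i, h⟩ else i with hπdef
  have hπS : ∀ i (h : i ∈ S), π i = F ⟨i, h⟩ := by intro i h; simp [hπdef, h]
  have hπtight : ∀ i (h : i ∈ S), π i ∈ Tight i := by
    intro i h; rw [hπS i h]; exact hFmem ⟨i, h⟩
  have hπT : ∀ i ∈ S, π i ∈ T := fun i h => hTightT i (hπtight i h)
  have hπinj : Set.InjOn π {i | sgn u i = 1} := by
    intro x hx y hy hxy
    have hxS : x ∈ S := (hmemS x).mpr hx
    have hyS : y ∈ S := (hmemS y).mpr hy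
    rw [hπS x hxS, hπS y hyS] at hxy
    exact congrArg Subtype.val (hFinj hxy)
  have hπmaps : ∀ i, sgn u i = 1 → sgn u (π i) = -1 := by
    intro i hi
    exact (hmemT _).mp (hπT i ((hmemS i).mpr hi))
  -- the cost of the matching equals G β
  have hcost : ∑ i ∈ S, dist (X i) (X (π i)) = G β := by
    have hterm : ∀ i ∈ S, dist (X i) (X (π i)) = A i β - β (π i) := by
      intro i hi
      have htv : c i (π i) + β (π i) = A i β := (Finset.mem_filter.mp (hπtight i hi)).2
      have hcc : c i (π i) = dist (X i) (X (π i)) := rfl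
      linarith
    have hinjS : Set.InjOn π ↑S := by
      intro x hx y hy h
      exact hπinj ((hmemS x).mp hx) ((hmemS y).mp hy) h
    have himg : S.image π = T := by
      apply Finset.eq_of_subset_of_card_le
      · intro j hj
        obtain ⟨i, hi, rfl⟩ := Finset.mem_image.mp hj
        exact hπT i hi
      · rw [Finset.card_image_of_injOn hinjS, hcard]
    have hsum : ∑ i ∈ S, β (π i) = ∑ j ∈ T, β j := by
      rw [← himg, Finset.sum_image (fun x hx y hy h => hinjS hx hy h)]
    rw [Finset.sum_congr rfl hterm, Finset.sum_sub_distrib, hsum]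
  have hcostmem : (∑ i ∈ S, dist (X i) (X (π i))) ∈ RHS := ⟨π, hπinj, hπmaps, rfl⟩
  -- the Lipschitz witness
  set f : 𝒳 → ℝ := fun x => T.inf' hTne (fun j => dist x (X j) + β j) with hfdef
  have hflip : LipschitzWith 1 f := by
    have key : ∀ x y : 𝒳, f x ≤ f y + dist x y := by
      intro x y
      obtain ⟨j, hj, hjval⟩ := Finset.exists_mem_eq_inf' hTne (fun j => dist y (X j) + β j)
      have h1 : f x ≤ dist x (X j) + β j := Finset.inf'_le _ hj
      have h2 := dist_triangle x y (X j)
      have h3 : f y = dist y (X j) + β j := hjval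
      linarith
    apply LipschitzWith.of_dist_le_mul
    intro x y
    rw [NNReal.coe_one, one_mul, Real.dist_eq, abs_le]
    have h1 := key x y
    have h2 := key y x
    have h3 := dist_comm x y
    constructor <;> linarith
  have hfS : ∀ i ∈ S, f (X i) = A i β := by intro i _; rfl
  have hfT : ∀ j ∈ T, f (X j) ≤ β j := by
    intro j hj
    calc f (X j) ≤ dist (X j) (X j) + β j := Finset.inf'_le _ hj
    _ = β j := by rw [dist_self, zero_add]
  have hsmem : (∑ i, sgn u i * f (X i)) ∈ LHS := ⟨f, hflip, rfl⟩
  have hsge : G β ≤ ∑ i, sgn u i * f (X i) := by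
    rw [hsplit (fun i => f (X i))]
    have hGβval : G β = ∑ i ∈ S, A i β - ∑ j ∈ T, β j := rfl
    have h1 : ∑ i ∈ S, f (X i) = ∑ i ∈ S, A i β :=
      Finset.sum_congr rfl (fun i hi => hfS i hi)
    have h2 : ∑ j ∈ T, f (X j) ≤ ∑ j ∈ T, β j :=
      Finset.sum_le_sum (fun j hj => hfT j hj)
    rw [h1]
    linarith
  -- conclude
  have hbddB : BddBelow RHS := by
    refine ⟨0, ?_⟩
    rintro r ⟨π', h1, h2, rfl⟩
    exact Finset.sum_nonneg (fun i _ => dist_nonneg)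
  have hbddA : BddAbove LHS :=
    ⟨_, fun s hs => heasy s hs _ hcostmem⟩
  apply le_antisymm
  · apply csSup_le ⟨_, hsmem⟩
    intro s hs
    exact le_csInf ⟨_, hcostmem⟩ (fun cc hcc => heasy s hs cc hcc)
  · calc sInf RHS ≤ ∑ i ∈ S, dist (X i) (X (π i)) := csInf_le hbddB hcostmem
    _ = G β := hcost
    _ ≤ ∑ i, sgn u i * f (X i) := hsge
    _ ≤ sSup LHS := le_csSup hbddA hsmem
end

section
/- Let (𝒳, δ) be a metric space, δ₀ > 0, n even, X_1,…,X_n ∈ 𝒳, u ∈ U, S = {i : u_i = 1} and S^c = {i : u_i = −1}. Then sup over all functions f : 𝒳 → ℝ that are 1-Lipschitz and satisfy |f(x)| ≤ δ₀ for all x ∈ 𝒳 of Σ_{i=1}^n u_i f(X_i) equals the minimum over all subsets A ⊆ S and injections π : A → S^c of [ Σ_{i ∈ A} δ(X_i, X_{π(i)}) + δ₀ · (n − 2|A|) ]. (Duality for pairwise matching with the option of leaving subjects unmatched at penalty δ₀ per unmatched subject.) -/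
open scoped Classical BigOperators



section walk
variable {ι : Type*}

/-- cost of the first `k` steps of the walk `p` under edge weights `w`. -/
def wCost (w : ι → ι → ℝ) (k : ℕ) (p : ℕ → ι) : ℝ :=
  ∑ t ∈ Finset.range k, w (p t) (p (t + 1))

lemma wCost_splice (w : ι → ι → ℝ) (p : ℕ → ι) {s t k : ℕ}
    (hst : s < t) (htk : t ≤ k) (hpt : p s = p t) :
    wCost w (k - (t - s)) (fun r => if r < s then p r else p (r + (t - s)))
      + wCost w (t - s) (fun r => p (s + r)) = wCost w k p := by
  set d := t - s with hd
  have hds : s ≤ k - d := by omega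
  have h1 : wCost w (t - s) (fun r => p (s + r)) = ∑ r ∈ Finset.Ico s t, w (p r) (p (r + 1)) := by
    rw [Finset.sum_Ico_eq_sum_range]
    refine Finset.sum_congr rfl fun r hr => ?_
    have : s + r + 1 = s + (r + 1) := by omega
    rw [this]
  have h2 : wCost w (k - d) (fun r => if r < s then p r else p (r + d))
      = (∑ r ∈ Finset.Ico 0 s, w (p r) (p (r + 1)))
        + ∑ r ∈ Finset.Ico t k, w (p r) (p (r + 1)) := by
    have hsplit : wCost w (k - d) (fun r => if r < s then p r else p (r + d))
        = (∑ r ∈ Finset.Ico 0 s, w ((fun r => if r < s then p r else p (r + d)) r)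
            ((fun r => if r < s then p r else p (r + d)) (r + 1)))
          + ∑ r ∈ Finset.Ico s (k - d), w ((fun r => if r < s then p r else p (r + d)) r)
            ((fun r => if r < s then p r else p (r + d)) (r + 1)) := by
      rw [wCost, Finset.range_eq_Ico, ← Finset.sum_Ico_consecutive _ (Nat.zero_le s) hds]
    rw [hsplit]
    congr 1
    · refine Finset.sum_congr rfl fun r hr => ?_
      simp only [Finset.mem_Ico] at hr
      have hr1 : r < s := hr.2
      by_cases h : r + 1 < s
      · simp [hr1, h]
      · have hrs : r + 1 = s := by omega
        have hss : ¬ s < s := lt_irrefl s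
        have hsd : s + d = t := by omega
        simp only [hr1, if_true, if_pos, if_neg h, hrs, hss, if_false, hsd, ← hpt]
    · rw [Finset.sum_Ico_eq_sum_range, Finset.sum_Ico_eq_sum_range]
      have hlen : k - d - s = k - t := by omega
      rw [hlen]
      refine Finset.sum_congr rfl fun r hr => ?_
      have h1 : ¬ s + r < s := by omega
      have h2 : ¬ s + r + 1 < s := by omega
      have e1 : s + r + d = t + r := by omega
      have e2 : s + r + 1 + d = t + r + 1 := by omega
      simp only [h1, h2, if_neg, if_false, e1, e2]
  rw [h1, h2, wCost, Finset.range_eq_Ico]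
  rw [← Finset.sum_Ico_consecutive (fun r => w (p r) (p (r+1))) (Nat.zero_le s) (le_of_lt (lt_of_lt_of_le hst htk))]
  rw [← Finset.sum_Ico_consecutive (fun r => w (p r) (p (r+1))) (le_of_lt hst) htk]
  ring

end walk

section closed
variable {ι : Type*} [Fintype ι] [DecidableEq ι]

lemma closed_nonneg (C : ι → ι → ℝ)
    (hopt : ∀ π : Equiv.Perm ι, ∑ i, C i i ≤ ∑ i, C i (π i)) :
    ∀ k (p : ℕ → ι), p k = p 0 → 0 ≤ wCost (fun i j => C i j - C i i) k p := by
  intro k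
  induction k using Nat.strong_induction_on with
  | _ k IH =>
  intro p hclosed
  rcases Nat.eq_zero_or_pos k with hk0 | hkpos
  · subst hk0; simp [wCost]
  set w : ι → ι → ℝ := fun i j => C i j - C i i with hw
  by_cases hrep : ∃ s t, s < t ∧ t ≤ k ∧ t - s < k ∧ p s = p t
  · obtain ⟨s, t, hst, htk, htsk, hpt⟩ := hrep
    have hsplice := wCost_splice w p hst htk hpt
    set d := t - s with hd
    have hinner : 0 ≤ wCost w d (fun r => p (s + r)) := by
      apply IH d (by omega)
      show p (s + d) = p (s + 0)
      have : s + d = t := by omega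
      rw [this, Nat.add_zero, hpt]
    have houter : 0 ≤ wCost w (k - d) (fun r => if r < s then p r else p (r + d)) := by
      apply IH (k - d) (by omega)
      have hkd : ¬ (k - d) < s := by omega
      have h0 : (if (0:ℕ) < s then p 0 else p (0 + d)) = p 0 := by
        by_cases h0s : 0 < s
        · simp [h0s]
        · have hs0 : s = 0 := by omega
          have : (0:ℕ) + d = t := by omega
          simp [h0s, this, ← hpt, hs0]
      show (if (k-d) < s then p (k-d) else p ((k-d) + d)) = _
      rw [if_neg hkd, h0]
      have : k - d + d = k := by omega
      rw [this, hclosed]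
    linarith [hsplice]
  · -- p is injective on [0, k)
    have hinj : ∀ a b, a < k → b < k → p a = p b → a = b := by
      intro a b ha hb hab
      by_contra hne
      rcases Nat.lt_or_ge a b with h | h
      · exact hrep ⟨a, b, h, le_of_lt hb, by omega, hab⟩
      · have h' : b < a := by omega
        exact hrep ⟨b, a, h', le_of_lt ha, by omega, hab.symm⟩
    set l : List ι := (List.range k).map p with hl
    have hlen : l.length = k := by simp [hl]
    have hnodup : l.Nodup := by
      refine List.Nodup.map_on ?_ List.nodup_range
      intro a ha b hb hab
      exact hinj a b (List.mem_range.mp ha) (List.mem_range.mp hb) hab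
    set π := l.formPerm with hπ
    have hgetl : ∀ r (hr : r < l.length), l[r] = p r := by
      intro r hr
      simp [hl]
    have key1 : ∀ r, r < k → π (p r) = p ((r + 1) % k) := by
      intro r hr
      have hrl : r < l.length := by rw [hlen]; exact hr
      have h := List.formPerm_apply_getElem l hnodup r hrl
      rw [hgetl r hrl] at h
      have hml : (r + 1) % l.length < l.length := Nat.mod_lt _ (by rw [hlen]; omega)
      rw [hgetl _ hml] at h
      have hmod : (r + 1) % l.length = (r + 1) % k := by rw [hlen]
      rw [hmod] at h
      exact h
    have key2 : ∀ x, x ∉ l → π x = x := fun x hx => List.formPerm_apply_of_notMem hx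
    have hsum : ∑ i, (C i (π i) - C i i) = wCost w k p := by
      have hzero : ∀ x ∈ Finset.univ, x ∉ l.toFinset → C x (π x) - C x x = 0 := by
        intro x _ hx
        rw [key2 x (by simpa using hx)]
        ring
      rw [← Finset.sum_subset (Finset.subset_univ l.toFinset) hzero]
      have himg : l.toFinset = (Finset.range k).image p := by
        ext x
        simp [hl, List.mem_range]
      rw [himg, Finset.sum_image (fun a ha b hb hab =>
        hinj a b (Finset.mem_range.mp ha) (Finset.mem_range.mp hb) hab)]
      refine Finset.sum_congr rfl fun r hr => ?_
      have hr' : r < k := Finset.mem_range.mp hr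
      rw [key1 r hr']
      have : p ((r + 1) % k) = p (r + 1) := by
        rcases Nat.lt_or_ge (r + 1) k with h | h
        · rw [Nat.mod_eq_of_lt h]
        · have : r + 1 = k := by omega
          rw [this, Nat.mod_self, ← hclosed]
      rw [this]
    have := hopt π
    have hdiff : 0 ≤ ∑ i, (C i (π i) - C i i) := by
      rw [Finset.sum_sub_distrib]
      linarith
    rw [hsum] at hdiff
    exact hdiff

end closed

section bellman
variable {ι : Type*} [Fintype ι] [DecidableEq ι]

/-- set of costs of `k`-step walks starting at `i`. -/
def WSet (w : ι → ι → ℝ) (k : ℕ) (i : ι) : Set ℝ :=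
  {c | ∃ p : ℕ → ι, p 0 = i ∧ c = wCost w k p}

lemma WSet_nonempty (w : ι → ι → ℝ) (k : ℕ) (i : ι) : (WSet w k i).Nonempty :=
  ⟨wCost w k (fun _ => i), fun _ => i, rfl, rfl⟩

lemma WSet_finite (w : ι → ι → ℝ) (k : ℕ) (i : ι) : (WSet w k i).Finite := by
  apply Set.Finite.subset (Set.finite_range
    (fun p : Fin (k+1) → ι => wCost w k (fun t => p ⟨min t k, by omega⟩)))
  rintro c ⟨p, hp0, rfl⟩
  refine ⟨fun t => p t.val, ?_⟩
  unfold wCost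
  refine Finset.sum_congr rfl fun r hr => ?_
  have hr' : r < k := Finset.mem_range.mp hr
  have h1 : min r k = r := by omega
  have h2 : min (r+1) k = r + 1 := by omega
  simp only [h1, h2]

noncomputable def Wmin (w : ι → ι → ℝ) (k : ℕ) (i : ι) : ℝ := sInf (WSet w k i)

lemma Wmin_mem (w : ι → ι → ℝ) (k : ℕ) (i : ι) : Wmin w k i ∈ WSet w k i :=
  (WSet_nonempty w k i).csInf_mem (WSet_finite w k i)

lemma Wmin_le (w : ι → ι → ℝ) (k : ℕ) (i : ι) {c : ℝ} (hc : c ∈ WSet w k i) :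
    Wmin w k i ≤ c :=
  csInf_le (WSet_finite w k i).bddBelow hc

lemma Wmin_prepend (w : ι → ι → ℝ) (k : ℕ) (i j : ι) :
    Wmin w (k + 1) i ≤ w i j + Wmin w k j := by
  obtain ⟨p, hp0, hpc⟩ := Wmin_mem w k j
  set p' : ℕ → ι := fun t => if t = 0 then i else p (t - 1) with hp'
  have hcost : wCost w (k+1) p' = w i j + wCost w k p := by
    unfold wCost
    rw [Finset.sum_range_succ']
    have h1 : ∑ t ∈ Finset.range k, w (p' (t+1)) (p' (t+1+1))
        = ∑ t ∈ Finset.range k, w (p t) (p (t+1)) := by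
      refine Finset.sum_congr rfl fun t _ => ?_
      simp [hp']
    have h2 : w (p' 0) (p' (0+1)) = w i j := by simp [hp', hp0]
    rw [h1, h2]
    ring
  exact Wmin_le w (k+1) i ⟨p', by simp [hp'], by rw [hcost, hpc]⟩

lemma Wmin_succ_le (w : ι → ι → ℝ) (hw0 : ∀ a : ι, w a a = 0) (k : ℕ) (i : ι) :
    Wmin w (k + 1) i ≤ Wmin w k i := by
  obtain ⟨p, hp0, hpc⟩ := Wmin_mem w k i
  set p' : ℕ → ι := fun t => p (min t k) with hp'
  have hcost : wCost w (k+1) p' = wCost w k p := by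
    unfold wCost
    rw [Finset.sum_range_succ]
    have hlast : w (p' k) (p' (k+1)) = 0 := by
      have : p' (k+1) = p k := by simp [hp']
      have h2 : p' k = p k := by simp [hp']
      rw [this, h2, hw0]
    rw [hlast, add_zero]
    refine Finset.sum_congr rfl fun t ht => ?_
    have ht' : t < k := Finset.mem_range.mp ht
    have e1 : min t k = t := by omega
    have e2 : min (t+1) k = t + 1 := by omega
    simp [hp', e1, e2]
  exact Wmin_le w (k+1) i ⟨p', by simp [hp', hp0], by rw [hcost, hpc]⟩

lemma Wmin_anti (w : ι → ι → ℝ) (hw0 : ∀ a : ι, w a a = 0) (i : ι) :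
    ∀ {k k' : ℕ}, k ≤ k' → Wmin w k' i ≤ Wmin w k i := by
  intro k k' h
  induction k' , h using Nat.le_induction with
  | base => exact le_refl _
  | succ m hm ih => exact le_trans (Wmin_succ_le w hw0 m i) ih

end bellman

section potential
variable {ι : Type*} [Fintype ι] [DecidableEq ι]

lemma Wmin_stable (C : ι → ι → ℝ)
    (hopt : ∀ π : Equiv.Perm ι, ∑ i, C i i ≤ ∑ i, C i (π i)) (i : ι) :
    Wmin (fun a b => C a b - C a a) (Fintype.card ι) i
      ≤ Wmin (fun a b => C a b - C a a) (Fintype.card ι + 1) i := by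
  set w : ι → ι → ℝ := fun a b => C a b - C a a with hw
  have hw0 : ∀ a : ι, w a a = 0 := fun a => by simp [hw]
  set N := Fintype.card ι with hN
  obtain ⟨p, hp0, hpc⟩ := Wmin_mem w (N + 1) i
  -- pigeonhole among p 0, ..., p (N+1)
  obtain ⟨x, y, hxy, hpxy⟩ :=
    Fintype.exists_ne_map_eq_of_card_lt (fun t : Fin (N + 2) => p t.val)
      (by simp only [Fintype.card_fin]; omega)
  have hvalne : (x : ℕ) ≠ (y : ℕ) := fun h => hxy (Fin.val_injective h)
  set s := min (x : ℕ) (y : ℕ) with hs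
  set t := max (x : ℕ) (y : ℕ) with ht
  have hst : s < t := by omega
  have htk : t ≤ N + 1 := by
    have := x.isLt; have := y.isLt; omega
  have hpt : p s = p t := by
    rcases le_total (x : ℕ) (y : ℕ) with h | h
    · have : s = (x:ℕ) ∧ t = (y:ℕ) := by omega
      rw [this.1, this.2]; exact hpxy
    · have : s = (y:ℕ) ∧ t = (x:ℕ) := by omega
      rw [this.1, this.2]; exact hpxy.symm
  set d := t - s with hd
  have hsplice := wCost_splice w p hst htk hpt
  have hinner : 0 ≤ wCost w d (fun r => p (s + r)) := by
    apply closed_nonneg C hopt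
    show p (s + d) = p (s + 0)
    have : s + d = t := by omega
    rw [this, Nat.add_zero, hpt]
  have hmem : wCost w (N + 1 - d) (fun r => if r < s then p r else p (r + d))
      ∈ WSet w (N + 1 - d) i := by
    refine ⟨fun r => if r < s then p r else p (r + d), ?_, rfl⟩
    show (if 0 < s then p 0 else p (0 + d)) = i
    by_cases h0s : 0 < s
    · simp [h0s, hp0]
    · have hs0 : s = 0 := by omega
      have hdt : (0:ℕ) + d = t := by omega
      rw [if_neg h0s, hdt, ← hpt, hs0, hp0]
  have h1 : Wmin w (N + 1 - d) i ≤ wCost w (N + 1) p := by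
    refine le_trans (Wmin_le w _ i hmem) ?_
    linarith [hsplice]
  have h2 : Wmin w N i ≤ Wmin w (N + 1 - d) i :=
    Wmin_anti w hw0 i (by omega)
  rw [hpc]
  exact le_trans h2 h1

/-- Dual potentials for an optimal assignment. -/
lemma exists_potential (C : ι → ι → ℝ) (σ₀ : Equiv.Perm ι)
    (hopt : ∀ π : Equiv.Perm ι, ∑ i, C i (σ₀ i) ≤ ∑ i, C i (π i)) :
    ∃ φ ψ : ι → ℝ, (∀ i j, φ i - ψ j ≤ C i j) ∧ (∀ i, φ i = ψ (σ₀ i) + C i (σ₀ i)) := by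
  set C' : ι → ι → ℝ := fun i j => C i (σ₀ j) with hC'
  have hopt' : ∀ π : Equiv.Perm ι, ∑ i, C' i i ≤ ∑ i, C' i (π i) := by
    intro π
    exact hopt (π.trans σ₀)
  set w : ι → ι → ℝ := fun a b => C' a b - C' a a with hw
  have hw0 : ∀ a : ι, w a a = 0 := fun a => by simp [hw]
  set N := Fintype.card ι with hN
  set ψ0 : ι → ℝ := fun i => Wmin w N i with hψ0
  have hpot : ∀ i j, ψ0 i ≤ w i j + ψ0 j := fun i j =>
    le_trans (Wmin_stable C' hopt' i) (Wmin_prepend w N i j)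
  refine ⟨fun i => ψ0 i + C i (σ₀ i), fun j => ψ0 (σ₀.symm j), ?_, ?_⟩
  · intro i j
    have h := hpot i (σ₀.symm j)
    have : w i (σ₀.symm j) = C i j - C i (σ₀ i) := by
      simp [hw, hC']
    rw [this] at h
    show ψ0 i + C i (σ₀ i) - ψ0 (σ₀.symm j) ≤ C i j
    linarith
  · intro i
    simp

end potential


/-- Duality for pairwise matching with the option of leaving subjects unmatched at
penalty `δ₀` each: for a fixed balanced assignment `u ∈ U`, the worst-case imbalance
over functions that are 1-Lipschitz and bounded by `δ₀` equals the minimum over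
partial matchings `π : A → Sᶜ` (with `A ⊆ S`) of the matching cost plus
`δ₀ · (n − 2|A|)`. -/
theorem stmt8 {𝒳 : Type*} [MetricSpace 𝒳] (δ₀ : ℝ) (hδ₀ : 0 < δ₀)
    (n : ℕ) (hne : Even n) (X : Fin n → 𝒳)
    (u : Fin n → Bool) (hu : ∑ i, sgn u i = 0) :
    sSup {s : ℝ | ∃ f : 𝒳 → ℝ, LipschitzWith 1 f ∧ (∀ x, |f x| ≤ δ₀) ∧
        s = ∑ i, sgn u i * f (X i)}
      = sInf {c : ℝ | ∃ (A : Finset (Fin n)) (π : Fin n → Fin n),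
          (∀ i ∈ A, sgn u i = 1) ∧
          Set.InjOn π ↑A ∧
          (∀ i ∈ A, sgn u (π i) = -1) ∧
          c = (∑ i ∈ A, dist (X i) (X (π i))) + δ₀ * ((n : ℝ) - 2 * A.card)} := by
  classical
  set LHS := {s : ℝ | ∃ f : 𝒳 → ℝ, LipschitzWith 1 f ∧ (∀ x, |f x| ≤ δ₀) ∧
        s = ∑ i, sgn u i * f (X i)} with hLHSdef
  set RHS := {c : ℝ | ∃ (A : Finset (Fin n)) (π : Fin n → Fin n),
          (∀ i ∈ A, sgn u i = 1) ∧
          Set.InjOn π ↑A ∧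
          (∀ i ∈ A, sgn u (π i) = -1) ∧
          c = (∑ i ∈ A, dist (X i) (X (π i))) + δ₀ * ((n : ℝ) - 2 * A.card)} with hRHSdef
  set S : Finset (Fin n) := Finset.univ.filter (fun i => u i = true) with hSdef
  set T : Finset (Fin n) := Finset.univ.filter (fun i => ¬ (u i = true)) with hTdef
  have hsgn1 : ∀ i, i ∈ S ↔ sgn u i = 1 := by
    intro i
    simp only [hSdef, Finset.mem_filter, Finset.mem_univ, true_and]
    constructor
    · intro h; simp only [sgn, if_pos h]
    · intro h
      by_contra hc
      simp only [sgn, if_neg hc] at h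
      norm_num at h
  have hsgnT : ∀ i, i ∈ T ↔ sgn u i = -1 := by
    intro i
    simp only [hTdef, Finset.mem_filter, Finset.mem_univ, true_and]
    constructor
    · intro h; simp only [sgn, if_neg h]
    · intro h hc
      simp only [sgn, if_pos hc] at h
      norm_num at h
  have hsplit : ∀ g : Fin n → ℝ, ∑ i, sgn u i * g i = ∑ i ∈ S, g i - ∑ i ∈ T, g i := by
    intro g
    rw [← Finset.sum_filter_add_sum_filter_not Finset.univ (fun i => u i = true)
      (fun i => sgn u i * g i)]
    rw [show Finset.univ.filter (fun i => u i = true) = S from rfl,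
        show Finset.univ.filter (fun i => ¬ (u i = true)) = T from rfl]
    have h1 : ∑ i ∈ S, sgn u i * g i = ∑ i ∈ S, g i := by
      refine Finset.sum_congr rfl fun i hi => ?_
      rw [(hsgn1 i).mp hi, one_mul]
    have h2 : ∑ i ∈ T, sgn u i * g i = - ∑ i ∈ T, g i := by
      rw [← Finset.sum_neg_distrib]
      refine Finset.sum_congr rfl fun i hi => ?_
      rw [(hsgnT i).mp hi]; ring
    rw [h1, h2]; ring
  have hSTn : S.card + T.card = n := by
    rw [hSdef, hTdef, Finset.card_filter_add_card_filter_not, Finset.card_univ,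
      Fintype.card_fin]
  have hcardST : S.card = T.card := by
    have h2 := hsplit (fun _ => (1:ℝ))
    simp only [mul_one, Finset.sum_const, nsmul_eq_mul] at h2
    rw [hu] at h2
    have : (S.card : ℝ) = T.card := by linarith
    exact_mod_cast this
  have hn2 : 2 * S.card = n := by omega
  -- weak duality
  have hweak : ∀ s ∈ LHS, ∀ c ∈ RHS, s ≤ c := by
    rintro s ⟨f, hf, hfb, rfl⟩ c ⟨A, π, hA1, hinj, hA2, rfl⟩
    have hAS : A ⊆ S := fun i hi => (hsgn1 i).mpr (hA1 i hi)
    set B := A.image π with hBdef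
    have hBT : B ⊆ T := by
      intro j hj
      obtain ⟨i, hi, rfl⟩ := Finset.mem_image.mp hj
      exact (hsgnT _).mpr (hA2 i hi)
    have hBcard : B.card = A.card := Finset.card_image_of_injOn hinj
    have hAcard : A.card ≤ S.card := Finset.card_le_card hAS
    rw [hsplit (fun i => f (X i))]
    rw [← Finset.sum_sdiff hAS, ← Finset.sum_sdiff hBT]
    have hBsum : ∑ j ∈ B, f (X j) = ∑ i ∈ A, f (X (π i)) := Finset.sum_image hinj
    have t1 : ∑ i ∈ A, f (X i) - ∑ i ∈ A, f (X (π i)) ≤ ∑ i ∈ A, dist (X i) (X (π i)) := by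
      rw [← Finset.sum_sub_distrib]
      refine Finset.sum_le_sum fun i _ => ?_
      have h := hf.dist_le_mul (X i) (X (π i))
      rw [NNReal.coe_one, one_mul, Real.dist_eq] at h
      exact le_trans (le_abs_self _) h
    have t2 : ∑ i ∈ S \ A, f (X i) ≤ (S \ A).card * δ₀ := by
      refine le_trans (Finset.sum_le_card_nsmul _ _ δ₀ fun i _ => (abs_le.mp (hfb (X i))).2) ?_
      rw [nsmul_eq_mul]
    have t3 : - ∑ j ∈ T \ B, f (X j) ≤ (T \ B).card * δ₀ := by
      rw [← Finset.sum_neg_distrib]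
      refine le_trans (Finset.sum_le_card_nsmul _ _ δ₀ fun i _ => ?_) (le_of_eq (nsmul_eq_mul _ _))
      have := (abs_le.mp (hfb (X i))).1
      linarith
    have hcards : ((S \ A).card : ℝ) * δ₀ + ((T \ B).card : ℝ) * δ₀ = δ₀ * ((n:ℝ) - 2 * A.card) := by
      have e1 : (S \ A).card = S.card - A.card := Finset.card_sdiff_of_subset hAS
      have e2 : (T \ B).card = T.card - B.card := Finset.card_sdiff_of_subset hBT
      have hBle : B.card ≤ T.card := Finset.card_le_card hBT
      rw [e1, e2, hBcard]
      have c1 : ((S.card - A.card : ℕ) : ℝ) = (S.card : ℝ) - A.card := by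
        push_cast [Nat.cast_sub hAcard]; ring
      have c2 : ((T.card - A.card : ℕ) : ℝ) = (T.card : ℝ) - A.card := by
        have : A.card ≤ T.card := hBcard ▸ hBle
        push_cast [Nat.cast_sub this]; ring
      rw [c1, c2]
      have : (n : ℝ) = (S.card : ℝ) + (T.card : ℝ) := by exact_mod_cast hSTn.symm
      rw [this]; ring
    rw [hBsum] at *
    linarith [t1, t2, t3, hcards]
  -- RHS is finite and nonempty
  have hRfin : RHS.Finite := by
    apply Set.Finite.subset (Set.finite_range
      (fun P : Finset (Fin n) × (Fin n → Fin n) =>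
        (∑ i ∈ P.1, dist (X i) (X (P.2 i))) + δ₀ * ((n : ℝ) - 2 * P.1.card)))
    rintro c ⟨A, π, _, _, _, rfl⟩
    exact ⟨(A, π), rfl⟩
  have hRne : RHS.Nonempty := by
    refine ⟨(∑ i ∈ (∅ : Finset (Fin n)), dist (X i) (X i))
      + δ₀ * ((n : ℝ) - 2 * (∅ : Finset (Fin n)).card), ∅, id, ?_, ?_, ?_, rfl⟩
    · intro i hi; exact absurd hi (Finset.notMem_empty i)
    · simp [Set.InjOn]
    · intro i hi; exact absurd hi (Finset.notMem_empty i)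
  have hc₀mem : sInf RHS ∈ RHS := hRne.csInf_mem hRfin
  have hzero : (0:ℝ) ∈ LHS := by
    refine ⟨fun _ => 0, ?_, ?_, by simp⟩
    · exact LipschitzWith.of_dist_le_mul fun x y => by simp [dist_nonneg]
    · intro x; simp [le_of_lt hδ₀]
  have hLne : LHS.Nonempty := ⟨0, hzero⟩
  have hbddA : BddAbove LHS := ⟨sInf RHS, fun s hs => hweak s hs _ hc₀mem⟩
  -- the ≤ direction
  refine le_antisymm (csSup_le hLne fun s hs => hweak s hs _ hc₀mem) ?_
  -- the ≥ direction: exhibit an element of LHS above sInf RHS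
  suffices h : ∃ s ∈ LHS, sInf RHS ≤ s by
    obtain ⟨s, hs, hle⟩ := h
    exact le_trans hle (le_csSup hbddA hs)
  rcases Finset.eq_empty_or_nonempty S with hSe | hSne
  · -- degenerate case: n = 0
    have hT0 : T = ∅ := Finset.card_eq_zero.mp (by rw [← hcardST, hSe, Finset.card_empty])
    have hn0 : n = 0 := by rw [hSe, hT0] at hSTn; simpa using hSTn.symm
    refine ⟨0, hzero, ?_⟩
    obtain ⟨A, π, hA1, -, -, hc⟩ := hc₀mem
    have hA0 : A = ∅ := by
      rw [Finset.eq_empty_iff_forall_notMem]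
      intro i hi
      have h := (hsgn1 i).mpr (hA1 i hi)
      rw [hSe] at h; exact Finset.notMem_empty i h
    have hncast : (n : ℝ) = 0 := by rw [hn0]; norm_num
    rw [hc, hA0]
    simp [hncast]
  -- main case
  have hTne : T.Nonempty := by
    rw [← Finset.card_pos, ← hcardST, Finset.card_pos]; exact hSne
  have hTS : T.card = S.card := hcardST.symm
  set E : {x // x ∈ S} ≃ {x // x ∈ T} :=
    S.equivFin.trans (Finset.equivFinOfCardEq hTS).symm with hE
  set ρ : 𝒳 → 𝒳 → ℝ := fun x y => min (dist x y) (2*δ₀) with hρ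
  have hρ0 : ∀ x, ρ x x = 0 := by
    intro x
    show min (dist x x) (2*δ₀) = 0
    rw [dist_self]
    exact min_eq_left (by positivity)
  have hρnn : ∀ x y, 0 ≤ ρ x y := fun x y => le_min dist_nonneg (by positivity)
  have hρd : ∀ x y, ρ x y ≤ dist x y := fun x y => min_le_left _ _
  have hρb : ∀ x y, ρ x y ≤ 2*δ₀ := fun x y => min_le_right _ _
  have hρlip : ∀ x y z, ρ x z ≤ dist x y + ρ y z := by
    intro x y z
    rcases le_total (dist y z) (2*δ₀) with h | h
    · rw [show ρ y z = dist y z from min_eq_left h]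
      calc ρ x z ≤ dist x z := min_le_left _ _
      _ ≤ dist x y + dist y z := dist_triangle _ _ _
    · rw [show ρ y z = 2*δ₀ from min_eq_right h]
      have h1 : ρ x z ≤ 2*δ₀ := min_le_right _ _
      have h2 : (0:ℝ) ≤ dist x y := dist_nonneg
      linarith
  set C : {x // x ∈ S} → {x // x ∈ S} → ℝ := fun i j => ρ (X ↑i) (X ↑(E j)) with hC
  set ρcost : Equiv.Perm {x // x ∈ S} → ℝ := fun π => ∑ i, C i (π i) with hρcost
  haveI hSne' : Nonempty {x // x ∈ S} := ⟨⟨hSne.choose, hSne.choose_spec⟩⟩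
  obtain ⟨σ₀, -, hσmin⟩ := Finset.exists_min_image
    (Finset.univ : Finset (Equiv.Perm {x // x ∈ S})) ρcost Finset.univ_nonempty
  have hopt : ∀ π, ρcost σ₀ ≤ ρcost π := fun π => hσmin π (Finset.mem_univ π)
  -- every perfect matching cost is at least sInf RHS
  have hβ : ∀ π : Equiv.Perm {x // x ∈ S}, sInf RHS ≤ ρcost π := by
    intro π
    set Pmap : Fin n → Fin n := fun i => if h : i ∈ S then ↑(E (π ⟨i, h⟩)) else i with hPmap
    have hPmapS : ∀ i (h : i ∈ S), Pmap i = ↑(E (π ⟨i, h⟩)) := fun i h => dif_pos h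
    have hPmapT : ∀ i (h : i ∈ S), Pmap i ∈ T := by
      intro i h; rw [hPmapS i h]; exact (E (π ⟨i, h⟩)).2
    set A := S.filter (fun i => dist (X i) (X (Pmap i)) < 2*δ₀) with hA
    have hAS : A ⊆ S := Finset.filter_subset _ _
    have hAcard : A.card ≤ S.card := Finset.card_le_card hAS
    have hmem : (∑ i ∈ A, dist (X i) (X (Pmap i))) + δ₀ * ((n:ℝ) - 2 * A.card) ∈ RHS := by
      refine ⟨A, Pmap, fun i hi => (hsgn1 i).mp (hAS hi), ?_,
        fun i hi => (hsgnT _).mp (hPmapT i (hAS hi)), rfl⟩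
      intro a ha b hb hab
      have haS : a ∈ S := hAS ha
      have hbS : b ∈ S := hAS hb
      rw [hPmapS a haS, hPmapS b hbS] at hab
      have h1 : E (π ⟨a, haS⟩) = E (π ⟨b, hbS⟩) := Subtype.coe_injective hab
      have h2 : (⟨a, haS⟩ : {x // x ∈ S}) = ⟨b, hbS⟩ := π.injective (E.injective h1)
      exact congrArg Subtype.val h2
    have hcost : ρcost π = (∑ i ∈ A, dist (X i) (X (Pmap i))) + δ₀ * ((n:ℝ) - 2 * A.card) := by
      have h1 : ρcost π = ∑ i ∈ S, ρ (X i) (X (Pmap i)) := by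
        rw [← Finset.sum_coe_sort S (fun i => ρ (X i) (X (Pmap i)))]
        refine Finset.sum_congr rfl fun i _ => ?_
        rw [hPmapS (↑i) i.2]
      rw [h1, ← Finset.sum_sdiff hAS]
      have h2 : ∑ i ∈ A, ρ (X i) (X (Pmap i)) = ∑ i ∈ A, dist (X i) (X (Pmap i)) := by
        refine Finset.sum_congr rfl fun i hi => ?_
        have := (Finset.mem_filter.mp hi).2
        exact min_eq_left (le_of_lt this)
      have h3 : ∑ i ∈ S \ A, ρ (X i) (X (Pmap i)) = ((S \ A).card : ℝ) * (2*δ₀) := by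
        have : ∀ i ∈ S \ A, ρ (X i) (X (Pmap i)) = 2*δ₀ := by
          intro i hi
          rw [Finset.mem_sdiff] at hi
          have hni : ¬ dist (X i) (X (Pmap i)) < 2*δ₀ := by
            intro hcon
            exact hi.2 (Finset.mem_filter.mpr ⟨hi.1, hcon⟩)
          exact min_eq_right (le_of_not_gt hni)
        rw [Finset.sum_congr rfl this, Finset.sum_const, nsmul_eq_mul]
      have h4 : ((S \ A).card : ℝ) * (2*δ₀) = δ₀ * ((n:ℝ) - 2 * A.card) := by
        rw [Finset.card_sdiff_of_subset hAS]
        have hcst : ((S.card - A.card : ℕ) : ℝ) = (S.card : ℝ) - A.card := by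
          push_cast [Nat.cast_sub hAcard]; ring
        rw [hcst]
        have : (n : ℝ) = 2 * (S.card : ℝ) := by exact_mod_cast hn2.symm
        rw [this]; ring
      rw [h2, h3, h4]
      ring
    rw [hcost]
    exact csInf_le hRfin.bddBelow hmem
  -- α: the optimal matching achieves at most sInf RHS
  obtain ⟨A₀, π₀, hA₀1, hA₀inj, hA₀2, hc₀eq⟩ := hc₀mem
  have hA₀S : A₀ ⊆ S := fun i hi => (hsgn1 i).mpr (hA₀1 i hi)
  set B₀ := A₀.image π₀ with hB₀
  have hB₀T : B₀ ⊆ T := by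
    intro j hj
    obtain ⟨i, hi, rfl⟩ := Finset.mem_image.mp hj
    exact (hsgnT _).mpr (hA₀2 i hi)
  have hB₀card : B₀.card = A₀.card := Finset.card_image_of_injOn hA₀inj
  have hA₀card : A₀.card ≤ S.card := Finset.card_le_card hA₀S
  have hcdiff : (T \ B₀).card = (S \ A₀).card := by
    rw [Finset.card_sdiff_of_subset hB₀T, Finset.card_sdiff_of_subset hA₀S, hB₀card, hcardST]
  set e' : {x // x ∈ S \ A₀} ≃ {x // x ∈ T \ B₀} :=
    (S \ A₀).equivFin.trans (Finset.equivFinOfCardEq hcdiff).symm with he'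
  set σh : {x // x ∈ S} → {x // x ∈ T} := fun i =>
    if h : (i : Fin n) ∈ A₀ then ⟨π₀ i, hB₀T (Finset.mem_image_of_mem π₀ h)⟩
    else ⟨(e' ⟨(i : Fin n), Finset.mem_sdiff.mpr ⟨i.2, h⟩⟩ : {x // x ∈ T \ B₀}).1,
      (Finset.mem_sdiff.mp (e' ⟨(i : Fin n), Finset.mem_sdiff.mpr ⟨i.2, h⟩⟩).2).1⟩ with hσh
  have hσhA : ∀ (i : {x // x ∈ S}) (h : (i : Fin n) ∈ A₀), ((σh i : {x // x ∈ T}) : Fin n) = π₀ i := by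
    intro i h
    simp only [hσh, dif_pos h]
  have hσhB : ∀ (i : {x // x ∈ S}) (h : ¬ (i : Fin n) ∈ A₀), ((σh i : {x // x ∈ T}) : Fin n) ∉ B₀ := by
    intro i h
    simp only [hσh, dif_neg h]
    exact (Finset.mem_sdiff.mp (e' ⟨(i : Fin n), Finset.mem_sdiff.mpr ⟨i.2, h⟩⟩).2).2
  have hσhinj : Function.Injective σh := by
    intro a b hab
    have hv : ((σh a : {x // x ∈ T}) : Fin n) = ((σh b : {x // x ∈ T}) : Fin n) :=
      congrArg Subtype.val hab
    by_cases ha : (a : Fin n) ∈ A₀ <;> by_cases hb : (b : Fin n) ∈ A₀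
    · rw [hσhA a ha, hσhA b hb] at hv
      exact Subtype.ext (hA₀inj (Finset.mem_coe.mpr ha) (Finset.mem_coe.mpr hb) hv)
    · exfalso
      apply hσhB b hb
      rw [← hv, hσhA a ha]
      exact Finset.mem_image_of_mem π₀ ha
    · exfalso
      apply hσhB a ha
      rw [hv, hσhA b hb]
      exact Finset.mem_image_of_mem π₀ hb
    · have h1 : ((e' ⟨(a : Fin n), Finset.mem_sdiff.mpr ⟨a.2, ha⟩⟩ : {x // x ∈ T \ B₀}) : Fin n)
          = ((e' ⟨(b : Fin n), Finset.mem_sdiff.mpr ⟨b.2, hb⟩⟩ : {x // x ∈ T \ B₀}) : Fin n) := by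
        simp only [hσh, dif_neg ha, dif_neg hb] at hv
        exact hv
      have h2 := congrArg Subtype.val (e'.injective (Subtype.coe_injective h1))
      exact Subtype.ext h2

  have hσhbij : Function.Bijective σh :=
    (Fintype.bijective_iff_injective_and_card σh).mpr
      ⟨hσhinj, by rw [Fintype.card_coe, Fintype.card_coe, hcardST]⟩
  set π₁ : Equiv.Perm {x // x ∈ S} := (Equiv.ofBijective σh hσhbij).trans E.symm with hπ₁def
  have hπ₁ : ∀ i, E (π₁ i) = σh i := by
    intro i
    simp only [hπ₁def, Equiv.trans_apply, Equiv.apply_symm_apply, Equiv.ofBijective_apply]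
  have hα : ρcost σ₀ ≤ sInf RHS := by
    refine le_trans (hopt π₁) ?_
    have hval : ρcost π₁ = ∑ i : {x // x ∈ S}, ρ (X ↑i) (X ↑(σh i)) := by
      refine Finset.sum_congr rfl fun i _ => ?_
      show ρ (X ↑i) (X ↑(E (π₁ i))) = _
      rw [hπ₁ i]
    have hbound : ρcost π₁ ≤ ∑ i : {x // x ∈ S},
        (if (i : Fin n) ∈ A₀ then dist (X ↑i) (X (π₀ ↑i)) else 2*δ₀) := by
      rw [hval]
      refine Finset.sum_le_sum fun i _ => ?_
      by_cases h : (i : Fin n) ∈ A₀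
      · rw [if_pos h, hσhA i h]
        exact hρd _ _
      · rw [if_neg h]
        exact hρb _ _
    have hsum2 : ∑ i : {x // x ∈ S}, (if (i : Fin n) ∈ A₀ then dist (X ↑i) (X (π₀ ↑i)) else 2*δ₀)
        = ∑ i ∈ S, (if i ∈ A₀ then dist (X i) (X (π₀ i)) else 2*δ₀) :=
      Finset.sum_coe_sort S (fun i => if i ∈ A₀ then dist (X i) (X (π₀ i)) else 2*δ₀)
    have hsum3 : ∑ i ∈ S, (if i ∈ A₀ then dist (X i) (X (π₀ i)) else 2*δ₀)
        = (∑ i ∈ A₀, dist (X i) (X (π₀ i))) + ((S \ A₀).card : ℝ) * (2*δ₀) := by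
      rw [← Finset.sum_sdiff hA₀S]
      have e1 : ∑ i ∈ A₀, (if i ∈ A₀ then dist (X i) (X (π₀ i)) else 2*δ₀)
          = ∑ i ∈ A₀, dist (X i) (X (π₀ i)) :=
        Finset.sum_congr rfl fun i hi => if_pos hi
      have e2 : ∑ i ∈ S \ A₀, (if i ∈ A₀ then dist (X i) (X (π₀ i)) else 2*δ₀)
          = ((S \ A₀).card : ℝ) * (2*δ₀) := by
        have h := Finset.sum_congr rfl (fun i (hi : i ∈ S \ A₀) =>
          if_neg (Finset.mem_sdiff.mp hi).2 :
          ∀ i ∈ S \ A₀, (if i ∈ A₀ then dist (X i) (X (π₀ i)) else 2*δ₀) = 2*δ₀)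
        rw [h, Finset.sum_const, nsmul_eq_mul]
      rw [e1, e2]
      ring
    have hsum4 : ((S \ A₀).card : ℝ) * (2*δ₀) = δ₀ * ((n:ℝ) - 2 * A₀.card) := by
      rw [Finset.card_sdiff_of_subset hA₀S]
      have hcst : ((S.card - A₀.card : ℕ) : ℝ) = (S.card : ℝ) - A₀.card := by
        push_cast [Nat.cast_sub hA₀card]; ring
      rw [hcst]
      have : (n : ℝ) = 2 * (S.card : ℝ) := by exact_mod_cast hn2.symm
      rw [this]; ring
    rw [hc₀eq]
    calc ρcost π₁ ≤ _ := hbound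
    _ = (∑ i ∈ A₀, dist (X i) (X (π₀ i))) + δ₀ * ((n:ℝ) - 2 * A₀.card) := by
      rw [hsum2, hsum3, hsum4]
  -- dual potentials and the witness function
  have hopt2 : ∀ π : Equiv.Perm {x // x ∈ S}, ∑ i, C i (σ₀ i) ≤ ∑ i, C i (π i) := hopt
  obtain ⟨φ, ψ, hfeas, hslack⟩ := exists_potential C σ₀ hopt2
  have hU : (Finset.univ : Finset {x // x ∈ S}).Nonempty := Finset.univ_nonempty
  set L := Finset.univ.inf' hU ψ with hL
  set f₀ : 𝒳 → ℝ := fun x => Finset.univ.inf' hU (fun j => ρ x (X ↑(E j)) + ψ j) with hf₀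
  have hf₀le : ∀ x (j : {x // x ∈ S}), f₀ x ≤ ρ x (X ↑(E j)) + ψ j :=
    fun x j => Finset.inf'_le _ (Finset.mem_univ j)
  have hf₀ge : ∀ (x : 𝒳) (c : ℝ), (∀ j, c ≤ ρ x (X ↑(E j)) + ψ j) → c ≤ f₀ x :=
    fun x c h => Finset.le_inf' _ _ (fun j _ => h j)
  have hf₀attain : ∀ x, ∃ j, f₀ x = ρ x (X ↑(E j)) + ψ j := by
    intro x
    obtain ⟨j, -, hj⟩ := Finset.exists_mem_eq_inf' hU (fun j => ρ x (X ↑(E j)) + ψ j)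
    exact ⟨j, hj⟩
  have hLψ : ∀ j, L ≤ ψ j := fun j => Finset.inf'_le _ (Finset.mem_univ j)
  have hLattain : ∃ j, L = ψ j := by
    obtain ⟨j, -, hj⟩ := Finset.exists_mem_eq_inf' hU ψ
    exact ⟨j, hj⟩
  have hf₀low : ∀ x, L ≤ f₀ x := fun x => hf₀ge x L
    (fun j => le_trans (hLψ j) (le_add_of_nonneg_left (hρnn _ _)))
  have hf₀up : ∀ x, f₀ x ≤ L + 2*δ₀ := by
    intro x
    obtain ⟨j, hj⟩ := hLattain
    calc f₀ x ≤ ρ x (X ↑(E j)) + ψ j := hf₀le x j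
    _ ≤ 2*δ₀ + ψ j := by linarith [hρb x (X ↑(E j))]
    _ = L + 2*δ₀ := by rw [hj]; ring
  have hf₀lipd : ∀ x y, f₀ x ≤ f₀ y + dist x y := by
    intro x y
    obtain ⟨j, hj⟩ := hf₀attain y
    calc f₀ x ≤ ρ x (X ↑(E j)) + ψ j := hf₀le x j
    _ ≤ (dist x y + ρ y (X ↑(E j))) + ψ j := by linarith [hρlip x y (X ↑(E j))]
    _ = f₀ y + dist x y := by rw [hj]; ring
  have hf₀S : ∀ i : {x // x ∈ S}, φ i ≤ f₀ (X ↑i) := by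
    intro i
    refine hf₀ge _ _ fun j => ?_
    have h := hfeas i j
    simp only [hC] at h
    linarith
  have hf₀T : ∀ j : {x // x ∈ S}, f₀ (X ↑(E j)) ≤ ψ j := by
    intro j
    have h := hf₀le (X ↑(E j)) j
    rw [hρ0] at h
    linarith
  set F : 𝒳 → ℝ := fun x => f₀ x - (L + δ₀) with hF
  have hFlip : LipschitzWith 1 F := by
    refine LipschitzWith.of_dist_le_mul fun x y => ?_
    rw [NNReal.coe_one, one_mul, Real.dist_eq, abs_le]
    have hd : dist y x = dist x y := dist_comm y x
    constructor
    · have h := hf₀lipd y x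
      simp only [hF]
      linarith
    · have h := hf₀lipd x y
      simp only [hF]
      linarith
  have hFb : ∀ x, |F x| ≤ δ₀ := by
    intro x
    rw [abs_le]
    have h1 := hf₀low x
    have h2 := hf₀up x
    constructor
    · simp only [hF]; linarith
    · simp only [hF]; linarith
  refine ⟨∑ i, sgn u i * F (X i), ⟨F, hFlip, hFb, rfl⟩, ?_⟩
  rw [hsplit (fun i => F (X i))]
  have hcancel : ∑ i ∈ S, F (X i) - ∑ i ∈ T, F (X i)
      = ∑ i ∈ S, f₀ (X i) - ∑ i ∈ T, f₀ (X i) := by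
    simp only [hF]
    rw [Finset.sum_sub_distrib, Finset.sum_sub_distrib, Finset.sum_const, Finset.sum_const,
      hcardST]
    ring
  rw [hcancel]
  have hSsum : ∑ i : {x // x ∈ S}, φ i ≤ ∑ i ∈ S, f₀ (X i) := by
    rw [← Finset.sum_coe_sort S (fun i => f₀ (X i))]
    exact Finset.sum_le_sum fun i _ => hf₀S i
  have hTsum : ∑ i ∈ T, f₀ (X i) ≤ ∑ j : {x // x ∈ S}, ψ j := by
    rw [← Finset.sum_coe_sort T (fun i => f₀ (X i)),
      ← Equiv.sum_comp E (fun j : {x // x ∈ T} => f₀ (X ↑j))]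
    exact Finset.sum_le_sum fun j _ => hf₀T j
  have hφψ : ∑ i : {x // x ∈ S}, φ i - ∑ j : {x // x ∈ S}, ψ j = ρcost σ₀ := by
    have h1 : ∑ i : {x // x ∈ S}, φ i
        = ∑ i : {x // x ∈ S}, (ψ (σ₀ i) + C i (σ₀ i)) :=
      Finset.sum_congr rfl fun i _ => hslack i
    have h2 : ∑ i : {x // x ∈ S}, ψ (σ₀ i) = ∑ j : {x // x ∈ S}, ψ j :=
      Equiv.sum_comp σ₀ ψ
    rw [h1, Finset.sum_add_distrib, h2]
    simp only [hρcost]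
    ring
  have hfinal : ρcost σ₀ = sInf RHS := le_antisymm hα (hβ σ₀)
  linarith [hSsum, hTsum, hφψ, hfinal]
end

section
/- Let H be a real Hilbert space, φ_1,…,φ_n ∈ H with Gram matrix K_{ij} = ⟪φ_i, φ_j⟫, and let P ∈ ℝ^{n×n} be symmetric positive semidefinite. Then sup over f ∈ H with ‖f‖ ≤ 1 of Σ_{i,j=1}^n P_{ij} ⟪φ_i, f⟫ ⟪φ_j, f⟫ = λ_max(√K · P · √K), where √K is the positive semidefinite square root of K and λ_max denotes the largest eigenvalue. (The mixed-strategy RKHS imbalance metric equals the top eigenvalue of √K P √K.) -/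
open scoped BigOperators RealInnerProductSpace
open scoped Matrix
set_option maxHeartbeats 1000000

section
open scoped ComplexOrder

/-- doc -/
noncomputable def Matrix.PosSemidef.sqrt {n : Type*} {𝕜 : Type*} [Fintype n] [DecidableEq n]
    [RCLike 𝕜] {A : Matrix n n 𝕜} (hA : A.PosSemidef) : Matrix n n 𝕜 :=
  (hA.1.eigenvectorUnitary : Matrix n n 𝕜) *
    Matrix.diagonal (fun i => ((Real.sqrt (hA.1.eigenvalues i) : ℝ) : 𝕜)) *
    (star hA.1.eigenvectorUnitary : Matrix n n 𝕜)

end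

lemma Matrix.PosSemidef.posSemidef_sqrt {n : ℕ} {A : Matrix (Fin n) (Fin n) ℝ}
    (hA : A.PosSemidef) : hA.sqrt.PosSemidef := by
  unfold Matrix.PosSemidef.sqrt
  have hD : (Matrix.diagonal (fun i => ((Real.sqrt (hA.1.eigenvalues i) : ℝ) : ℝ))).PosSemidef :=
    Matrix.posSemidef_diagonal_iff.mpr fun i => Real.sqrt_nonneg _
  have := hD.mul_mul_conjTranspose_same (hA.1.eigenvectorUnitary : Matrix (Fin n) (Fin n) ℝ)
  simpa [Matrix.star_eq_conjTranspose] using this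

lemma Matrix.PosSemidef.sqrt_mul_self {n : ℕ} {A : Matrix (Fin n) (Fin n) ℝ}
    (hA : A.PosSemidef) : hA.sqrt * hA.sqrt = A := by
  unfold Matrix.PosSemidef.sqrt
  set U := hA.1.eigenvectorUnitary
  have hU : (star U : Matrix (Fin n) (Fin n) ℝ) * (U : Matrix (Fin n) (Fin n) ℝ) = 1 := by
    simp
  have hDD : Matrix.diagonal (fun i => (RCLike.ofReal (Real.sqrt (hA.1.eigenvalues i)) : ℝ)) *
      Matrix.diagonal (fun i => (RCLike.ofReal (Real.sqrt (hA.1.eigenvalues i)) : ℝ))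
      = Matrix.diagonal (RCLike.ofReal ∘ hA.1.eigenvalues) := by
    rw [Matrix.diagonal_mul_diagonal]
    congr 1; funext i
    simp [Real.mul_self_sqrt (hA.eigenvalues_nonneg i)]
  calc _ = (U : Matrix (Fin n) (Fin n) ℝ) * (Matrix.diagonal (fun i => (RCLike.ofReal (Real.sqrt (hA.1.eigenvalues i)) : ℝ)) *
      ((star U : Matrix (Fin n) (Fin n) ℝ) * (U : Matrix (Fin n) (Fin n) ℝ)) *
      Matrix.diagonal (fun i => (RCLike.ofReal (Real.sqrt (hA.1.eigenvalues i)) : ℝ))) *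
      (star U : Matrix (Fin n) (Fin n) ℝ) := by simp only [Matrix.mul_assoc]
    _ = _ := by
      rw [hU, Matrix.mul_one, hDD]
      conv_rhs => rw [hA.1.spectral_theorem]
      simp [Matrix.mul_assoc]
      rfl

open Matrix in
theorem rayleigh_bound' {n : ℕ} {M : Matrix (Fin n) (Fin n) ℝ} (hM : M.IsHermitian) (w : Fin n → ℝ) :
    w ⬝ᵥ (M *ᵥ w) ≤ (⨆ i, hM.eigenvalues i) * (w ⬝ᵥ w) := by
  rcases Nat.eq_zero_or_pos n with h0 | hpos
  · subst h0; simp [dotProduct]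
  have hne : Nonempty (Fin n) := ⟨⟨0, hpos⟩⟩
  set U := (hM.eigenvectorUnitary : Matrix (Fin n) (Fin n) ℝ) with hU
  set y := star U *ᵥ w with hy
  have h1 : y = w ᵥ* U := by
    rw [hy, ← Matrix.mulVec_transpose]
    congr 1
  have key : w ⬝ᵥ (M *ᵥ w) = y ⬝ᵥ ((Matrix.diagonal hM.eigenvalues) *ᵥ y) := by
    have hD : M = U * Matrix.diagonal hM.eigenvalues * star U := by
      simpa using hM.spectral_theorem
    conv_lhs => rw [hD]
    rw [← Matrix.mulVec_mulVec, ← Matrix.mulVec_mulVec, dotProduct_mulVec, ← h1]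
  have hyy : y ⬝ᵥ y = w ⬝ᵥ w :=
    calc y ⬝ᵥ y = (w ᵥ* U) ⬝ᵥ (star U *ᵥ w) := by rw [← h1, ← hy]
    _ = w ⬝ᵥ ((U * star U) *ᵥ w) := by rw [← dotProduct_mulVec, Matrix.mulVec_mulVec]
    _ = w ⬝ᵥ w := by rw [show U * star U = 1 from hM.eigenvectorUnitary.2.2, Matrix.one_mulVec]
  rw [key, ← hyy]
  have hbdd : BddAbove (Set.range hM.eigenvalues) := Set.finite_range _ |>.bddAbove
  simp only [dotProduct, Matrix.mulVec_diagonal]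
  rw [Finset.mul_sum]
  refine Finset.sum_le_sum fun i _ => ?_
  have h1 : hM.eigenvalues i ≤ ⨆ j, hM.eigenvalues j := le_ciSup hbdd i
  nlinarith [sq_nonneg (y i)]

open Matrix in
lemma dot_sym' {n : ℕ} {Q : Matrix (Fin n) (Fin n) ℝ} (hQt : Qᵀ = Q) (x y : Fin n → ℝ) :
    (Q *ᵥ x) ⬝ᵥ y = x ⬝ᵥ (Q *ᵥ y) := by
  rw [show Q *ᵥ x = x ᵥ* Q by rw [← Matrix.mulVec_transpose, hQt], ← dotProduct_mulVec]

open Matrix in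
lemma quad_eq' {n : ℕ} (P : Matrix (Fin n) (Fin n) ℝ) (v : Fin n → ℝ) :
    ∑ i, ∑ j, P i j * v i * v j = v ⬝ᵥ (P *ᵥ v) := by
  simp only [dotProduct, Matrix.mulVec, Finset.mul_sum]
  refine Finset.sum_congr rfl fun i _ => Finset.sum_congr rfl fun j _ => ?_
  ring


open Matrix in
lemma mem_aux {H : Type*} [NormedAddCommGroup H] [InnerProductSpace ℝ H] {n : ℕ}
    (φ : Fin n → H) (K Q P : Matrix (Fin n) (Fin n) ℝ)
    (hKdef : ∀ i j, K i j = ⟪φ i, φ j⟫) (hQt : Qᵀ = Q) (hQQ : Q * Q = K)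
    (lam : ℝ) (hpos : 0 < lam) (w : Fin n → ℝ)
    (hMw : (Q * P * Q) *ᵥ w = lam • w) (hww : w ⬝ᵥ w = 1) :
    ∃ f : H, ‖f‖ ≤ 1 ∧ lam = ∑ i, ∑ j, P i j * ⟪φ i, f⟫ * ⟪φ j, f⟫ := by
  have hinner : ∀ (u : Fin n → ℝ) (i : Fin n),
      ⟪φ i, ∑ j, u j • φ j⟫ = (K.mulVec u) i := by
    intro u i
    rw [inner_sum]
    simp only [real_inner_smul_right]
    simp [Matrix.mulVec, dotProduct, hKdef, mul_comm]
  have hnormsq : ∀ (u : Fin n → ℝ),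
      ⟪∑ j, u j • φ j, ∑ j, u j • φ j⟫ = u ⬝ᵥ (K.mulVec u) := by
    intro u
    rw [sum_inner]
    simp only [real_inner_smul_left, hinner]
    simp [dotProduct]
  set u : Fin n → ℝ := lam⁻¹ • (P.mulVec (Q.mulVec w)) with hu
  have hQu : Q.mulVec u = w := by
    have h1 : Q.mulVec u = lam⁻¹ • ((Q * P * Q).mulVec w) := by
      rw [hu, Matrix.mulVec_smul]
      congr 1
      rw [Matrix.mulVec_mulVec, Matrix.mulVec_mulVec]
    rw [h1, hMw, smul_smul, inv_mul_cancel₀ (ne_of_gt hpos), one_smul]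
  have hKu : K.mulVec u = Q.mulVec w := by
    rw [← hQQ, ← Matrix.mulVec_mulVec, hQu]
  refine ⟨∑ j, u j • φ j, ?_, ?_⟩
  · have h1 : ⟪∑ j, u j • φ j, ∑ j, u j • φ j⟫ = 1 := by
      rw [hnormsq, hKu, ← dot_sym' hQt, hQu, hww]
    have h2 := real_inner_self_eq_norm_mul_norm (∑ j, u j • φ j)
    nlinarith [norm_nonneg (∑ j, u j • φ j)]
  · simp only [hinner, hKu]
    rw [quad_eq', dot_sym' hQt, Matrix.mulVec_mulVec, Matrix.mulVec_mulVec, hMw]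
    simp [hww]

/-- The mixed-strategy RKHS imbalance metric equals the top eigenvalue of `√K P √K`:
for feature vectors `φᵢ` with Gram matrix `K` and `P` symmetric positive semidefinite,
`sup_{‖f‖ ≤ 1} ∑_{i,j} P_{ij} ⟪φᵢ, f⟫ ⟪φⱼ, f⟫ = λ_max(√K P √K)`. -/
theorem stmt10 {H : Type*} [NormedAddCommGroup H] [InnerProductSpace ℝ H]
    (n : ℕ) (φ : Fin n → H)
    (K : Matrix (Fin n) (Fin n) ℝ) (hKdef : ∀ i j, K i j = ⟪φ i, φ j⟫)
    (hK : K.PosSemidef)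
    (P : Matrix (Fin n) (Fin n) ℝ) (hP : P.PosSemidef)
    (hM : (hK.sqrt * P * hK.sqrt).IsHermitian) :
    sSup {r : ℝ | ∃ f : H, ‖f‖ ≤ 1 ∧
        r = ∑ i, ∑ j, P i j * ⟪φ i, f⟫ * ⟪φ j, f⟫}
      = ⨆ i, hM.eigenvalues i := by
  classical
  set Q := hK.sqrt with hQdef
  have hQ : Q.PosSemidef := hK.posSemidef_sqrt
  have hQt : Qᵀ = Q := by
    ext i j
    have := congrFun (congrFun hQ.1 i) j
    simpa using this
  have hQQ : Q * Q = K := hK.sqrt_mul_self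
  set M := Q * P * Q with hMdef
  set lmax := ⨆ i, hM.eigenvalues i with hlmax
  set S := {r : ℝ | ∃ f : H, ‖f‖ ≤ 1 ∧
        r = ∑ i, ∑ j, P i j * ⟪φ i, f⟫ * ⟪φ j, f⟫} with hS
  -- inner products with a linear combination
  have hinner : ∀ (u : Fin n → ℝ) (i : Fin n),
      ⟪φ i, ∑ j, u j • φ j⟫ = (K.mulVec u) i := by
    intro u i
    rw [inner_sum]
    simp only [real_inner_smul_right]
    simp [Matrix.mulVec, dotProduct, hKdef, mul_comm]
  have hnormsq : ∀ (u : Fin n → ℝ),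
      ⟪∑ j, u j • φ j, ∑ j, u j • φ j⟫ = u ⬝ᵥ (K.mulVec u) := by
    intro u
    rw [sum_inner]
    simp only [real_inner_smul_left, hinner]
    simp [dotProduct]
  -- 0 ∈ S
  have h0S : (0 : ℝ) ∈ S := ⟨0, by simp⟩
  -- upper bound
  have hub : ∀ r ∈ S, r ≤ lmax := by
    rintro r ⟨f, hf, rfl⟩
    set V := Submodule.span ℝ (Set.range φ) with hV
    have : FiniteDimensional ℝ V := FiniteDimensional.span_of_finite ℝ (Set.finite_range φ)
    set g : H := (Submodule.orthogonalProjection V f : H) with hg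
    have hmem : (g : H) ∈ V := (Submodule.orthogonalProjection V f).2
    obtain ⟨u, hu⟩ := Submodule.mem_span_range_iff_exists_fun ℝ |>.mp hmem
    have hginner : ∀ i, ⟪φ i, f⟫ = (K.mulVec u) i := by
      intro i
      have h1 : f - g ∈ Vᗮ := V.sub_starProjection_mem_orthogonal f
      have h2 : ⟪φ i, f - g⟫ = 0 :=
        (Submodule.mem_orthogonal V (f - g)).mp h1 (φ i)
          (Submodule.subset_span (Set.mem_range_self i))
      have h3 : ⟪φ i, f⟫ = ⟪φ i, g⟫ := by
        rw [inner_sub_right] at h2; linarith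
      rw [h3, ← hu, hinner]
    have hgnorm : ‖g‖ ≤ 1 := by
      refine le_trans ?_ hf
      have h1 := (Submodule.orthogonalProjection V).le_opNorm f
      have h2 := Submodule.orthogonalProjection_norm_le V
      have h3 : ‖(Submodule.orthogonalProjection V) f‖ = ‖g‖ := rfl
      nlinarith [norm_nonneg f]
    set w := Q.mulVec u with hw
    have hKu : K.mulVec u = Q.mulVec w := by rw [hw, Matrix.mulVec_mulVec, hQQ]
    have hval : ∑ i, ∑ j, P i j * ⟪φ i, f⟫ * ⟪φ j, f⟫ = w ⬝ᵥ (M.mulVec w) := by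
      simp only [hginner, hKu]
      rw [quad_eq', dot_sym' hQt, Matrix.mulVec_mulVec, Matrix.mulVec_mulVec, hMdef]
    have hww : w ⬝ᵥ w ≤ 1 := by
      have h1 : w ⬝ᵥ w = u ⬝ᵥ (K.mulVec u) := by
        rw [hw, dot_sym' hQt, Matrix.mulVec_mulVec, hQQ]
      have h2 : u ⬝ᵥ (K.mulVec u) = ⟪g, g⟫ := by rw [← hnormsq, hu]
      have h3 : ⟪g, g⟫ = ‖g‖ * ‖g‖ := real_inner_self_eq_norm_mul_norm g
      rw [h1, h2, h3]
      nlinarith [norm_nonneg g]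
    have hMpsd : M.PosSemidef := by
      have := hP.conjTranspose_mul_mul_same Q
      rwa [show Qᴴ = Q from hQ.1] at this
    have hlnn : 0 ≤ lmax := by
      rcases isEmpty_or_nonempty (Fin n) with he | hne
      · rw [hlmax, Real.iSup_of_isEmpty]
      · obtain ⟨i⟩ := hne
        exact le_trans (hMpsd.eigenvalues_nonneg i) (le_ciSup (Set.finite_range _).bddAbove i)
    calc ∑ i, ∑ j, P i j * ⟪φ i, f⟫ * ⟪φ j, f⟫ = w ⬝ᵥ (M.mulVec w) := hval
      _ ≤ lmax * (w ⬝ᵥ w) := rayleigh_bound' hM w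
      _ ≤ lmax := mul_le_of_le_one_right hlnn hww
  have hbddS : BddAbove S := ⟨lmax, fun r hr => hub r hr⟩
  refine le_antisymm (csSup_le ⟨0, h0S⟩ hub) ?_
  rcases isEmpty_or_nonempty (Fin n) with he | hne
  · rw [hlmax, Real.iSup_of_isEmpty]
    exact le_csSup hbddS h0S
  refine ciSup_le fun i => ?_
  rcases le_or_gt (hM.eigenvalues i) 0 with hle | hpos
  · exact hle.trans (le_csSup hbddS h0S)
  · refine le_csSup hbddS ?_
    have hww : (⇑(hM.eigenvectorBasis i) : Fin n → ℝ) ⬝ᵥ ⇑(hM.eigenvectorBasis i) = 1 := by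
      have h1 : ⟪hM.eigenvectorBasis i, hM.eigenvectorBasis i⟫ = (1 : ℝ) := by
        rw [real_inner_self_eq_norm_mul_norm, hM.eigenvectorBasis.orthonormal.1 i]; ring
      rw [← h1]
      simp only [PiLp.inner_apply, dotProduct, RCLike.inner_apply, conj_trivial, mul_comm]
    exact mem_aux φ K Q P hKdef hQt hQQ _ hpos _
      (by rw [← hMdef]; exact hM.mulVec_eigenvectorBasis i) hww
end

section
/- Let m ≥ 2, p ≥ 1, n = mp, W an even assignment, 𝒳 a set, X_1,…,X_n ∈ 𝒳, f_1,…,f_m : 𝒳 → ℝ, and Y ∈ ℝ^{n×m}; set ε_{ik} = Y_{ik} − f_k(X_i). For treatments k ≠ k' define τ̂_{kk'} = (1/p) Σ_{i : W_i = k} Y_{ik} − (1/p) Σ_{i : W_i = k'} Y_{ik'}, SATE_{kk'} = (1/n) Σ_{i=1}^n (Y_{ik} − Y_{ik'}), B_{kl}(f) = (1/p) Σ_{i=1}^n (w_{ik} − w_{il}) f(X_i), D_{kk'} = (1/m) Σ_{l ≠ k} B_{kl}(f_k) − (1/m) Σ_{l ≠ k'} B_{k'l}(f_{k'}), and E_{kk'}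 = (1/n) Σ_{i=1}^n ((m·w_{ik} − 1) ε_{ik} − (m·w_{ik'} − 1) ε_{ik'}). Then the algebraic identity τ̂_{kk'} = SATE_{kk'} + D_{kk'} + E_{kk'} holds. -/
open scoped BigOperators

/-- The algebraic decomposition `τ̂_{kk'} = SATE_{kk'} + D_{kk'} + E_{kk'}` of the
mean-difference estimator into the sample average treatment effect, the imbalance term
in the regression functions, and the residual term. -/
theorem stmt14 {𝒳 : Type*} (m p n : ℕ) (hm : 2 ≤ m) (hp : 1 ≤ p) (hn : n = m * p)
    (W : Fin n → Fin m)
    (hW : ∀ k, (Finset.univ.filter fun i => W i = k).card = p)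
    (X : Fin n → 𝒳) (f : Fin m → 𝒳 → ℝ) (Y : Fin n → Fin m → ℝ)
    (ε : Fin n → Fin m → ℝ) (hε : ∀ i k, ε i k = Y i k - f k (X i))
    (w : Fin n → Fin m → ℝ) (hw : ∀ i l, w i l = if W i = l then 1 else 0)
    (B : Fin m → Fin m → (𝒳 → ℝ) → ℝ)
    (hB : ∀ k l g, B k l g = (1 / (p : ℝ)) * ∑ i, (w i k - w i l) * g (X i))
    (k k' : Fin m) (hkk' : k ≠ k') :
    (1 / (p : ℝ)) * (∑ i ∈ Finset.univ.filter fun i => W i = k, Y i k)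
        - (1 / (p : ℝ)) * (∑ i ∈ Finset.univ.filter fun i => W i = k', Y i k')
      = (1 / (n : ℝ)) * (∑ i, (Y i k - Y i k'))
        + ((1 / (m : ℝ)) * (∑ l ∈ Finset.univ.filter fun l => l ≠ k, B k l (f k))
            - (1 / (m : ℝ)) * (∑ l ∈ Finset.univ.filter fun l => l ≠ k', B k' l (f k')))
        + (1 / (n : ℝ)) * ∑ i, (((m : ℝ) * w i k - 1) * ε i k
            - ((m : ℝ) * w i k' - 1) * ε i k') := by
  have hm0 : (m : ℝ) ≠ 0 := by
    have : 0 < m := lt_of_lt_of_le two_pos hm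
    exact_mod_cast this.ne'
  have hp0 : (p : ℝ) ≠ 0 := by
    have : 0 < p := hp
    exact_mod_cast this.ne'
  have hnr : (n : ℝ) = (m : ℝ) * (p : ℝ) := by rw [hn]; push_cast; ring
  -- filtered sum as weighted sum
  have hfilt : ∀ (k0 : Fin m),
      (∑ i ∈ Finset.univ.filter fun i => W i = k0, Y i k0)
        = ∑ i, w i k0 * Y i k0 := by
    intro k0
    rw [Finset.sum_filter]
    refine Finset.sum_congr rfl fun i _ => ?_
    rw [hw]
    by_cases h : W i = k0 <;> simp [h]
  -- sum of weights over treatments is 1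
  have hwsum : ∀ i : Fin n, ∑ l, w i l = 1 := by
    intro i
    simp [hw, Finset.sum_ite_eq']
  -- sum of B over l ≠ k0
  have hBsum : ∀ (k0 : Fin m),
      (∑ l ∈ Finset.univ.filter fun l => l ≠ k0, B k0 l (f k0))
        = (1 / (p : ℝ)) * ∑ i, (((m : ℝ) * w i k0 - 1) * f k0 (X i)) := by
    intro k0
    simp only [hB, ← Finset.mul_sum]
    congr 1
    rw [Finset.sum_comm]
    refine Finset.sum_congr rfl fun i _ => ?_
    rw [← Finset.sum_mul]
    congr 1
    have hcard : (Finset.univ.filter fun l : Fin m => l ≠ k0).card = m - 1 := by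
      rw [Finset.filter_ne', Finset.card_erase_of_mem (Finset.mem_univ _)]
      simp
    have herase : (∑ l ∈ Finset.univ.filter fun l => l ≠ k0, w i l) = 1 - w i k0 := by
      rw [Finset.filter_ne']
      have := Finset.add_sum_erase Finset.univ (w i) (Finset.mem_univ k0)
      rw [hwsum i] at this
      linarith
    rw [Finset.sum_sub_distrib, Finset.sum_const, hcard, herase, nsmul_eq_mul]
    have : ((m - 1 : ℕ) : ℝ) = (m : ℝ) - 1 := by
      have : 1 ≤ m := le_trans one_le_two hm
      push_cast [this]; ring
    rw [this]; ring
  rw [hfilt k, hfilt k', hBsum k, hBsum k', hnr]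
  simp only [hε, Finset.mul_sum, ← Finset.sum_add_distrib, ← Finset.sum_sub_distrib]
  refine Finset.sum_congr rfl fun i _ => ?_
  field_simp
  ring
end

section
/- Let m ≥ 2, p ≥ 1, n = mp, let σ be a treatment-symmetric design on even assignments, let v, v' ∈ ℝⁿ, and let k ≠ k' be treatments. Define Z(w) = Σ_W σ(W) B_{12}(W, w)² for w ∈ ℝⁿ, and D(W) = (1/m) Σ_{l ≠ k} B_{kl}(W, v) − (1/m) Σ_{l ≠ k'} B_{k'l}(W, v'). Suppose r, r', M ≥ 0 satisfy Z(v) ≤ r²M, Z(v') ≤ r'²M, and Z(v + v') ≤ (r + r')²M. Then Σ_W σ(W) D(W)² ≤ ((r + r')²/2)(1 − 1/m) M. (The variance of the bias term of an optimal design is bounded by the expected optimal imbalance scaled by the norms of the regression functions.) -/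
open scoped BigOperators

lemma perm_two {m : ℕ} {a b c d : Fin m} (hab : a ≠ b) (hcd : c ≠ d) :
    ∃ π : Equiv.Perm (Fin m), π a = c ∧ π b = d := by
  refine ⟨Equiv.swap a c * Equiv.swap b (Equiv.swap a c d), ?_, ?_⟩
  · have h1 : a ≠ Equiv.swap a c d := by
      intro h
      apply hcd
      have := congrArg (Equiv.swap a c) h
      rwa [Equiv.swap_apply_left, Equiv.swap_apply_self] at this
    simp [Equiv.Perm.mul_apply, Equiv.swap_apply_of_ne_of_ne hab h1]
  · simp [Equiv.Perm.mul_apply, Equiv.swap_apply_left, Equiv.swap_apply_self]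

lemma pt_sum {m : ℕ} (s t : Fin m → ℝ) (ht : ∑ a, t a = 0) :
    ∑ a : Fin m, ∑ b ∈ Finset.univ.filter (fun b => b ≠ a), (s a - t b)^2
      = ((m:ℝ) - 2) * ((∑ a, (s a)^2) + (∑ a, (t a)^2)) + ∑ a, (s a + t a)^2 := by
  have key : ∀ a : Fin m, ∑ b ∈ Finset.univ.filter (fun b => b ≠ a), (s a - t b)^2
      = ((m:ℝ) * (s a)^2 + ∑ b, (t b)^2) - (s a - t a)^2 := by
    intro a
    have hfe : (Finset.univ.filter (fun b => b ≠ a)) = (Finset.univ : Finset (Fin m)).erase a := by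
      ext b; simp [Finset.mem_erase, and_comm]
    rw [hfe, Finset.sum_erase_eq_sub (Finset.mem_univ a)]
    congr 1
    have expand : ∀ b, (s a - t b)^2 = (s a)^2 - 2 * s a * t b + (t b)^2 := fun b => by ring
    simp_rw [expand]
    rw [Finset.sum_add_distrib, Finset.sum_sub_distrib, Finset.sum_const, ← Finset.mul_sum, ht,
      Finset.card_univ, Fintype.card_fin, nsmul_eq_mul]
    ring
  simp_rw [key]
  have expand2 : ∀ a : Fin m, (s a - t a)^2 = 2*(s a)^2 + 2*(t a)^2 - (s a + t a)^2 :=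
    fun a => by ring
  rw [Finset.sum_sub_distrib, Finset.sum_add_distrib, ← Finset.mul_sum, Finset.sum_const,
    Finset.card_univ, Fintype.card_fin, nsmul_eq_mul]
  simp_rw [expand2]
  rw [Finset.sum_sub_distrib, Finset.sum_add_distrib, ← Finset.mul_sum, ← Finset.mul_sum]
  ring

noncomputable def uu (m p n : ℕ) (W : Fin n → Fin m) (a : Fin m) (x : Fin n → ℝ) : ℝ :=
  (1/(p:ℝ)) * ∑ i, ((if W i = a then (1:ℝ) else 0) - 1/(m:ℝ)) * x i

lemma uu_sum {m p n : ℕ} (hm : m ≠ 0) (W : Fin n → Fin m) (x : Fin n → ℝ) :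
    ∑ a : Fin m, uu m p n W a x = 0 := by
  unfold uu
  rw [← Finset.mul_sum, Finset.sum_comm]
  have : ∀ i : Fin n, ∑ a : Fin m, ((if W i = a then (1:ℝ) else 0) - 1/(m:ℝ)) * x i = 0 := by
    intro i
    rw [← Finset.sum_mul, Finset.sum_sub_distrib, Finset.sum_ite_eq, Finset.sum_const,
      Finset.card_univ, Fintype.card_fin, nsmul_eq_mul]
    have hm' : (m:ℝ) ≠ 0 := Nat.cast_ne_zero.mpr hm
    simp [hm']
  rw [Finset.sum_eq_zero fun i _ => this i, mul_zero]

lemma uu_perm {m p n : ℕ} (π : Equiv.Perm (Fin m)) (W : Fin n → Fin m) (a : Fin m)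
    (x : Fin n → ℝ) : uu m p n (fun i => π (W i)) (π a) x = uu m p n W a x := by
  unfold uu
  congr 1
  refine Finset.sum_congr rfl fun i _ => ?_
  simp [Equiv.apply_eq_iff_eq]

lemma uu_add {m p n : ℕ} (W : Fin n → Fin m) (a : Fin m) (x y : Fin n → ℝ) :
    uu m p n W a (x + y) = uu m p n W a x + uu m p n W a y := by
  unfold uu
  rw [← mul_add, ← Finset.sum_add_distrib]
  congr 1
  refine Finset.sum_congr rfl fun i _ => ?_
  simp only [Pi.add_apply]; ring

/-- The variance of the bias term `D_{kk'}` of a treatment-symmetric design is bounded by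
the expected optimal imbalance `M` scaled by the norms `r, r'` of the two regression
functions: if `Z(v) ≤ r²M`, `Z(v') ≤ r'²M` and `Z(v+v') ≤ (r+r')²M`, then
`E[D²] ≤ ((r+r')²/2)(1 − 1/m) M`. -/
theorem stmt15 (m p n : ℕ) (hm : 2 ≤ m) (hp : 1 ≤ p) (hn : n = m * p)
    (σ : (Fin n → Fin m) → ℝ)
    (hσ0 : ∀ W, 0 ≤ σ W)
    (hσ1 : ∑ W : Fin n → Fin m, σ W = 1)
    (hsupp : ∀ W : Fin n → Fin m, σ W ≠ 0 →
        ∀ k, (Finset.univ.filter fun i => W i = k).card = p)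
    (hsym : ∀ (π : Equiv.Perm (Fin m)) (W : Fin n → Fin m), σ (fun i => π (W i)) = σ W)
    (B : (Fin n → Fin m) → Fin m → Fin m → (Fin n → ℝ) → ℝ)
    (hB : ∀ W k l x, B W k l x = (1 / (p : ℝ)) *
        ∑ i, (((if W i = k then (1 : ℝ) else 0) - (if W i = l then 1 else 0)) * x i))
    (t₁ t₂ : Fin m) (ht₁ : (t₁ : ℕ) = 0) (ht₂ : (t₂ : ℕ) = 1)
    (Z : (Fin n → ℝ) → ℝ)
    (hZ : ∀ x, Z x = ∑ W : Fin n → Fin m, σ W * (B W t₁ t₂ x) ^ 2)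
    (v v' : Fin n → ℝ) (k k' : Fin m) (hkk' : k ≠ k')
    (D : (Fin n → Fin m) → ℝ)
    (hD : ∀ W, D W = (1 / (m : ℝ)) * (∑ l ∈ Finset.univ.filter fun l => l ≠ k, B W k l v)
        - (1 / (m : ℝ)) * (∑ l ∈ Finset.univ.filter fun l => l ≠ k', B W k' l v'))
    (r r' M : ℝ) (hr : 0 ≤ r) (hr' : 0 ≤ r') (hM : 0 ≤ M)
    (hZv : Z v ≤ r ^ 2 * M) (hZv' : Z v' ≤ r' ^ 2 * M)
    (hZvv' : Z (v + v') ≤ (r + r') ^ 2 * M) :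
    ∑ W : Fin n → Fin m, σ W * (D W) ^ 2
      ≤ ((r + r') ^ 2 / 2) * (1 - 1 / (m : ℝ)) * M := by
  classical
  have hmR : (2:ℝ) ≤ (m:ℝ) := by exact_mod_cast hm
  have hmpos : (0:ℝ) < (m:ℝ) := by linarith
  have hmne : m ≠ 0 := by omega
  have ht12 : t₁ ≠ t₂ := by
    intro h; rw [h] at ht₁; omega
  -- B in terms of uu
  have hBu : ∀ (W : Fin n → Fin m) (a b : Fin m) (x : Fin n → ℝ),
      B W a b x = uu m p n W a x - uu m p n W b x := by
    intro W a b x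
    rw [hB]
    unfold uu
    rw [← mul_sub, ← Finset.sum_sub_distrib]
    congr 1
    refine Finset.sum_congr rfl fun i _ => ?_
    ring
  -- symmetry of the design
  have hsum_perm : ∀ (π : Equiv.Perm (Fin m)) (G : (Fin n → Fin m) → ℝ),
      ∑ W : Fin n → Fin m, σ W * G (fun i => π (W i)) = ∑ W : Fin n → Fin m, σ W * G W := by
    intro π G
    have h := Equiv.sum_comp (Equiv.arrowCongr (Equiv.refl (Fin n)) π)
      (fun W : Fin n → Fin m => σ W * G W)
    rw [← h]
    refine Finset.sum_congr rfl fun W _ => ?_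
    rw [show (Equiv.arrowCongr (Equiv.refl (Fin n)) π) W = fun i => π (W i) from rfl, hsym π W]
  -- symB
  have symB : ∀ (x : Fin n → ℝ) (a b : Fin m), a ≠ b →
      ∑ W : Fin n → Fin m, σ W * (B W a b x)^2 = Z x := by
    intro x a b hab
    obtain ⟨π, hπ1, hπ2⟩ := perm_two ht12 hab
    have e1 : ∑ W : Fin n → Fin m, σ W * (B (fun i => π (W i)) a b x)^2
        = ∑ W : Fin n → Fin m, σ W * (B W a b x)^2 :=
      hsum_perm π (fun W => (B W a b x)^2)
    rw [hZ, ← e1]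
    refine Finset.sum_congr rfl fun W _ => ?_
    rw [← hπ1, ← hπ2, hBu, hBu, uu_perm, uu_perm]
  -- D in terms of uu
  have h3 : ∀ (W : Fin n → Fin m) (a : Fin m) (x : Fin n → ℝ),
      ∑ l ∈ Finset.univ.filter (fun l => l ≠ a), B W a l x = (m:ℝ) * uu m p n W a x := by
    intro W a x
    have hfe : (Finset.univ.filter (fun l => l ≠ a)) = (Finset.univ : Finset (Fin m)).erase a := by
      ext b; simp [Finset.mem_erase, and_comm]
    rw [hfe, Finset.sum_erase_eq_sub (Finset.mem_univ a)]
    simp_rw [hBu]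
    rw [Finset.sum_sub_distrib, Finset.sum_const, Finset.card_univ, Fintype.card_fin,
      nsmul_eq_mul, uu_sum hmne]
    ring
  have hD' : ∀ W, D W = uu m p n W k v - uu m p n W k' v' := by
    intro W
    have hc : ∀ y : ℝ, (1/(m:ℝ)) * ((m:ℝ) * y) = y := fun y => by
      field_simp
    rw [hD, h3, h3, hc, hc]
  -- symD
  have symD : ∀ (a b : Fin m), a ≠ b →
      ∑ W : Fin n → Fin m, σ W * (uu m p n W a v - uu m p n W b v')^2
        = ∑ W : Fin n → Fin m, σ W * (D W)^2 := by
    intro a b hab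
    obtain ⟨π, hπ1, hπ2⟩ := perm_two hkk' hab
    have e1 : ∑ W : Fin n → Fin m,
          σ W * (uu m p n (fun i => π (W i)) a v - uu m p n (fun i => π (W i)) b v')^2
        = ∑ W : Fin n → Fin m, σ W * (uu m p n W a v - uu m p n W b v')^2 :=
      hsum_perm π (fun W => (uu m p n W a v - uu m p n W b v')^2)
    rw [← e1]
    refine Finset.sum_congr rfl fun W _ => ?_
    rw [← hπ1, ← hπ2, uu_perm, uu_perm, hD' W]
  -- Phi in terms of Z
  have PhiZ : ∀ x : Fin n → ℝ,
      ∑ W : Fin n → Fin m, σ W * (∑ a : Fin m, (uu m p n W a x)^2)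
        = (((m:ℝ)-1)/2) * Z x := by
    intro x
    have pointwise : ∀ W : Fin n → Fin m,
        ∑ a : Fin m, ∑ b ∈ Finset.univ.filter (fun b => b ≠ a), (B W a b x)^2
          = 2 * (m:ℝ) * ∑ a : Fin m, (uu m p n W a x)^2 := by
      intro W
      have h : ∑ a : Fin m, ∑ b ∈ Finset.univ.filter (fun b => b ≠ a),
          (uu m p n W a x - uu m p n W b x)^2
          = ((m:ℝ) - 2) * ((∑ a : Fin m, (uu m p n W a x)^2)
              + (∑ a : Fin m, (uu m p n W a x)^2))
            + ∑ a : Fin m, (uu m p n W a x + uu m p n W a x)^2 :=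
        pt_sum _ _ (uu_sum hmne W x)
      simp_rw [hBu]
      rw [h]
      have h4 : ∑ a : Fin m, (uu m p n W a x + uu m p n W a x)^2
          = 4 * ∑ a : Fin m, (uu m p n W a x)^2 := by
        rw [Finset.mul_sum]
        exact Finset.sum_congr rfl fun a _ => by ring
      rw [h4]; ring
    have hcast : ((m - 1 : ℕ) : ℝ) = (m:ℝ) - 1 := by
      have h1 : 1 ≤ m := by omega
      push_cast [Nat.cast_sub h1]
      ring
    have count : ∑ a : Fin m, ∑ b ∈ Finset.univ.filter (fun b => b ≠ a),
        (∑ W : Fin n → Fin m, σ W * (B W a b x)^2) = (m:ℝ) * ((m:ℝ)-1) * Z x := by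
      have inner : ∀ a : Fin m, ∑ b ∈ Finset.univ.filter (fun b => b ≠ a),
          (∑ W : Fin n → Fin m, σ W * (B W a b x)^2) = ((m:ℝ)-1) * Z x := by
        intro a
        have hterm : ∀ b ∈ Finset.univ.filter (fun b => b ≠ a),
            (∑ W : Fin n → Fin m, σ W * (B W a b x)^2) = Z x := fun b hb =>
          symB x a b (Ne.symm (Finset.mem_filter.mp hb).2)
        rw [Finset.sum_congr rfl hterm, Finset.sum_const]
        have hcard : (Finset.univ.filter (fun b => b ≠ a)).card = m - 1 := by
          rw [show (Finset.univ.filter (fun b => b ≠ a))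
                = (Finset.univ : Finset (Fin m)).erase a from by ext b; simp [and_comm],
            Finset.card_erase_of_mem (Finset.mem_univ a), Finset.card_univ, Fintype.card_fin]
        rw [hcard, nsmul_eq_mul, hcast]
      simp_rw [inner]
      rw [Finset.sum_const, Finset.card_univ, Fintype.card_fin, nsmul_eq_mul]; ring
    have swap : ∑ a : Fin m, ∑ b ∈ Finset.univ.filter (fun b => b ≠ a),
        (∑ W : Fin n → Fin m, σ W * (B W a b x)^2)
        = ∑ W : Fin n → Fin m,
            σ W * (∑ a : Fin m, ∑ b ∈ Finset.univ.filter (fun b => b ≠ a), (B W a b x)^2) := by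
      have s1 : ∀ a : Fin m, ∑ b ∈ Finset.univ.filter (fun b => b ≠ a),
          ∑ W : Fin n → Fin m, σ W * (B W a b x)^2
          = ∑ W : Fin n → Fin m, ∑ b ∈ Finset.univ.filter (fun b => b ≠ a),
              σ W * (B W a b x)^2 := fun a => Finset.sum_comm
      simp_rw [s1]
      rw [Finset.sum_comm]
      refine Finset.sum_congr rfl fun W _ => ?_
      rw [Finset.mul_sum]
      exact Finset.sum_congr rfl fun a _ => (Finset.mul_sum _ _ _).symm
    have comb : (m:ℝ) * ((m:ℝ)-1) * Z x
        = 2*(m:ℝ) * ∑ W : Fin n → Fin m, σ W * (∑ a : Fin m, (uu m p n W a x)^2) := by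
      rw [← count, swap]
      simp_rw [pointwise]
      rw [Finset.mul_sum]
      exact Finset.sum_congr rfl fun W _ => by ring
    have h2m : (2*(m:ℝ)) ≠ 0 := ne_of_gt (by linarith)
    apply mul_left_cancel₀ h2m
    linear_combination -comb
  -- the main double-counting identity
  have countD : ∑ a : Fin m, ∑ b ∈ Finset.univ.filter (fun b => b ≠ a),
      (∑ W : Fin n → Fin m, σ W * (uu m p n W a v - uu m p n W b v')^2)
      = (m:ℝ) * ((m:ℝ)-1) * ∑ W : Fin n → Fin m, σ W * (D W)^2 := by
    have hcast : ((m - 1 : ℕ) : ℝ) = (m:ℝ) - 1 := by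
      have h1 : 1 ≤ m := by omega
      push_cast [Nat.cast_sub h1]
      ring
    have inner : ∀ a : Fin m, ∑ b ∈ Finset.univ.filter (fun b => b ≠ a),
        (∑ W : Fin n → Fin m, σ W * (uu m p n W a v - uu m p n W b v')^2)
        = ((m:ℝ)-1) * ∑ W : Fin n → Fin m, σ W * (D W)^2 := by
      intro a
      have hterm : ∀ b ∈ Finset.univ.filter (fun b => b ≠ a),
          (∑ W : Fin n → Fin m, σ W * (uu m p n W a v - uu m p n W b v')^2)
          = ∑ W : Fin n → Fin m, σ W * (D W)^2 := fun b hb =>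
        symD a b (Ne.symm (Finset.mem_filter.mp hb).2)
      rw [Finset.sum_congr rfl hterm, Finset.sum_const]
      have hcard : (Finset.univ.filter (fun b => b ≠ a)).card = m - 1 := by
        rw [show (Finset.univ.filter (fun b => b ≠ a))
              = (Finset.univ : Finset (Fin m)).erase a from by ext b; simp [and_comm],
          Finset.card_erase_of_mem (Finset.mem_univ a), Finset.card_univ, Fintype.card_fin]
      rw [hcard, nsmul_eq_mul, hcast]
    simp_rw [inner]
    rw [Finset.sum_const, Finset.card_univ, Fintype.card_fin, nsmul_eq_mul]; ring
  have swapD : ∑ a : Fin m, ∑ b ∈ Finset.univ.filter (fun b => b ≠ a),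
      (∑ W : Fin n → Fin m, σ W * (uu m p n W a v - uu m p n W b v')^2)
      = ∑ W : Fin n → Fin m,
          σ W * (∑ a : Fin m, ∑ b ∈ Finset.univ.filter (fun b => b ≠ a),
            (uu m p n W a v - uu m p n W b v')^2) := by
    have s1 : ∀ a : Fin m, ∑ b ∈ Finset.univ.filter (fun b => b ≠ a),
        ∑ W : Fin n → Fin m, σ W * (uu m p n W a v - uu m p n W b v')^2
        = ∑ W : Fin n → Fin m, ∑ b ∈ Finset.univ.filter (fun b => b ≠ a),
            σ W * (uu m p n W a v - uu m p n W b v')^2 := fun a => Finset.sum_comm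
    simp_rw [s1]
    rw [Finset.sum_comm]
    refine Finset.sum_congr rfl fun W _ => ?_
    rw [Finset.mul_sum]
    exact Finset.sum_congr rfl fun a _ => (Finset.mul_sum _ _ _).symm
  have pointD : ∀ W : Fin n → Fin m,
      ∑ a : Fin m, ∑ b ∈ Finset.univ.filter (fun b => b ≠ a),
          (uu m p n W a v - uu m p n W b v')^2
        = ((m:ℝ)-2) * ((∑ a : Fin m, (uu m p n W a v)^2) + (∑ a : Fin m, (uu m p n W a v')^2))
          + ∑ a : Fin m, (uu m p n W a (v+v'))^2 := by
    intro W
    have h : ∑ a : Fin m, ∑ b ∈ Finset.univ.filter (fun b => b ≠ a),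
        (uu m p n W a v - uu m p n W b v')^2
        = ((m:ℝ) - 2) * ((∑ a : Fin m, (uu m p n W a v)^2)
            + (∑ a : Fin m, (uu m p n W a v')^2))
          + ∑ a : Fin m, (uu m p n W a v + uu m p n W a v')^2 :=
      pt_sum _ _ (uu_sum hmne W v')
    rw [h]
    congr 1
    exact Finset.sum_congr rfl fun a _ => by rw [uu_add]
  have big : (m:ℝ) * ((m:ℝ)-1) * (∑ W : Fin n → Fin m, σ W * (D W)^2)
      = ((m:ℝ)-2) * ((((m:ℝ)-1)/2) * Z v + (((m:ℝ)-1)/2) * Z v')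
        + (((m:ℝ)-1)/2) * Z (v+v') := by
    rw [← countD, swapD]
    simp_rw [pointD]
    rw [← PhiZ v, ← PhiZ v', ← PhiZ (v+v')]
    have expand : ∀ W : Fin n → Fin m,
        σ W * (((m:ℝ)-2) * ((∑ a : Fin m, (uu m p n W a v)^2)
            + (∑ a : Fin m, (uu m p n W a v')^2)) + ∑ a : Fin m, (uu m p n W a (v+v'))^2)
        = ((m:ℝ)-2) * (σ W * ∑ a : Fin m, (uu m p n W a v)^2)
          + (((m:ℝ)-2) * (σ W * ∑ a : Fin m, (uu m p n W a v')^2)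
            + σ W * ∑ a : Fin m, (uu m p n W a (v+v'))^2) := fun W => by ring
    simp_rw [expand]
    rw [Finset.sum_add_distrib, Finset.sum_add_distrib, ← Finset.mul_sum, ← Finset.mul_sum]
    ring
  have hm1 : ((m:ℝ) - 1) ≠ 0 := by linarith
  have hE : ∑ W : Fin n → Fin m, σ W * (D W)^2
      = (((m:ℝ)-2) * (Z v + Z v') + Z (v+v')) / (2*(m:ℝ)) := by
    rw [eq_div_iff (ne_of_gt (by linarith : (0:ℝ) < 2*(m:ℝ)))]
    apply mul_left_cancel₀ hm1
    linear_combination 2 * big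
  rw [hE, div_le_iff₀ (by linarith : (0:ℝ) < 2*(m:ℝ))]
  have hrhs : ((r + r') ^ 2 / 2) * (1 - 1 / (m:ℝ)) * M * (2 * (m:ℝ))
      = ((m:ℝ)-1) * ((r+r')^2 * M) := by
    field_simp
  rw [hrhs]
  have hm2 : (0:ℝ) ≤ (m:ℝ) - 2 := by linarith
  nlinarith [mul_le_mul_of_nonneg_left hZv hm2, mul_le_mul_of_nonneg_left hZv' hm2, hZvv',
    mul_nonneg (mul_nonneg hm2 hM) (mul_nonneg hr hr')]
end

section
/- Let m ≥ 2, p ≥ 1, n = mp, let σ be a treatment-symmetric design on even assignments, and let v, w ∈ ℝⁿ. For treatments k ≠ l and k' ≠ l' define C = Σ_W σ(W) B_{kl}(W, v) B_{k'l'}(W, w) and Z = Σ_W σ(W) B_{12}(W, v) B_{12}(W, w). Then: Σ_W σ(W) B_{kl}(W, v) = 0; C = Z if (k,l) = (k',l'); C = −Z if (k,l) = (l',k'); C = Z/2 if k = k' and l ≠ l', or if l = l' and k ≠ k'; C = −Z/2 if k = l' and l ≠ k', or if l = k' and k ≠ l'; and C = 0 if the four indices k, l, k', l' are all distinct. -/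
open scoped BigOperators

/-- Covariance structure of imbalances under a treatment-symmetric design: with
`C = ∑_W σ(W) B_{kl}(W,v) B_{k'l'}(W,w)` and `Z = ∑_W σ(W) B_{12}(W,v) B_{12}(W,w)`,
one has `E[B_{kl}(v)] = 0`, and `C` equals `Z`, `−Z`, `Z/2`, `−Z/2`, or `0` according
to the pattern of coincidences among the treatment indices. -/
theorem stmt16 (m p n : ℕ) (hm : 2 ≤ m) (hp : 1 ≤ p) (hn : n = m * p)
    (σ : (Fin n → Fin m) → ℝ)
    (hσ0 : ∀ W, 0 ≤ σ W)
    (hσ1 : ∑ W : Fin n → Fin m, σ W = 1)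
    (hsupp : ∀ W : Fin n → Fin m, σ W ≠ 0 →
        ∀ k, (Finset.univ.filter fun i => W i = k).card = p)
    (hsym : ∀ (π : Equiv.Perm (Fin m)) (W : Fin n → Fin m), σ (fun i => π (W i)) = σ W)
    (B : (Fin n → Fin m) → Fin m → Fin m → (Fin n → ℝ) → ℝ)
    (hB : ∀ W k l x, B W k l x = (1 / (p : ℝ)) *
        ∑ i, (((if W i = k then (1 : ℝ) else 0) - (if W i = l then 1 else 0)) * x i))
    (t₁ t₂ : Fin m) (ht₁ : (t₁ : ℕ) = 0) (ht₂ : (t₂ : ℕ) = 1)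
    (v w : Fin n → ℝ)
    (k l k' l' : Fin m) (hkl : k ≠ l) (hk'l' : k' ≠ l')
    (C Z : ℝ)
    (hC : C = ∑ W : Fin n → Fin m, σ W * B W k l v * B W k' l' w)
    (hZ : Z = ∑ W : Fin n → Fin m, σ W * B W t₁ t₂ v * B W t₁ t₂ w) :
    (∑ W : Fin n → Fin m, σ W * B W k l v = 0) ∧
    (k = k' ∧ l = l' → C = Z) ∧
    (k = l' ∧ l = k' → C = -Z) ∧
    (k = k' ∧ l ≠ l' → C = Z / 2) ∧
    (l = l' ∧ k ≠ k' → C = Z / 2) ∧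
    (k = l' ∧ l ≠ k' → C = -Z / 2) ∧
    (l = k' ∧ k ≠ l' → C = -Z / 2) ∧
    (k ≠ k' ∧ k ≠ l' ∧ l ≠ k' ∧ l ≠ l' → C = 0) := by
  -- A convenient "difference of two means" form of B
  have hB' : ∀ (W : Fin n → Fin m) (a b : Fin m) (x : Fin n → ℝ),
      B W a b x = (1/(p:ℝ)) * (∑ i, if W i = a then x i else 0)
                - (1/(p:ℝ)) * (∑ i, if W i = b then x i else 0) := by
    intro W a b x
    rw [hB, ← mul_sub, ← Finset.sum_sub_distrib]
    refine congrArg _ (Finset.sum_congr rfl fun i _ => ?_)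
    split_ifs <;> ring
  -- B is invariant under relabelling by a permutation
  have hBperm : ∀ (π : Equiv.Perm (Fin m)) (W : Fin n → Fin m) (a b : Fin m)
      (x : Fin n → ℝ), B (fun i => π (W i)) (π a) (π b) x = B W a b x := by
    intro π W a b x
    rw [hB, hB]
    simp only [Equiv.apply_eq_iff_eq]
  -- invariance of the covariance sum under simultaneous relabelling
  have hG : ∀ (π : Equiv.Perm (Fin m)) (a b c d : Fin m),
      (∑ W : Fin n → Fin m, σ W * B W a b v * B W c d w)
        = ∑ W : Fin n → Fin m, σ W * B W (π a) (π b) v * B W (π c) (π d) w := by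
    intro π a b c d
    rw [← Equiv.sum_comp (Equiv.piCongrRight fun _ : Fin n => π)
        (fun W => σ W * B W (π a) (π b) v * B W (π c) (π d) w)]
    refine Finset.sum_congr rfl fun W _ => ?_
    show _ = σ (fun i => π (W i)) * B (fun i => π (W i)) (π a) (π b) v
        * B (fun i => π (W i)) (π c) (π d) w
    rw [hsym, hBperm, hBperm]
  -- invariance of the mean sum
  have hG1 : ∀ (π : Equiv.Perm (Fin m)) (a b : Fin m),
      (∑ W : Fin n → Fin m, σ W * B W a b v)
        = ∑ W : Fin n → Fin m, σ W * B W (π a) (π b) v := by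
    intro π a b
    rw [← Equiv.sum_comp (Equiv.piCongrRight fun _ : Fin n => π)
        (fun W => σ W * B W (π a) (π b) v)]
    refine Finset.sum_congr rfl fun W _ => ?_
    show _ = σ (fun i => π (W i)) * B (fun i => π (W i)) (π a) (π b) v
    rw [hsym, hBperm]
  -- any ordered pair of distinct treatments can be moved to any other
  have hpair : ∀ a b c d : Fin m, a ≠ b → c ≠ d →
      ∃ π : Equiv.Perm (Fin m), π a = c ∧ π b = d := by
    intro a b c d hab hcd
    have h1 : Equiv.swap a c b ≠ c := fun h =>
      hab ((Equiv.swap a c).injective (by rw [h, Equiv.swap_apply_left]))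
    refine ⟨Equiv.swap (Equiv.swap a c b) d * Equiv.swap a c, ?_, ?_⟩
    · simp only [Equiv.Perm.mul_apply, Equiv.swap_apply_left]
      exact Equiv.swap_apply_of_ne_of_ne (Ne.symm h1) hcd
    · simp only [Equiv.Perm.mul_apply, Equiv.swap_apply_left]
  have ht : t₁ ≠ t₂ := fun h => by rw [h, ht₂] at ht₁; exact one_ne_zero ht₁
  -- the diagonal value
  have hZeq : ∀ a b : Fin m, a ≠ b →
      (∑ W : Fin n → Fin m, σ W * B W a b v * B W a b w) = Z := by
    intro a b hab
    obtain ⟨π, hπa, hπb⟩ := hpair a b t₁ t₂ hab ht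
    rw [hG π a b a b, hπa, hπb, hZ]
  -- the key off-diagonal value
  have hhalf : ∀ a b c : Fin m, a ≠ b → b ≠ c → a ≠ c →
      (∑ W : Fin n → Fin m, σ W * B W a b v * B W b c w) = -Z / 2 := by
    intro a b c hab hbc hac
    have hπ := hG (Equiv.swap a b) a b b c
    rw [Equiv.swap_apply_left, Equiv.swap_apply_right,
      Equiv.swap_apply_of_ne_of_ne (Ne.symm hac) (Ne.symm hbc)] at hπ
    have hx : ∀ W : Fin n → Fin m, σ W * B W b a v * B W a c w
        = -(σ W * B W a b v * B W a b w) + -(σ W * B W a b v * B W b c w) := by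
      intro W
      rw [hB' W b a v, hB' W a b v, hB' W a b w, hB' W a c w, hB' W b c w]; ring
    rw [Finset.sum_congr rfl fun W _ => hx W, Finset.sum_add_distrib] at hπ
    simp only [Finset.sum_neg_distrib] at hπ
    rw [hZeq a b hab] at hπ
    linarith
  refine ⟨?_, ?_, ?_, ?_, ?_, ?_, ?_, ?_⟩
  · -- mean zero
    have hπ := hG1 (Equiv.swap k l) k l
    rw [Equiv.swap_apply_left, Equiv.swap_apply_right] at hπ
    have hx : ∀ W : Fin n → Fin m, σ W * B W l k v = -(σ W * B W k l v) := by
      intro W; rw [hB' W l k v, hB' W k l v]; ring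
    rw [Finset.sum_congr rfl fun W _ => hx W] at hπ
    simp only [Finset.sum_neg_distrib] at hπ
    linarith
  · rintro ⟨h1, h2⟩
    rw [hC, ← h1, ← h2]
    exact hZeq k l hkl
  · rintro ⟨h1, h2⟩
    rw [hC, ← h1, ← h2]
    have hx : ∀ W : Fin n → Fin m, σ W * B W k l v * B W l k w
        = -(σ W * B W k l v * B W k l w) := by
      intro W; rw [hB' W k l v, hB' W l k w, hB' W k l w]; ring
    rw [Finset.sum_congr rfl fun W _ => hx W]
    simp only [Finset.sum_neg_distrib]
    rw [hZeq k l hkl]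
  · rintro ⟨h1, h2⟩
    have hkl' : k ≠ l' := by rw [h1]; exact hk'l'
    rw [hC, ← h1]
    have hx : ∀ W : Fin n → Fin m, σ W * B W k l v * B W k l' w
        = σ W * B W k l v * B W k l w + σ W * B W k l v * B W l l' w := by
      intro W; rw [hB' W k l v, hB' W k l' w, hB' W k l w, hB' W l l' w]; ring
    rw [Finset.sum_congr rfl fun W _ => hx W, Finset.sum_add_distrib,
      hZeq k l hkl, hhalf k l l' hkl h2 hkl']
    ring
  · rintro ⟨h1, h2⟩
    have hlk' : l ≠ k' := fun h => hk'l' (h.symm.trans h1)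
    rw [hC, ← h1]
    have hx : ∀ W : Fin n → Fin m, σ W * B W k l v * B W k' l w
        = σ W * B W l k v * B W l k w + σ W * B W l k v * B W k k' w := by
      intro W
      rw [hB' W k l v, hB' W k' l w, hB' W l k v, hB' W l k w, hB' W k k' w]; ring
    rw [Finset.sum_congr rfl fun W _ => hx W, Finset.sum_add_distrib,
      hZeq l k (Ne.symm hkl), hhalf l k k' (Ne.symm hkl) h2 hlk']
    ring
  · rintro ⟨h1, h2⟩
    have hkk' : k ≠ k' := fun h => hk'l' (h.symm.trans h1)
    rw [hC, ← h1]
    have hx : ∀ W : Fin n → Fin m, σ W * B W k l v * B W k' k w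
        = -(σ W * B W k l v * B W k l w) + -(σ W * B W k l v * B W l k' w) := by
      intro W
      rw [hB' W k l v, hB' W k' k w, hB' W k l w, hB' W l k' w]; ring
    rw [Finset.sum_congr rfl fun W _ => hx W, Finset.sum_add_distrib]
    simp only [Finset.sum_neg_distrib]
    rw [hZeq k l hkl, hhalf k l k' hkl h2 hkk']
    ring
  · rintro ⟨h1, h2⟩
    have hll' : l ≠ l' := fun h => hk'l' (h1.symm.trans h)
    rw [hC, ← h1]
    rw [hhalf k l l' hkl hll' h2]
  · rintro ⟨h1, h2, h3, h4⟩
    have hπ := hG (Equiv.swap k' l') k l k' l'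
    rw [Equiv.swap_apply_left, Equiv.swap_apply_right,
      Equiv.swap_apply_of_ne_of_ne h1 h2, Equiv.swap_apply_of_ne_of_ne h3 h4] at hπ
    have hx : ∀ W : Fin n → Fin m, σ W * B W k l v * B W l' k' w
        = -(σ W * B W k l v * B W k' l' w) := by
      intro W; rw [hB' W k l v, hB' W l' k' w, hB' W k' l' w]; ring
    rw [Finset.sum_congr rfl fun W _ => hx W] at hπ
    simp only [Finset.sum_neg_distrib] at hπ
    rw [hC]
    linarith
end
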